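/- arXiv:1907.01270 — 5 statements merged into one kernel-verified Lean document; each statement's English description precedes it below -/
import Mathlib

section
/- (Generalised initial sequents) For every formula A built from atoms, ⊥, →, □, ■, every possibly empty context G, and all multisets Γ, Δ: the linear nested sequent G ⇗ Γ,A ⇒ A,Δ is derivable in LNS_Kt. -/
/-- Formulae of tense logic: atoms (indexed by naturals), ⊥, →, □, ◇, ■, ◆. -/
inductive Formula : Type
  | atom : ℕ → Formula
  | bot : Formula
  | imp : Formula → Formula → Formula
  | box : Formula → Formula
  | dia : Formula → Formula
  | bbox : Formula → Formula
  | bdia : Formula → Formula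

def Formula.neg (A : Formula) : Formula := A.imp .bot
def Formula.and (A B : Formula) : Formula := (A.imp B.neg).neg
def Formula.or (A B : Formula) : Formula := A.neg.imp B
def Formula.top : Formula := Formula.bot.imp .bot

/-- Formulas built from atoms, ⊥, →, □, ■ only (no diamonds). -/
def Formula.NoDia : Formula → Prop
  | .atom _ => True
  | .bot => True
  | .imp A B => A.NoDia ∧ B.NoDia
  | .box A => A.NoDia
  | .dia _ => False
  | .bbox A => A.NoDia
  | .bdia _ => False

/-- Structural connectives: `up` is ↗ and `dn` is ↙. -/
inductive Dir : Type
  | up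
  | dn

/-- Linear nested sequents: a nonempty list of components `Γ ⇒ Δ`
joined by the structural connectives ↗ (`up`) and ↙ (`dn`). -/
inductive LNS : Type
  | single (Γ Δ : Multiset Formula) : LNS
  | up (Γ Δ : Multiset Formula) (S : LNS) : LNS
  | dn (Γ Δ : Multiset Formula) (S : LNS) : LNS

/-- A (possibly empty) context: a list of components, each together with the
structural connective joining it to what follows. -/
abbrev Ctx := List (Multiset Formula × Multiset Formula × Dir)

/-- `plug G S` is the linear nested sequent `G ⇗ S` (just `S` when `G` is empty). -/
def plug : Ctx → LNS → LNS
  | [], S => S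
  | (Γ, Δ, Dir.up) :: G, S => LNS.up Γ Δ (plug G S)
  | (Γ, Δ, Dir.dn) :: G, S => LNS.dn Γ Δ (plug G S)

/-- The structural connective joining the context to what follows it (none if empty). -/
def lastDir : Ctx → Option Dir
  | [] => none
  | [(_, _, d)] => some d
  | _ :: G => lastDir G

/-- The calculus LNS_Kt. -/
inductive Deriv : LNS → Prop
  | id (G : Ctx) (Γ Δ : Multiset Formula) (p : ℕ) :
      Deriv (plug G (.single (.atom p ::ₘ Γ) (.atom p ::ₘ Δ)))
  | botL (G : Ctx) (Γ Δ : Multiset Formula) :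
      Deriv (plug G (.single (.bot ::ₘ Γ) Δ))
  | ew (G : Ctx) (Θ Λ : Multiset Formula) (d : Dir) (Γ Δ : Multiset Formula) :
      Deriv (plug G (.single Θ Λ)) →
      Deriv (plug (G ++ [(Θ, Λ, d)]) (.single Γ Δ))
  | impR (G : Ctx) (Γ Δ : Multiset Formula) (A B : Formula) :
      Deriv (plug G (.single (A ::ₘ Γ) (B ::ₘ A.imp B ::ₘ Δ))) →
      Deriv (plug G (.single Γ (A.imp B ::ₘ Δ)))
  | impL (G : Ctx) (Γ Δ : Multiset Formula) (A B : Formula) :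
      Deriv (plug G (.single (B ::ₘ A.imp B ::ₘ Γ) Δ)) →
      Deriv (plug G (.single (A.imp B ::ₘ Γ) (A ::ₘ Δ))) →
      Deriv (plug G (.single (A.imp B ::ₘ Γ) Δ))
  | boxR1 (G : Ctx) (Γ Δ Θ Λ : Multiset Formula) (A : Formula) :
      Deriv (plug G (.dn Γ (A ::ₘ Δ) (.single Θ (A.box ::ₘ Λ)))) →
      Deriv (plug G (.dn Γ Δ (.up Θ (A.box ::ₘ Λ) (.single 0 {A})))) →
      Deriv (plug G (.dn Γ Δ (.single Θ (A.box ::ₘ Λ))))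
  | bboxR1 (G : Ctx) (Γ Δ Θ Λ : Multiset Formula) (A : Formula) :
      Deriv (plug G (.up Γ (A ::ₘ Δ) (.single Θ (A.bbox ::ₘ Λ)))) →
      Deriv (plug G (.up Γ Δ (.dn Θ (A.bbox ::ₘ Λ) (.single 0 {A})))) →
      Deriv (plug G (.up Γ Δ (.single Θ (A.bbox ::ₘ Λ))))
  | boxR2 (G : Ctx) (Γ Δ : Multiset Formula) (A : Formula) :
      lastDir G ≠ some Dir.dn →
      Deriv (plug G (.up Γ (A.box ::ₘ Δ) (.single 0 {A}))) →
      Deriv (plug G (.single Γ (A.box ::ₘ Δ)))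
  | bboxR2 (G : Ctx) (Γ Δ : Multiset Formula) (A : Formula) :
      lastDir G ≠ some Dir.up →
      Deriv (plug G (.dn Γ (A.bbox ::ₘ Δ) (.single 0 {A}))) →
      Deriv (plug G (.single Γ (A.bbox ::ₘ Δ)))
  | boxL1 (G : Ctx) (Γ Δ Θ Λ : Multiset Formula) (A : Formula) :
      Deriv (plug G (.up (A.box ::ₘ Γ) Δ (.single (A ::ₘ Θ) Λ))) →
      Deriv (plug G (.up (A.box ::ₘ Γ) Δ (.single Θ Λ)))
  | bboxL1 (G : Ctx) (Γ Δ Θ Λ : Multiset Formula) (A : Formula) :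
      Deriv (plug G (.dn (A.bbox ::ₘ Γ) Δ (.single (A ::ₘ Θ) Λ))) →
      Deriv (plug G (.dn (A.bbox ::ₘ Γ) Δ (.single Θ Λ)))
  | boxL2 (G : Ctx) (Γ Δ Θ Λ : Multiset Formula) (A : Formula) :
      Deriv (plug G (.single (A ::ₘ Γ) Δ)) →
      Deriv (plug G (.dn Γ Δ (.single (A.box ::ₘ Θ) Λ)))
  | bboxL2 (G : Ctx) (Γ Δ Θ Λ : Multiset Formula) (A : Formula) :
      Deriv (plug G (.single (A ::ₘ Γ) Δ)) →
      Deriv (plug G (.up Γ Δ (.single (A.bbox ::ₘ Θ) Λ)))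


lemma plug_append_up (G : Ctx) (Θ Λ : Multiset Formula) (S : LNS) :
    plug (G ++ [(Θ, Λ, Dir.up)]) S = plug G (.up Θ Λ S) := by
  induction G with
  | nil => rfl
  | cons h t ih => obtain ⟨Γ, Δ, d⟩ := h; cases d <;> simp [plug, ih]

lemma plug_append_dn (G : Ctx) (Θ Λ : Multiset Formula) (S : LNS) :
    plug (G ++ [(Θ, Λ, Dir.dn)]) S = plug G (.dn Θ Λ S) := by
  induction G with
  | nil => rfl
  | cons h t ih => obtain ⟨Γ, Δ, d⟩ := h; cases d <;> simp [plug, ih]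

lemma lastDir_eq {G : Ctx} {d : Dir} (h : lastDir G = some d) :
    ∃ G' Sg Pi0, G = G' ++ [(Sg, Pi0, d)] := by
  induction G with
  | nil => simp [lastDir] at h
  | cons hd t ih =>
    cases t with
    | nil =>
      obtain ⟨Sg, Pi0, d'⟩ := hd
      simp [lastDir] at h
      exact ⟨[], Sg, Pi0, by simp [h]⟩
    | cons h2 t2 =>
      obtain ⟨G', Sg, Pi0, hG⟩ := ih h
      exact ⟨hd :: G', Sg, Pi0, by rw [hG]; rfl⟩

/-- Generalised initial sequents: `G ⇗ Γ,A ⇒ A,Δ` is derivable in LNS_Kt for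
every formula A built from atoms, ⊥, →, □, ■. -/
theorem generalised_init (A : Formula) (hA : A.NoDia) (G : Ctx)
    (Γ Δ : Multiset Formula) :
    Deriv (plug G (.single (A ::ₘ Γ) (A ::ₘ Δ))) := by
  induction A generalizing G Γ Δ with
  | atom p => exact Deriv.id G Γ Δ p
  | bot => exact Deriv.botL G Γ _
  | imp A B ihA ihB =>
    obtain ⟨hA1, hA2⟩ := hA
    apply Deriv.impR G (A.imp B ::ₘ Γ) Δ A B
    rw [Multiset.cons_swap A (A.imp B) Γ]
    apply Deriv.impL G (A ::ₘ Γ) (B ::ₘ A.imp B ::ₘ Δ) A B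
    · exact ihB hA2 G (A.imp B ::ₘ A ::ₘ Γ) (A.imp B ::ₘ Δ)
    · rw [Multiset.cons_swap (A.imp B) A Γ]
      exact ihA hA1 G (A.imp B ::ₘ Γ) (B ::ₘ A.imp B ::ₘ Δ)
  | box A ihA =>
    by_cases h : lastDir G = some Dir.dn
    · obtain ⟨G', Sg, Pi0, rfl⟩ := lastDir_eq h
      rw [plug_append_dn]
      apply Deriv.boxR1 G' Sg Pi0 (A.box ::ₘ Γ) Δ A
      · exact Deriv.boxL2 G' Sg (A ::ₘ Pi0) Γ (A.box ::ₘ Δ) A (ihA hA G' Sg Pi0)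
      · rw [← plug_append_dn]
        apply Deriv.boxL1 (G' ++ [(Sg, Pi0, Dir.dn)]) Γ (A.box ::ₘ Δ) 0 {A} A
        rw [← plug_append_up]
        simpa using ihA hA ((G' ++ [(Sg, Pi0, Dir.dn)]) ++ [(A.box ::ₘ Γ, A.box ::ₘ Δ, Dir.up)]) 0 0
    · apply Deriv.boxR2 G (A.box ::ₘ Γ) Δ A h
      apply Deriv.boxL1 G Γ (A.box ::ₘ Δ) 0 {A} A
      rw [← plug_append_up]
      simpa using ihA hA (G ++ [(A.box ::ₘ Γ, A.box ::ₘ Δ, Dir.up)]) 0 0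
  | dia A _ => exact absurd hA (by simp [Formula.NoDia])
  | bdia A _ => exact absurd hA (by simp [Formula.NoDia])
  | bbox A ihA =>
    by_cases h : lastDir G = some Dir.up
    · obtain ⟨G', Sg, Pi0, rfl⟩ := lastDir_eq h
      rw [plug_append_up]
      apply Deriv.bboxR1 G' Sg Pi0 (A.bbox ::ₘ Γ) Δ A
      · exact Deriv.bboxL2 G' Sg (A ::ₘ Pi0) Γ (A.bbox ::ₘ Δ) A (ihA hA G' Sg Pi0)
      · rw [← plug_append_up]
        apply Deriv.bboxL1 (G' ++ [(Sg, Pi0, Dir.up)]) Γ (A.bbox ::ₘ Δ) 0 {A} A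
        rw [← plug_append_dn]
        simpa using ihA hA ((G' ++ [(Sg, Pi0, Dir.up)]) ++ [(A.bbox ::ₘ Γ, A.bbox ::ₘ Δ, Dir.dn)]) 0 0
    · apply Deriv.bboxR2 G (A.bbox ::ₘ Γ) Δ A h
      apply Deriv.bboxL1 G Γ (A.bbox ::ₘ Δ) 0 {A} A
      rw [← plug_append_dn]
      simpa using ihA hA (G ++ [(A.bbox ::ₘ Γ, A.bbox ::ₘ Δ, Dir.dn)]) 0 0
end

section
/- (Cut elimination with trailing context, statement SL of the main lemma) For all contexts G, H, I, all multisets Γ, Δ, Σ, Π and every formula A: if G ⇗ Γ ⇒ Δ,A ⇗ I and H ⇗ A,Σ ⇒ Π are both derivable in LNS_Kt, and the linear nested sequents G ⇗ Γ ⇒ Δ and H ⇗ A,Σ ⇒ Π are structurally equivalent, then (G ⊕ H) ⇗ Γ,Σ ⇒ Δ,Π ⇗ I is derivable in LNS_Kt. -/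
/-- Two linear nested sequents are structurally equivalent if they have the same
number of components joined by the same sequence of structural connectives. -/
def structEquiv : LNS → LNS → Prop
  | .single _ _, .single _ _ => True
  | .up _ _ S, .up _ _ T => structEquiv S T
  | .dn _ _ S, .dn _ _ T => structEquiv S T
  | _, _ => False

/-- The merge of two (structurally equivalent) linear nested sequents, taking
componentwise multiset unions of antecedents and succedents. -/
def merge : LNS → LNS → LNS
  | .single Γ Δ, .single Θ Λ => .single (Γ + Θ) (Δ + Λ)
  | .up Γ Δ S, .up Θ Λ T => .up (Γ + Θ) (Δ + Λ) (merge S T)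
  | .dn Γ Δ S, .dn Θ Λ T => .dn (Γ + Θ) (Δ + Λ) (merge S T)
  | S, _ => S

/-- A trailing context: a list of components, each preceded by the structural
connective joining it to what comes before. -/
abbrev TCtx := List (Dir × Multiset Formula × Multiset Formula)

/-- `withTail Γ Δ H` is the linear nested sequent `(Γ ⇒ Δ) ⇗ H`. -/
def withTail : Multiset Formula → Multiset Formula → TCtx → LNS
  | Γ, Δ, [] => .single Γ Δ
  | Γ, Δ, (Dir.up, Θ, Λ) :: H => .up Γ Δ (withTail Θ Λ H)
  | Γ, Δ, (Dir.dn, Θ, Λ) :: H => .dn Γ Δ (withTail Θ Λ H)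

/-- Append a component at the end of a linear nested sequent, joined by the
given structural connective. -/
def LNS.snoc : LNS → Dir → Multiset Formula → Multiset Formula → LNS
  | .single Γ' Δ', Dir.up, Γ, Δ => .up Γ' Δ' (.single Γ Δ)
  | .single Γ' Δ', Dir.dn, Γ, Δ => .dn Γ' Δ' (.single Γ Δ)
  | .up Γ' Δ' S, d, Γ, Δ => .up Γ' Δ' (S.snoc d Γ Δ)
  | .dn Γ' Δ' S, d, Γ, Δ => .dn Γ' Δ' (S.snoc d Γ Δ)

/-- `appendT S I` is the linear nested sequent `S ⇗ I` (append the trailing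
context `I` at the end of `S`). -/
def appendT (S : LNS) (I : TCtx) : LNS :=
  I.foldl (fun S x => S.snoc x.1 x.2.1 x.2.2) S


/-! ## Flat presentation of the calculus -/

/-- Direction list of a context. -/
def dirs (G : Ctx) : List Dir := G.map (fun x => x.2.2)

/-- Componentwise merge of two contexts (directions from the first). -/
def cM (G H : Ctx) : Ctx := List.zipWith (fun a b => (a.1 + b.1, a.2.1 + b.2.1, a.2.2)) G H

/-- Componentwise inclusion of contexts (with equal directions). -/
def le2 (G H : Ctx) : Prop :=
  List.Forall₂ (fun a b => a.1 ≤ b.1 ∧ a.2.1 ≤ b.2.1 ∧ a.2.2 = b.2.2) G H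

/-- Height-indexed flat derivability. -/
inductive DH : ℕ → Ctx → Multiset Formula → Multiset Formula → Prop
  | id (n : ℕ) (G : Ctx) (Γ Δ : Multiset Formula) (p : ℕ) :
      DH n G (.atom p ::ₘ Γ) (.atom p ::ₘ Δ)
  | bot (n : ℕ) (G : Ctx) (Γ Δ : Multiset Formula) :
      DH n G (.bot ::ₘ Γ) Δ
  | ew {n G Θ Λ} (d : Dir) (Γ Δ : Multiset Formula) :
      DH n G Θ Λ → DH (n+1) (G ++ [(Θ, Λ, d)]) Γ Δ
  | impR {n G Γ Δ A B} :
      DH n G (A ::ₘ Γ) (B ::ₘ Formula.imp A B ::ₘ Δ) →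
      DH (n+1) G Γ (Formula.imp A B ::ₘ Δ)
  | impL {n G Γ Δ A B} :
      DH n G (B ::ₘ Formula.imp A B ::ₘ Γ) Δ →
      DH n G (Formula.imp A B ::ₘ Γ) (A ::ₘ Δ) →
      DH (n+1) G (Formula.imp A B ::ₘ Γ) Δ
  | boxR1 {n G Γ Δ Θ Λ A} :
      DH n (G ++ [(Γ, A ::ₘ Δ, Dir.dn)]) Θ (Formula.box A ::ₘ Λ) →
      DH n (G ++ [(Γ, Δ, Dir.dn), (Θ, Formula.box A ::ₘ Λ, Dir.up)]) 0 {A} →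
      DH (n+1) (G ++ [(Γ, Δ, Dir.dn)]) Θ (Formula.box A ::ₘ Λ)
  | bboxR1 {n G Γ Δ Θ Λ A} :
      DH n (G ++ [(Γ, A ::ₘ Δ, Dir.up)]) Θ (Formula.bbox A ::ₘ Λ) →
      DH n (G ++ [(Γ, Δ, Dir.up), (Θ, Formula.bbox A ::ₘ Λ, Dir.dn)]) 0 {A} →
      DH (n+1) (G ++ [(Γ, Δ, Dir.up)]) Θ (Formula.bbox A ::ₘ Λ)
  | boxR2 {n G Γ Δ A} :
      lastDir G ≠ some Dir.dn →
      DH n (G ++ [(Γ, Formula.box A ::ₘ Δ, Dir.up)]) 0 {A} →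
      DH (n+1) G Γ (Formula.box A ::ₘ Δ)
  | bboxR2 {n G Γ Δ A} :
      lastDir G ≠ some Dir.up →
      DH n (G ++ [(Γ, Formula.bbox A ::ₘ Δ, Dir.dn)]) 0 {A} →
      DH (n+1) G Γ (Formula.bbox A ::ₘ Δ)
  | boxL1 {n G Γ Δ Θ Λ A} :
      DH n (G ++ [(Formula.box A ::ₘ Γ, Δ, Dir.up)]) (A ::ₘ Θ) Λ →
      DH (n+1) (G ++ [(Formula.box A ::ₘ Γ, Δ, Dir.up)]) Θ Λ
  | bboxL1 {n G Γ Δ Θ Λ A} :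
      DH n (G ++ [(Formula.bbox A ::ₘ Γ, Δ, Dir.dn)]) (A ::ₘ Θ) Λ →
      DH (n+1) (G ++ [(Formula.bbox A ::ₘ Γ, Δ, Dir.dn)]) Θ Λ
  | boxL2 {n G Γ Δ A} (Θ Λ : Multiset Formula) :
      DH n G (A ::ₘ Γ) Δ →
      DH (n+1) (G ++ [(Γ, Δ, Dir.dn)]) (Formula.box A ::ₘ Θ) Λ
  | bboxL2 {n G Γ Δ A} (Θ Λ : Multiset Formula) :
      DH n G (A ::ₘ Γ) Δ →
      DH (n+1) (G ++ [(Γ, Δ, Dir.up)]) (Formula.bbox A ::ₘ Θ) Λ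

/-- Flat derivability. -/
def DF (G : Ctx) (Γ Δ : Multiset Formula) : Prop := ∃ n, DH n G Γ Δ

theorem DH.mono {n G Γ Δ} (h : DH n G Γ Δ) : ∀ {m}, n ≤ m → DH m G Γ Δ := by
  induction h with
  | id => intro m _; exact .id ..
  | bot => intro m _; exact .bot ..
  | ew d Γ Δ _ ih =>
      intro m hm
      obtain ⟨m, rfl⟩ : ∃ m', m = m' + 1 := ⟨m - 1, by omega⟩
      exact .ew d Γ Δ (ih (by omega))
  | impR _ ih =>
      intro m hm
      obtain ⟨m, rfl⟩ : ∃ m', m = m' + 1 := ⟨m - 1, by omega⟩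
      exact .impR (ih (by omega))
  | impL _ _ ih1 ih2 =>
      intro m hm
      obtain ⟨m, rfl⟩ : ∃ m', m = m' + 1 := ⟨m - 1, by omega⟩
      exact .impL (ih1 (by omega)) (ih2 (by omega))
  | boxR1 _ _ ih1 ih2 =>
      intro m hm
      obtain ⟨m, rfl⟩ : ∃ m', m = m' + 1 := ⟨m - 1, by omega⟩
      exact .boxR1 (ih1 (by omega)) (ih2 (by omega))
  | bboxR1 _ _ ih1 ih2 =>
      intro m hm
      obtain ⟨m, rfl⟩ : ∃ m', m = m' + 1 := ⟨m - 1, by omega⟩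
      exact .bboxR1 (ih1 (by omega)) (ih2 (by omega))
  | boxR2 hl _ ih =>
      intro m hm
      obtain ⟨m, rfl⟩ : ∃ m', m = m' + 1 := ⟨m - 1, by omega⟩
      exact .boxR2 hl (ih (by omega))
  | bboxR2 hl _ ih =>
      intro m hm
      obtain ⟨m, rfl⟩ : ∃ m', m = m' + 1 := ⟨m - 1, by omega⟩
      exact .bboxR2 hl (ih (by omega))
  | boxL1 _ ih =>
      intro m hm
      obtain ⟨m, rfl⟩ : ∃ m', m = m' + 1 := ⟨m - 1, by omega⟩
      exact .boxL1 (ih (by omega))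
  | bboxL1 _ ih =>
      intro m hm
      obtain ⟨m, rfl⟩ : ∃ m', m = m' + 1 := ⟨m - 1, by omega⟩
      exact .bboxL1 (ih (by omega))
  | boxL2 Θ Λ _ ih =>
      intro m hm
      obtain ⟨m, rfl⟩ : ∃ m', m = m' + 1 := ⟨m - 1, by omega⟩
      exact .boxL2 Θ Λ (ih (by omega))
  | bboxL2 Θ Λ _ ih =>
      intro m hm
      obtain ⟨m, rfl⟩ : ∃ m', m = m' + 1 := ⟨m - 1, by omega⟩
      exact .bboxL2 Θ Λ (ih (by omega))

/-! DF-level constructors -/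

theorem DF.id (G : Ctx) (Γ Δ : Multiset Formula) (p : ℕ) :
    DF G (.atom p ::ₘ Γ) (.atom p ::ₘ Δ) := ⟨0, .id ..⟩
theorem DF.bot (G : Ctx) (Γ Δ : Multiset Formula) : DF G (.bot ::ₘ Γ) Δ := ⟨0, .bot ..⟩
theorem DF.ew {G Θ Λ} (d : Dir) (Γ Δ : Multiset Formula) (h : DF G Θ Λ) :
    DF (G ++ [(Θ, Λ, d)]) Γ Δ := by obtain ⟨n, h⟩ := h; exact ⟨n+1, .ew d Γ Δ h⟩
theorem DF.impR {G Γ Δ A B} (h : DF G (A ::ₘ Γ) (B ::ₘ Formula.imp A B ::ₘ Δ)) :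
    DF G Γ (Formula.imp A B ::ₘ Δ) := by obtain ⟨n, h⟩ := h; exact ⟨n+1, .impR h⟩
theorem DF.impL {G Γ Δ A B} (h1 : DF G (B ::ₘ Formula.imp A B ::ₘ Γ) Δ)
    (h2 : DF G (Formula.imp A B ::ₘ Γ) (A ::ₘ Δ)) : DF G (Formula.imp A B ::ₘ Γ) Δ := by
  obtain ⟨n, h1⟩ := h1; obtain ⟨m, h2⟩ := h2
  exact ⟨n+m+1, .impL (h1.mono (by omega)) (h2.mono (by omega))⟩
theorem DF.boxR1 {G Γ Δ Θ Λ A} (h1 : DF (G ++ [(Γ, A ::ₘ Δ, Dir.dn)]) Θ (Formula.box A ::ₘ Λ))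
    (h2 : DF (G ++ [(Γ, Δ, Dir.dn), (Θ, Formula.box A ::ₘ Λ, Dir.up)]) 0 {A}) :
    DF (G ++ [(Γ, Δ, Dir.dn)]) Θ (Formula.box A ::ₘ Λ) := by
  obtain ⟨n, h1⟩ := h1; obtain ⟨m, h2⟩ := h2
  exact ⟨n+m+1, .boxR1 (h1.mono (by omega)) (h2.mono (by omega))⟩
theorem DF.bboxR1 {G Γ Δ Θ Λ A} (h1 : DF (G ++ [(Γ, A ::ₘ Δ, Dir.up)]) Θ (Formula.bbox A ::ₘ Λ))
    (h2 : DF (G ++ [(Γ, Δ, Dir.up), (Θ, Formula.bbox A ::ₘ Λ, Dir.dn)]) 0 {A}) :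
    DF (G ++ [(Γ, Δ, Dir.up)]) Θ (Formula.bbox A ::ₘ Λ) := by
  obtain ⟨n, h1⟩ := h1; obtain ⟨m, h2⟩ := h2
  exact ⟨n+m+1, .bboxR1 (h1.mono (by omega)) (h2.mono (by omega))⟩
theorem DF.boxR2 {G Γ Δ A} (hl : lastDir G ≠ some Dir.dn)
    (h : DF (G ++ [(Γ, Formula.box A ::ₘ Δ, Dir.up)]) 0 {A}) : DF G Γ (Formula.box A ::ₘ Δ) := by
  obtain ⟨n, h⟩ := h; exact ⟨n+1, .boxR2 hl h⟩
theorem DF.bboxR2 {G Γ Δ A} (hl : lastDir G ≠ some Dir.up)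
    (h : DF (G ++ [(Γ, Formula.bbox A ::ₘ Δ, Dir.dn)]) 0 {A}) : DF G Γ (Formula.bbox A ::ₘ Δ) := by
  obtain ⟨n, h⟩ := h; exact ⟨n+1, .bboxR2 hl h⟩
theorem DF.boxL1 {G Γ Δ Θ Λ A} (h : DF (G ++ [(Formula.box A ::ₘ Γ, Δ, Dir.up)]) (A ::ₘ Θ) Λ) :
    DF (G ++ [(Formula.box A ::ₘ Γ, Δ, Dir.up)]) Θ Λ := by
  obtain ⟨n, h⟩ := h; exact ⟨n+1, .boxL1 h⟩
theorem DF.bboxL1 {G Γ Δ Θ Λ A} (h : DF (G ++ [(Formula.bbox A ::ₘ Γ, Δ, Dir.dn)]) (A ::ₘ Θ) Λ) :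
    DF (G ++ [(Formula.bbox A ::ₘ Γ, Δ, Dir.dn)]) Θ Λ := by
  obtain ⟨n, h⟩ := h; exact ⟨n+1, .bboxL1 h⟩
theorem DF.boxL2 {G Γ Δ A} (Θ Λ : Multiset Formula) (h : DF G (A ::ₘ Γ) Δ) :
    DF (G ++ [(Γ, Δ, Dir.dn)]) (Formula.box A ::ₘ Θ) Λ := by
  obtain ⟨n, h⟩ := h; exact ⟨n+1, .boxL2 Θ Λ h⟩
theorem DF.bboxL2 {G Γ Δ A} (Θ Λ : Multiset Formula) (h : DF G (A ::ₘ Γ) Δ) :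
    DF (G ++ [(Γ, Δ, Dir.up)]) (Formula.bbox A ::ₘ Θ) Λ := by
  obtain ⟨n, h⟩ := h; exact ⟨n+1, .bboxL2 Θ Λ h⟩

/-! ## plug lemmas and equivalence with `Deriv` -/

theorem plug_append (G H : Ctx) (S : LNS) : plug (G ++ H) S = plug G (plug H S) := by
  induction G with
  | nil => rfl
  | cons x G ih =>
      obtain ⟨a, b, d⟩ := x
      cases d <;> simp [plug, ih]

theorem plug_up (G : Ctx) (a b : Multiset Formula) (S : LNS) :
    plug (G ++ [(a, b, Dir.up)]) S = plug G (.up a b S) := by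
  rw [plug_append]; rfl

theorem plug_dn (G : Ctx) (a b : Multiset Formula) (S : LNS) :
    plug (G ++ [(a, b, Dir.dn)]) S = plug G (.dn a b S) := by
  rw [plug_append]; rfl

theorem plug_two_dn_up (G : Ctx) (a b c d : Multiset Formula) (S : LNS) :
    plug (G ++ [(a, b, Dir.dn), (c, d, Dir.up)]) S = plug G (.dn a b (.up c d S)) := by
  rw [show G ++ [(a, b, Dir.dn), (c, d, Dir.up)] = (G ++ [(a, b, Dir.dn)]) ++ [(c, d, Dir.up)] by simp,
    plug_up, plug_dn]

theorem plug_two_up_dn (G : Ctx) (a b c d : Multiset Formula) (S : LNS) :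
    plug (G ++ [(a, b, Dir.up), (c, d, Dir.dn)]) S = plug G (.up a b (.dn c d S)) := by
  rw [show G ++ [(a, b, Dir.up), (c, d, Dir.dn)] = (G ++ [(a, b, Dir.up)]) ++ [(c, d, Dir.dn)] by simp,
    plug_dn, plug_up]

theorem plug_single_inj {G G' : Ctx} {a b a' b' : Multiset Formula}
    (h : plug G (.single a b) = plug G' (.single a' b')) : G = G' ∧ a = a' ∧ b = b' := by
  induction G generalizing G' with
  | nil =>
      cases G' with
      | nil => simpa [plug] using h
      | cons y G' =>
          obtain ⟨c, e, d⟩ := y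
          cases d <;> simp [plug] at h
  | cons x G ih =>
      obtain ⟨c, e, d⟩ := x
      cases G' with
      | nil => cases d <;> simp [plug] at h
      | cons y G' =>
          obtain ⟨c', e', d'⟩ := y
          cases d <;> cases d' <;> simp [plug] at h <;>
            · obtain ⟨h1, h2, h3⟩ := h
              obtain ⟨hG, ha, hb⟩ := ih h3
              exact ⟨by simp [h1, h2, hG], ha, hb⟩

theorem DH.toDeriv {n G Γ Δ} (h : DH n G Γ Δ) : Deriv (plug G (.single Γ Δ)) := by
  induction h with
  | id n G Γ Δ p => exact .id G Γ Δ p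
  | bot n G Γ Δ => exact .botL G Γ Δ
  | ew d Γ Δ _ ih => exact .ew _ _ _ d Γ Δ ih
  | impR _ ih => exact .impR _ _ _ _ _ ih
  | impL _ _ ih1 ih2 => exact .impL _ _ _ _ _ ih1 ih2
  | boxR1 _ _ ih1 ih2 =>
      rw [plug_dn] at *
      rw [plug_append] at ih2
      exact .boxR1 _ _ _ _ _ _ ih1 (by simpa [plug] using ih2)
  | bboxR1 _ _ ih1 ih2 =>
      rw [plug_up] at *
      rw [plug_append] at ih2
      exact .bboxR1 _ _ _ _ _ _ ih1 (by simpa [plug] using ih2)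
  | boxR2 hl _ ih =>
      rw [plug_up] at ih
      exact .boxR2 _ _ _ _ hl ih
  | bboxR2 hl _ ih =>
      rw [plug_dn] at ih
      exact .bboxR2 _ _ _ _ hl ih
  | boxL1 _ ih =>
      rw [plug_up] at *
      exact .boxL1 _ _ _ _ _ _ ih
  | bboxL1 _ ih =>
      rw [plug_dn] at *
      exact .bboxL1 _ _ _ _ _ _ ih
  | boxL2 Θ Λ _ ih =>
      rw [plug_dn]
      exact .boxL2 _ _ _ Θ Λ _ ih
  | bboxL2 Θ Λ _ ih =>
      rw [plug_up]
      exact .bboxL2 _ _ _ Θ Λ _ ih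

theorem Deriv.toDF {S} (h : Deriv S) :
    ∀ {G Γ Δ}, S = plug G (.single Γ Δ) → DF G Γ Δ := by
  induction h with
  | id G Γ Δ p =>
      intro G' Γ' Δ' h
      obtain ⟨rfl, rfl, rfl⟩ := plug_single_inj h.symm
      exact DF.id ..
  | botL G Γ Δ =>
      intro G' Γ' Δ' h
      obtain ⟨rfl, rfl, rfl⟩ := plug_single_inj h.symm
      exact DF.bot ..
  | ew G Θ Λ d Γ Δ _ ih =>
      intro G' Γ' Δ' h
      obtain ⟨rfl, rfl, rfl⟩ := plug_single_inj h.symm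
      exact DF.ew d _ _ (ih rfl)
  | impR G Γ Δ A B _ ih =>
      intro G' Γ' Δ' h
      obtain ⟨rfl, rfl, rfl⟩ := plug_single_inj h.symm
      exact DF.impR (ih rfl)
  | impL G Γ Δ A B _ _ ih1 ih2 =>
      intro G' Γ' Δ' h
      obtain ⟨rfl, rfl, rfl⟩ := plug_single_inj h.symm
      exact DF.impL (ih1 rfl) (ih2 rfl)
  | boxR1 G Γ Δ Θ Λ A _ _ ih1 ih2 =>
      intro G' Γ' Δ' h
      rw [← plug_dn] at h
      obtain ⟨rfl, rfl, rfl⟩ := plug_single_inj h.symm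
      refine DF.boxR1 (ih1 ?_) (ih2 ?_)
      · rw [← plug_dn]
      · exact (plug_two_dn_up ..).symm
  | bboxR1 G Γ Δ Θ Λ A _ _ ih1 ih2 =>
      intro G' Γ' Δ' h
      rw [← plug_up] at h
      obtain ⟨rfl, rfl, rfl⟩ := plug_single_inj h.symm
      refine DF.bboxR1 (ih1 ?_) (ih2 ?_)
      · rw [← plug_up]
      · exact (plug_two_up_dn ..).symm
  | boxR2 G Γ Δ A hl _ ih =>
      intro G' Γ' Δ' h
      obtain ⟨rfl, rfl, rfl⟩ := plug_single_inj h.symm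
      exact DF.boxR2 hl (ih (by rw [← plug_up]))
  | bboxR2 G Γ Δ A hl _ ih =>
      intro G' Γ' Δ' h
      obtain ⟨rfl, rfl, rfl⟩ := plug_single_inj h.symm
      exact DF.bboxR2 hl (ih (by rw [← plug_dn]))
  | boxL1 G Γ Δ Θ Λ A _ ih =>
      intro G' Γ' Δ' h
      rw [← plug_up] at h
      obtain ⟨rfl, rfl, rfl⟩ := plug_single_inj h.symm
      exact DF.boxL1 (ih (by rw [← plug_up]))
  | bboxL1 G Γ Δ Θ Λ A _ ih =>
      intro G' Γ' Δ' h
      rw [← plug_dn] at h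
      obtain ⟨rfl, rfl, rfl⟩ := plug_single_inj h.symm
      exact DF.bboxL1 (ih (by rw [← plug_dn]))
  | boxL2 G Γ Δ Θ Λ A _ ih =>
      intro G' Γ' Δ' h
      rw [← plug_dn] at h
      obtain ⟨rfl, rfl, rfl⟩ := plug_single_inj h.symm
      exact DF.boxL2 _ _ (ih rfl)
  | bboxL2 G Γ Δ Θ Λ A _ ih =>
      intro G' Γ' Δ' h
      rw [← plug_up] at h
      obtain ⟨rfl, rfl, rfl⟩ := plug_single_inj h.symm
      exact DF.bboxL2 _ _ (ih rfl)

theorem DF.toDeriv {G Γ Δ} (h : DF G Γ Δ) : Deriv (plug G (.single Γ Δ)) := by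
  obtain ⟨n, h⟩ := h; exact h.toDeriv
/-! ## List / multiset helper lemmas -/

theorem ms_cons_le {α : Type _} {a : α} {s t : Multiset α}
    (h : a ::ₘ s ≤ t) : ∃ t', t = a ::ₘ t' ∧ s ≤ t' := by
  obtain ⟨u, rfl⟩ := Multiset.le_iff_exists_add.1 h
  exact ⟨s + u, by simp [Multiset.cons_add], Multiset.le_add_right _ _⟩

theorem eq_nil_or_concat' {α : Type _} (l : List α) : l = [] ∨ ∃ l' a, l = l' ++ [a] := by
  rcases List.eq_nil_or_concat l with h | ⟨l', a, h⟩
  · exact Or.inl h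
  · exact Or.inr ⟨l', a, by simpa [List.concat_eq_append] using h⟩

theorem concat_inj {α : Type _} {G H : List α} {x y : α}
    (h : G ++ [x] = H ++ [y]) : G = H ∧ x = y := by
  have h1 : G.length = H.length := by
    have := congrArg List.length h; simpa using this
  obtain ⟨h2, h3⟩ := List.append_inj h h1
  exact ⟨h2, by simpa using h3⟩

theorem append_cons_eq_concat {α : Type _} {G K Y : List α} {p e : α}
    (h : G ++ p :: K = Y ++ [e]) :
    (K = [] ∧ Y = G ∧ p = e) ∨ ∃ K₀, K = K₀ ++ [e] ∧ Y = G ++ p :: K₀ := by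
  rcases eq_nil_or_concat' K with rfl | ⟨K₀, k, rfl⟩
  · left
    have := concat_inj (by simpa using h)
    exact ⟨rfl, this.1.symm, this.2⟩
  · right
    have h' : (G ++ p :: K₀) ++ [k] = Y ++ [e] := by simpa using h
    obtain ⟨h1, rfl⟩ := concat_inj h'
    exact ⟨K₀, rfl, h1.symm⟩

/-- componentwise weakening relation on components -/
def wle (x y : Multiset Formula × Multiset Formula × Dir) : Prop :=
  x.1 ≤ y.1 ∧ x.2.1 ≤ y.2.1 ∧ x.2.2 = y.2.2

theorem le2_def {G H : Ctx} : le2 G H ↔ List.Forall₂ wle G H := Iff.rfl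

theorem le2_refl (G : Ctx) : le2 G G :=
  List.forall₂_same.2 (fun x _ => ⟨le_refl _, le_refl _, rfl⟩)

theorem le2_length {G H : Ctx} (h : le2 G H) : G.length = H.length :=
  List.Forall₂.length_eq h

theorem le2_dirs {G H : Ctx} (h : le2 G H) : dirs G = dirs H := by
  induction h with
  | nil => rfl
  | cons hab _ ih => simp [dirs] at ih ⊢; exact ⟨hab.2.2, ih⟩

theorem le2_concat {G H : Ctx} {x y} (h : le2 G H) (hxy : wle x y) :
    le2 (G ++ [x]) (H ++ [y]) := by
  induction h with
  | nil => exact List.Forall₂.cons hxy List.Forall₂.nil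
  | cons hab _ ih => exact List.Forall₂.cons hab ih

theorem le2_concat_split {G : Ctx} {x} {H : Ctx} (h : le2 (G ++ [x]) H) :
    ∃ H₀ y, H = H₀ ++ [y] ∧ le2 G H₀ ∧ wle x y := by
  induction G generalizing H with
  | nil =>
      cases h with
      | cons hxy h' =>
          cases h'
          exact ⟨[], _, rfl, List.Forall₂.nil, hxy⟩
  | cons g G ih =>
      cases h with
      | cons hgz h' =>
          obtain ⟨H₀, y, rfl, hle, hw⟩ := ih h'
          exact ⟨_ :: H₀, y, rfl, List.Forall₂.cons hgz hle, hw⟩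

theorem lastDir_eq_getLast (G : Ctx) : lastDir G = (dirs G).getLast? := by
  induction G with
  | nil => rfl
  | cons x G ih =>
      cases G with
      | nil => obtain ⟨a, b, d⟩ := x; rfl
      | cons y G' =>
          rw [show lastDir (x :: y :: G') = lastDir (y :: G') from rfl, ih]
          simp [dirs]

theorem lastDir_congr {G H : Ctx} (h : dirs G = dirs H) : lastDir G = lastDir H := by
  rw [lastDir_eq_getLast, lastDir_eq_getLast, h]

theorem lastDir_concat (G : Ctx) (x) : lastDir (G ++ [x]) = some x.2.2 := by
  rw [lastDir_eq_getLast]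
  simp [dirs]

theorem dirs_concat_split {G : Ctx} {L : List Dir} {d : Dir}
    (h : dirs G = L ++ [d]) : ∃ G₀ a b, G = G₀ ++ [(a, b, d)] ∧ dirs G₀ = L := by
  rcases eq_nil_or_concat' G with rfl | ⟨G₀, x, rfl⟩
  · simp [dirs] at h
  · obtain ⟨a, b, d'⟩ := x
    have h' : dirs G₀ ++ [d'] = L ++ [d] := by simpa [dirs] using h
    obtain ⟨h1, h2⟩ := concat_inj h'
    exact ⟨G₀, a, b, by rw [h2], h1⟩

/-! ### cM lemmas -/

theorem cM_nil : cM [] [] = [] := rfl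

theorem cM_concat {G H : Ctx} (hl : G.length = H.length) (x y) :
    cM (G ++ [x]) (H ++ [y]) = cM G H ++ [(x.1 + y.1, x.2.1 + y.2.1, x.2.2)] := by
  simp [cM, List.zipWith_append hl]

theorem dirs_cM {G H : Ctx} (hl : dirs G = dirs H) : dirs (cM G H) = dirs G := by
  induction G generalizing H with
  | nil => simp [cM, dirs]
  | cons x G ih =>
      cases H with
      | nil => simp [dirs] at hl
      | cons y H =>
          simp [dirs] at hl
          have hc : cM (x :: G) (y :: H) = (x.1 + y.1, x.2.1 + y.2.1, x.2.2) :: cM G H := rfl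
          rw [hc]
          simp only [dirs, List.map_cons]
          have := ih hl.2
          simp only [dirs] at this
          rw [this]

theorem length_cM {G H : Ctx} (hl : G.length = H.length) : (cM G H).length = G.length := by
  simp [cM, hl]

theorem le2_cM_left {G H : Ctx} (h : dirs G = dirs H) : le2 G (cM G H) := by
  induction G generalizing H with
  | nil => exact List.Forall₂.nil
  | cons x G ih =>
      cases H with
      | nil => simp [dirs] at h
      | cons y H =>
          simp [dirs] at h
          exact List.Forall₂.cons ⟨Multiset.le_add_right _ _, Multiset.le_add_right _ _, rfl⟩
            (ih h.2)

theorem le2_cM_right {G H : Ctx} (h : dirs G = dirs H) : le2 H (cM G H) := by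
  induction G generalizing H with
  | nil =>
      cases H with
      | nil => exact List.Forall₂.nil
      | cons y H => simp [dirs] at h
  | cons x G ih =>
      cases H with
      | nil => simp [dirs] at h
      | cons y H =>
          simp [dirs] at h
          exact List.Forall₂.cons ⟨Multiset.le_add_left _ _, Multiset.le_add_left _ _, h.1.symm⟩
            (ih h.2)

theorem le2_cM_mono {G H H' : Ctx} (hGH : dirs G = dirs H) (h : le2 H H') :
    le2 (cM G H) (cM G H') := by
  induction G generalizing H H' with
  | nil => exact List.Forall₂.nil
  | cons x G ih =>
      cases H with
      | nil => simp [dirs] at hGH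
      | cons y H =>
          cases h with
          | cons hy h' =>
              simp [dirs] at hGH
              exact List.Forall₂.cons
                ⟨add_le_add_right hy.1 _, add_le_add_right hy.2.1 _, rfl⟩ (ih hGH.2 h')

theorem cM_eq_concat_split {G H Y : Ctx} {e} (hd : dirs G = dirs H)
    (h : cM G H = Y ++ [e]) :
    ∃ G₀ g H₀ f, G = G₀ ++ [g] ∧ H = H₀ ++ [f] ∧ Y = cM G₀ H₀ ∧
      e = (g.1 + f.1, g.2.1 + f.2.1, g.2.2) ∧ dirs G₀ = dirs H₀ := by
  rcases eq_nil_or_concat' G with rfl | ⟨G₀, g, rfl⟩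
  · have : H = [] := by
      cases H with
      | nil => rfl
      | cons y H => simp [dirs] at hd
    subst this; simp [cM] at h
  · have hlen : dirs G₀ ++ [g.2.2] = dirs H := by simpa [dirs] using hd
    obtain ⟨H₀, a, b, rfl, hd₀⟩ := dirs_concat_split hlen.symm
    have hl : G₀.length = H₀.length := by
      have := congrArg List.length hd₀; simpa [dirs] using this.symm
    rw [cM_concat hl] at h
    obtain ⟨h1, h2⟩ := concat_inj h
    exact ⟨G₀, g, H₀, (a, b, g.2.2), rfl, rfl, h1.symm, h2.symm, hd₀.symm⟩
/-! ## Weakening -/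

private theorem clc {a : Formula} {s t : Multiset Formula} (h : s ≤ t) : a ::ₘ s ≤ a ::ₘ t :=
  Multiset.cons_le_cons a h

theorem app2 {α : Type _} (l : List α) (a b : α) : (l ++ [a]) ++ [b] = l ++ [a, b] := by simp

theorem DH.wk {n G Γ Δ} (h : DH n G Γ Δ) :
    ∀ {G' Γ' Δ'}, le2 G G' → Γ ≤ Γ' → Δ ≤ Δ' → DH n G' Γ' Δ' := by
  induction h with
  | id n G Γ Δ p =>
      intro G' Γ' Δ' _ hΓ hΔ
      obtain ⟨Γ₁, rfl, -⟩ := ms_cons_le hΓ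
      obtain ⟨Δ₁, rfl, -⟩ := ms_cons_le hΔ
      exact .id ..
  | bot n G Γ Δ =>
      intro G' Γ' Δ' _ hΓ _
      obtain ⟨Γ₁, rfl, -⟩ := ms_cons_le hΓ
      exact .bot ..
  | @ew n G Θ Λ d Γ Δ h ih =>
      intro G' Γ' Δ' hG _ _
      obtain ⟨H₀, y, rfl, hle, hw⟩ := le2_concat_split hG
      obtain ⟨y₁, y₂, yd⟩ := y
      obtain ⟨w1, w2, w3⟩ := hw
      cases w3
      exact .ew d Γ' Δ' (ih hle w1 w2)
  | @impR n G Γ Δ A B h ih =>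
      intro G' Γ' Δ' hG hΓ hΔ
      obtain ⟨Δ₁, rfl, hΔ₁⟩ := ms_cons_le hΔ
      exact .impR (ih hG (clc hΓ) (clc (clc hΔ₁)))
  | @impL n G Γ Δ A B h1 h2 ih1 ih2 =>
      intro G' Γ' Δ' hG hΓ hΔ
      obtain ⟨Γ₁, rfl, hΓ₁⟩ := ms_cons_le hΓ
      exact .impL (ih1 hG (clc (clc hΓ₁)) hΔ) (ih2 hG (clc hΓ₁) (clc hΔ))
  | @boxR1 n G Γ Δ Θ Λ A h1 h2 ih1 ih2 =>
      intro G' Γ' Δ' hG hΓ hΔ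
      obtain ⟨H₀, y, rfl, hle, hw⟩ := le2_concat_split hG
      obtain ⟨y₁, y₂, yd⟩ := y
      obtain ⟨w1, w2, w3⟩ := hw
      cases w3
      obtain ⟨Λ₁, rfl, hΛ⟩ := ms_cons_le hΔ
      have e1 : wle (Γ, A ::ₘ Δ, Dir.dn) (y₁, A ::ₘ y₂, Dir.dn) := ⟨w1, clc w2, rfl⟩
      have e2 : wle (Γ, Δ, Dir.dn) (y₁, y₂, Dir.dn) := ⟨w1, w2, rfl⟩
      have e3 : wle (Θ, Formula.box A ::ₘ Λ, Dir.up) (Γ', Formula.box A ::ₘ Λ₁, Dir.up) :=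
        ⟨hΓ, clc hΛ, rfl⟩
      have p1 := ih1 (le2_concat hle e1) hΓ (clc hΛ)
      have hle2 := le2_concat (le2_concat hle e2) e3
      rw [app2, app2] at hle2
      have p2 := ih2 hle2 le_rfl le_rfl
      exact .boxR1 p1 p2
  | @bboxR1 n G Γ Δ Θ Λ A h1 h2 ih1 ih2 =>
      intro G' Γ' Δ' hG hΓ hΔ
      obtain ⟨H₀, y, rfl, hle, hw⟩ := le2_concat_split hG
      obtain ⟨y₁, y₂, yd⟩ := y
      obtain ⟨w1, w2, w3⟩ := hw
      cases w3
      obtain ⟨Λ₁, rfl, hΛ⟩ := ms_cons_le hΔ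
      have e1 : wle (Γ, A ::ₘ Δ, Dir.up) (y₁, A ::ₘ y₂, Dir.up) := ⟨w1, clc w2, rfl⟩
      have e2 : wle (Γ, Δ, Dir.up) (y₁, y₂, Dir.up) := ⟨w1, w2, rfl⟩
      have e3 : wle (Θ, Formula.bbox A ::ₘ Λ, Dir.dn) (Γ', Formula.bbox A ::ₘ Λ₁, Dir.dn) :=
        ⟨hΓ, clc hΛ, rfl⟩
      have p1 := ih1 (le2_concat hle e1) hΓ (clc hΛ)
      have hle2 := le2_concat (le2_concat hle e2) e3
      rw [app2, app2] at hle2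
      have p2 := ih2 hle2 le_rfl le_rfl
      exact .bboxR1 p1 p2
  | @boxR2 n G Γ Δ A hl h ih =>
      intro G' Γ' Δ' hG hΓ hΔ
      obtain ⟨Δ₁, rfl, hΔ₁⟩ := ms_cons_le hΔ
      have e1 : wle (Γ, Formula.box A ::ₘ Δ, Dir.up) (Γ', Formula.box A ::ₘ Δ₁, Dir.up) :=
        ⟨hΓ, clc hΔ₁, rfl⟩
      refine .boxR2 ?_ (ih (le2_concat hG e1) le_rfl le_rfl)
      rw [← lastDir_congr (le2_dirs hG)]; exact hl
  | @bboxR2 n G Γ Δ A hl h ih =>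
      intro G' Γ' Δ' hG hΓ hΔ
      obtain ⟨Δ₁, rfl, hΔ₁⟩ := ms_cons_le hΔ
      have e1 : wle (Γ, Formula.bbox A ::ₘ Δ, Dir.dn) (Γ', Formula.bbox A ::ₘ Δ₁, Dir.dn) :=
        ⟨hΓ, clc hΔ₁, rfl⟩
      refine .bboxR2 ?_ (ih (le2_concat hG e1) le_rfl le_rfl)
      rw [← lastDir_congr (le2_dirs hG)]; exact hl
  | @boxL1 n G Γ Δ Θ Λ A h ih =>
      intro G' Γ' Δ' hG hΓ hΔ
      obtain ⟨H₀, y, rfl, hle, hw⟩ := le2_concat_split hG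
      obtain ⟨y₁, y₂, yd⟩ := y
      obtain ⟨w1, w2, w3⟩ := hw
      cases w3
      obtain ⟨Γ₁, rfl, hΓ₁⟩ := ms_cons_le w1
      have e1 : wle (Formula.box A ::ₘ Γ, Δ, Dir.up) (Formula.box A ::ₘ Γ₁, y₂, Dir.up) :=
        ⟨clc hΓ₁, w2, rfl⟩
      exact .boxL1 (ih (le2_concat hle e1) (clc hΓ) hΔ)
  | @bboxL1 n G Γ Δ Θ Λ A h ih =>
      intro G' Γ' Δ' hG hΓ hΔ
      obtain ⟨H₀, y, rfl, hle, hw⟩ := le2_concat_split hG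
      obtain ⟨y₁, y₂, yd⟩ := y
      obtain ⟨w1, w2, w3⟩ := hw
      cases w3
      obtain ⟨Γ₁, rfl, hΓ₁⟩ := ms_cons_le w1
      have e1 : wle (Formula.bbox A ::ₘ Γ, Δ, Dir.dn) (Formula.bbox A ::ₘ Γ₁, y₂, Dir.dn) :=
        ⟨clc hΓ₁, w2, rfl⟩
      exact .bboxL1 (ih (le2_concat hle e1) (clc hΓ) hΔ)
  | @boxL2 n G Γ Δ A Θ Λ h ih =>
      intro G' Γ' Δ' hG hΓ hΔ
      obtain ⟨H₀, y, rfl, hle, hw⟩ := le2_concat_split hG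
      obtain ⟨y₁, y₂, yd⟩ := y
      obtain ⟨w1, w2, w3⟩ := hw
      cases w3
      obtain ⟨Θ₁, rfl, -⟩ := ms_cons_le hΓ
      exact .boxL2 Θ₁ Δ' (ih hle (clc w1) w2)
  | @bboxL2 n G Γ Δ A Θ Λ h ih =>
      intro G' Γ' Δ' hG hΓ hΔ
      obtain ⟨H₀, y, rfl, hle, hw⟩ := le2_concat_split hG
      obtain ⟨y₁, y₂, yd⟩ := y
      obtain ⟨w1, w2, w3⟩ := hw
      cases w3
      obtain ⟨Θ₁, rfl, -⟩ := ms_cons_le hΓ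
      exact .bboxL2 Θ₁ Δ' (ih hle (clc w1) w2)

theorem DF.wk {G Γ Δ G' Γ' Δ'} (h : DF G Γ Δ) (hG : le2 G G') (hΓ : Γ ≤ Γ') (hΔ : Δ ≤ Δ') :
    DF G' Γ' Δ' := by
  obtain ⟨n, h⟩ := h; exact ⟨n, h.wk hG hΓ hΔ⟩
/-! ## Contraction -/

theorem mem_left_of_add {c : Formula} {Γ Sg : Multiset Formula}
    (h : c ∈ Γ + Sg) (hle : Sg ≤ Γ) : c ∈ Γ := by
  rcases Multiset.mem_add.1 h with h | h
  · exact h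
  · exact Multiset.mem_of_le hle h

theorem split_add_cons {c : Formula} {Γ Sg W : Multiset Formula}
    (h : c ::ₘ W = Γ + Sg) (hle : Sg ≤ Γ) : ∃ Γ₀, Γ = c ::ₘ Γ₀ ∧ W = Γ₀ + Sg := by
  have hc : c ∈ Γ := mem_left_of_add (h ▸ Multiset.mem_cons_self c W) hle
  obtain ⟨Γ₀, rfl⟩ := Multiset.exists_cons_of_mem hc
  refine ⟨Γ₀, rfl, ?_⟩
  have : c ::ₘ W = c ::ₘ (Γ₀ + Sg) := by rw [h]; simp [Multiset.cons_add]
  exact (Multiset.cons_inj_right c).1 this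

theorem le2_concat_inv {A B : Ctx} {x y} (h : le2 (A ++ [x]) (B ++ [y])) :
    le2 A B ∧ wle x y := by
  obtain ⟨B₀, y', he, h1, h2⟩ := le2_concat_split h
  obtain ⟨rfl, rfl⟩ := concat_inj he
  exact ⟨h1, h2⟩

theorem le_cons_of_le {a : Formula} {s t : Multiset Formula} (h : s ≤ t) : s ≤ a ::ₘ t :=
  le_trans h (Multiset.le_cons_self t a)

theorem DH.ctr {n X xa xb} (h : DH n X xa xb) :
    ∀ {G H Γ Sg Δ Pi}, X = cM G H → xa = Γ + Sg → xb = Δ + Pi → le2 H G → Sg ≤ Γ → Pi ≤ Δ →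
    DH n G Γ Δ := by
  induction h with
  | @id n X Γ' Δ' p =>
      intro G H Γ Sg Δ Pi hX ha hb hHG hSg hPi
      obtain ⟨Γ₀, rfl, -⟩ := split_add_cons ha hSg
      obtain ⟨Δ₀, rfl, -⟩ := split_add_cons hb hPi
      exact .id ..
  | @bot n X Γ' Δ' =>
      intro G H Γ Sg Δ Pi hX ha hb hHG hSg hPi
      obtain ⟨Γ₀, rfl, -⟩ := split_add_cons ha hSg
      exact .bot ..
  | @ew n Y Θ Λ d Γ' Δ' h ih =>
      intro G H Γ Sg Δ Pi hX ha hb hHG hSg hPi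
      obtain ⟨G₀, g, H₀, f, rfl, rfl, hY, he, hd₀⟩ :=
        cM_eq_concat_split (le2_dirs hHG).symm hX.symm
      obtain ⟨hle, hw⟩ := le2_concat_inv hHG
      obtain ⟨g₁, g₂, gd⟩ := g; obtain ⟨f₁, f₂, fd⟩ := f
      obtain ⟨rfl, rfl, rfl⟩ : Θ = g₁ + f₁ ∧ Λ = g₂ + f₂ ∧ d = gd := by
        have := he.symm; simp at this; exact ⟨this.1.symm, this.2.1.symm, this.2.2.symm⟩
      exact .ew d Γ Δ (ih hY rfl rfl hle hw.1 hw.2.1)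
  | @impR n X Γ' Δ' A B h ih =>
      intro G H Γ Sg Δ Pi hX ha hb hHG hSg hPi
      obtain ⟨Δ₀, rfl, hW⟩ := split_add_cons hb hPi
      have := ih (G := G) (H := H) (Γ := A ::ₘ Γ) (Sg := Sg) (Δ := B ::ₘ Formula.imp A B ::ₘ Δ₀)
        (Pi := Pi) hX (by rw [ha]; simp [Multiset.cons_add])
        (by rw [hW]; simp [Multiset.cons_add]) hHG (le_cons_of_le hSg)
        (le_cons_of_le hPi)
      exact .impR this
  | @impL n X Γ' Δ' A B h1 h2 ih1 ih2 =>
      intro G H Γ Sg Δ Pi hX ha hb hHG hSg hPi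
      obtain ⟨Γ₀, rfl, hW⟩ := split_add_cons ha hSg
      have c1 := ih1 (Γ := B ::ₘ Formula.imp A B ::ₘ Γ₀) (Sg := Sg) (Δ := Δ) (Pi := Pi) hX
        (by rw [hW]; simp [Multiset.cons_add]) hb hHG
        (le_cons_of_le hSg) hPi
      have c2 := ih2 (Γ := Formula.imp A B ::ₘ Γ₀) (Sg := Sg) (Δ := A ::ₘ Δ) (Pi := Pi) hX
        (by rw [ha]) (by rw [hb]; simp [Multiset.cons_add]) hHG hSg (le_cons_of_le hPi)
      exact .impL c1 c2
  | @boxR1 n Y Γ' Δ' Θ' Λ' A h1 h2 ih1 ih2 =>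
      intro G H Γ Sg Δ Pi hX ha hb hHG hSg hPi
      obtain ⟨G₀, g, H₀, f, rfl, rfl, hY, he, hd₀⟩ :=
        cM_eq_concat_split (le2_dirs hHG).symm hX.symm
      obtain ⟨hle, hw⟩ := le2_concat_inv hHG
      obtain ⟨g₁, g₂, gd⟩ := g; obtain ⟨f₁, f₂, fd⟩ := f
      obtain ⟨hg1, hg2, hgd⟩ : Γ' = g₁ + f₁ ∧ Δ' = g₂ + f₂ ∧ Dir.dn = gd := by
        have := he.symm; simp at this; exact ⟨this.1.symm, this.2.1.symm, this.2.2.symm⟩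
      cases hgd.symm
      obtain ⟨hwa, hwb, hwd⟩ := hw
      cases hwd
      obtain ⟨Δ₀, rfl, hW⟩ := split_add_cons hb hPi
      have hl : G₀.length = H₀.length := (le2_length hle).symm
      -- premise 1
      have e1 : Y ++ [(Γ', A ::ₘ Δ', Dir.dn)]
          = cM (G₀ ++ [(g₁, A ::ₘ g₂, Dir.dn)]) (H₀ ++ [(f₁, f₂, Dir.dn)]) := by
        rw [cM_concat hl, hY, hg1, hg2]; simp [Multiset.cons_add]
      have c1 := ih1 e1 ha (by rw [hW]; simp [Multiset.cons_add])
        (le2_concat hle ⟨hwa, le_cons_of_le hwb, rfl⟩) hSg hPi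
      -- premise 2
      have e2 : Y ++ [(Γ', Δ', Dir.dn), (Θ', Formula.box A ::ₘ Λ', Dir.up)]
          = cM (G₀ ++ [(g₁, g₂, Dir.dn), (Γ, Formula.box A ::ₘ Δ₀, Dir.up)])
              (H₀ ++ [(f₁, f₂, Dir.dn), (Sg, Pi, Dir.up)]) := by
        rw [← app2, ← app2, ← app2, cM_concat (by simp [hl]), cM_concat hl, hY, hg1, hg2,
          ha, hW]
        simp [Multiset.cons_add]
      have c2 := ih2 (Γ := (0 : Multiset Formula)) (Sg := 0) (Δ := {A}) (Pi := 0) e2 (by simp)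
        (by simp)
        (by
          have l1 : le2 (H₀ ++ [(f₁, f₂, Dir.dn)]) (G₀ ++ [(g₁, g₂, Dir.dn)]) :=
            le2_concat hle ⟨hwa, hwb, rfl⟩
          have l2 := le2_concat l1 (x := (Sg, Pi, Dir.up))
            (y := (Γ, Formula.box A ::ₘ Δ₀, Dir.up)) ⟨hSg, hPi, rfl⟩
          rw [app2, app2] at l2; exact l2)
        le_rfl (Multiset.zero_le _)
      exact .boxR1 c1 c2
  | @bboxR1 n Y Γ' Δ' Θ' Λ' A h1 h2 ih1 ih2 =>
      intro G H Γ Sg Δ Pi hX ha hb hHG hSg hPi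
      obtain ⟨G₀, g, H₀, f, rfl, rfl, hY, he, hd₀⟩ :=
        cM_eq_concat_split (le2_dirs hHG).symm hX.symm
      obtain ⟨hle, hw⟩ := le2_concat_inv hHG
      obtain ⟨g₁, g₂, gd⟩ := g; obtain ⟨f₁, f₂, fd⟩ := f
      obtain ⟨hg1, hg2, hgd⟩ : Γ' = g₁ + f₁ ∧ Δ' = g₂ + f₂ ∧ Dir.up = gd := by
        have := he.symm; simp at this; exact ⟨this.1.symm, this.2.1.symm, this.2.2.symm⟩
      cases hgd.symm
      obtain ⟨hwa, hwb, hwd⟩ := hw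
      cases hwd
      obtain ⟨Δ₀, rfl, hW⟩ := split_add_cons hb hPi
      have hl : G₀.length = H₀.length := (le2_length hle).symm
      have e1 : Y ++ [(Γ', A ::ₘ Δ', Dir.up)]
          = cM (G₀ ++ [(g₁, A ::ₘ g₂, Dir.up)]) (H₀ ++ [(f₁, f₂, Dir.up)]) := by
        rw [cM_concat hl, hY, hg1, hg2]; simp [Multiset.cons_add]
      have c1 := ih1 e1 ha (by rw [hW]; simp [Multiset.cons_add])
        (le2_concat hle ⟨hwa, le_cons_of_le hwb, rfl⟩) hSg hPi
      have e2 : Y ++ [(Γ', Δ', Dir.up), (Θ', Formula.bbox A ::ₘ Λ', Dir.dn)]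
          = cM (G₀ ++ [(g₁, g₂, Dir.up), (Γ, Formula.bbox A ::ₘ Δ₀, Dir.dn)])
              (H₀ ++ [(f₁, f₂, Dir.up), (Sg, Pi, Dir.dn)]) := by
        rw [← app2, ← app2, ← app2, cM_concat (by simp [hl]), cM_concat hl, hY, hg1, hg2,
          ha, hW]
        simp [Multiset.cons_add]
      have c2 := ih2 (Γ := (0 : Multiset Formula)) (Sg := 0) (Δ := {A}) (Pi := 0) e2 (by simp)
        (by simp)
        (by
          have l1 : le2 (H₀ ++ [(f₁, f₂, Dir.up)]) (G₀ ++ [(g₁, g₂, Dir.up)]) :=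
            le2_concat hle ⟨hwa, hwb, rfl⟩
          have l2 := le2_concat l1 (x := (Sg, Pi, Dir.dn))
            (y := (Γ, Formula.bbox A ::ₘ Δ₀, Dir.dn)) ⟨hSg, hPi, rfl⟩
          rw [app2, app2] at l2; exact l2)
        le_rfl (Multiset.zero_le _)
      exact .bboxR1 c1 c2
  | @boxR2 n Y Γ' Δ' A hld h ih =>
      intro G H Γ Sg Δ Pi hX ha hb hHG hSg hPi
      obtain ⟨Δ₀, rfl, hW⟩ := split_add_cons hb hPi
      have e : Y ++ [(Γ', Formula.box A ::ₘ Δ', Dir.up)]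
          = cM (G ++ [(Γ, Formula.box A ::ₘ Δ₀, Dir.up)]) (H ++ [(Sg, Pi, Dir.up)]) := by
        rw [cM_concat (le2_length hHG).symm, hX, ha, hW]; simp [Multiset.cons_add]
      have c := ih (Γ := (0 : Multiset Formula)) (Sg := 0) (Δ := {A}) (Pi := 0) e (by simp)
        (by simp)
        (by
          have l2 := le2_concat hHG (x := (Sg, Pi, Dir.up))
            (y := (Γ, Formula.box A ::ₘ Δ₀, Dir.up)) ⟨hSg, hPi, rfl⟩
          exact l2)
        le_rfl (Multiset.zero_le _)
      refine .boxR2 ?_ c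
      have : dirs (cM G H) = dirs G := dirs_cM (le2_dirs hHG).symm
      rw [← lastDir_congr this, ← hX]; exact hld
  | @bboxR2 n Y Γ' Δ' A hld h ih =>
      intro G H Γ Sg Δ Pi hX ha hb hHG hSg hPi
      obtain ⟨Δ₀, rfl, hW⟩ := split_add_cons hb hPi
      have e : Y ++ [(Γ', Formula.bbox A ::ₘ Δ', Dir.dn)]
          = cM (G ++ [(Γ, Formula.bbox A ::ₘ Δ₀, Dir.dn)]) (H ++ [(Sg, Pi, Dir.dn)]) := by
        rw [cM_concat (le2_length hHG).symm, hX, ha, hW]; simp [Multiset.cons_add]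
      have c := ih (Γ := (0 : Multiset Formula)) (Sg := 0) (Δ := {A}) (Pi := 0) e (by simp)
        (by simp)
        (by
          have l2 := le2_concat hHG (x := (Sg, Pi, Dir.dn))
            (y := (Γ, Formula.bbox A ::ₘ Δ₀, Dir.dn)) ⟨hSg, hPi, rfl⟩
          exact l2)
        le_rfl (Multiset.zero_le _)
      refine .bboxR2 ?_ c
      have : dirs (cM G H) = dirs G := dirs_cM (le2_dirs hHG).symm
      rw [← lastDir_congr this, ← hX]; exact hld
  | @boxL1 n Y Γ' Δ' Θ' Λ' A h ih =>
      intro G H Γ Sg Δ Pi hX ha hb hHG hSg hPi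
      obtain ⟨G₀, g, H₀, f, rfl, rfl, hY, he, hd₀⟩ :=
        cM_eq_concat_split (le2_dirs hHG).symm hX.symm
      obtain ⟨hle, hw⟩ := le2_concat_inv hHG
      obtain ⟨g₁, g₂, gd⟩ := g; obtain ⟨f₁, f₂, fd⟩ := f
      obtain ⟨hg1, hg2, hgd⟩ : Formula.box A ::ₘ Γ' = g₁ + f₁ ∧ Δ' = g₂ + f₂ ∧ Dir.up = gd := by
        have := he.symm; simp at this; exact ⟨this.1.symm, this.2.1.symm, this.2.2.symm⟩
      cases hgd.symm
      obtain ⟨g₀, rfl, -⟩ := split_add_cons hg1 hw.1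
      have c := ih (Γ := A ::ₘ Γ) (Sg := Sg) hX (by rw [ha]; simp [Multiset.cons_add]) hb hHG
        (le_cons_of_le hSg) hPi
      exact .boxL1 c
  | @bboxL1 n Y Γ' Δ' Θ' Λ' A h ih =>
      intro G H Γ Sg Δ Pi hX ha hb hHG hSg hPi
      obtain ⟨G₀, g, H₀, f, rfl, rfl, hY, he, hd₀⟩ :=
        cM_eq_concat_split (le2_dirs hHG).symm hX.symm
      obtain ⟨hle, hw⟩ := le2_concat_inv hHG
      obtain ⟨g₁, g₂, gd⟩ := g; obtain ⟨f₁, f₂, fd⟩ := f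
      obtain ⟨hg1, hg2, hgd⟩ : Formula.bbox A ::ₘ Γ' = g₁ + f₁ ∧ Δ' = g₂ + f₂ ∧ Dir.dn = gd := by
        have := he.symm; simp at this; exact ⟨this.1.symm, this.2.1.symm, this.2.2.symm⟩
      cases hgd.symm
      obtain ⟨g₀, rfl, -⟩ := split_add_cons hg1 hw.1
      have c := ih (Γ := A ::ₘ Γ) (Sg := Sg) hX (by rw [ha]; simp [Multiset.cons_add]) hb hHG
        (le_cons_of_le hSg) hPi
      exact .bboxL1 c
  | @boxL2 n Y Γ' Δ' A Θ' Λ' h ih =>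
      intro G H Γ Sg Δ Pi hX ha hb hHG hSg hPi
      obtain ⟨G₀, g, H₀, f, rfl, rfl, hY, he, hd₀⟩ :=
        cM_eq_concat_split (le2_dirs hHG).symm hX.symm
      obtain ⟨hle, hw⟩ := le2_concat_inv hHG
      obtain ⟨g₁, g₂, gd⟩ := g; obtain ⟨f₁, f₂, fd⟩ := f
      obtain ⟨hg1, hg2, hgd⟩ : Γ' = g₁ + f₁ ∧ Δ' = g₂ + f₂ ∧ Dir.dn = gd := by
        have := he.symm; simp at this; exact ⟨this.1.symm, this.2.1.symm, this.2.2.symm⟩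
      cases hgd.symm
      obtain ⟨Γ₀, rfl, -⟩ := split_add_cons ha hSg
      have c := ih (Γ := A ::ₘ g₁) (Sg := f₁) hY (by rw [hg1]; simp [Multiset.cons_add]) hg2 hle
        (le_cons_of_le hw.1) hw.2.1
      exact .boxL2 Γ₀ Δ c
  | @bboxL2 n Y Γ' Δ' A Θ' Λ' h ih =>
      intro G H Γ Sg Δ Pi hX ha hb hHG hSg hPi
      obtain ⟨G₀, g, H₀, f, rfl, rfl, hY, he, hd₀⟩ :=
        cM_eq_concat_split (le2_dirs hHG).symm hX.symm
      obtain ⟨hle, hw⟩ := le2_concat_inv hHG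
      obtain ⟨g₁, g₂, gd⟩ := g; obtain ⟨f₁, f₂, fd⟩ := f
      obtain ⟨hg1, hg2, hgd⟩ : Γ' = g₁ + f₁ ∧ Δ' = g₂ + f₂ ∧ Dir.up = gd := by
        have := he.symm; simp at this; exact ⟨this.1.symm, this.2.1.symm, this.2.2.symm⟩
      cases hgd.symm
      obtain ⟨Γ₀, rfl, -⟩ := split_add_cons ha hSg
      have c := ih (Γ := A ::ₘ g₁) (Sg := f₁) hY (by rw [hg1]; simp [Multiset.cons_add]) hg2 hle
        (le_cons_of_le hw.1) hw.2.1
      exact .bboxL2 Γ₀ Δ c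

theorem DF.ctr {G H Γ Sg Δ Pi} (h : DF (cM G H) (Γ + Sg) (Δ + Pi))
    (hHG : le2 H G) (hSg : Sg ≤ Γ) (hPi : Pi ≤ Δ) : DF G Γ Δ := by
  obtain ⟨n, h⟩ := h; exact ⟨n, h.ctr rfl rfl rfl hHG hSg hPi⟩
/-! ## Cut elimination: statements -/

def sizeF : Formula → ℕ
  | .atom _ => 1
  | .bot => 1
  | .imp a b => sizeF a + sizeF b + 1
  | .box a => sizeF a + 1
  | .dia a => sizeF a + 1
  | .bbox a => sizeF a + 1
  | .bdia a => sizeF a + 1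

/-- SL with the cut component final on both sides. -/
def SL1s (A : Formula) (n m : ℕ) : Prop :=
  ∀ {G H : Ctx} {Γ Δ Sg Pi : Multiset Formula}, dirs G = dirs H →
    DH n G Γ (A ::ₘ Δ) → DH m H (A ::ₘ Sg) Pi → DF (cM G H) (Γ + Sg) (Δ + Pi)

/-- SL with a trailing context after the cut component on the first premise. -/
def SL2s (A : Formula) (n m : ℕ) : Prop :=
  ∀ {G H : Ctx} {Γ Δ Sg Pi : Multiset Formula} {d : Dir} {K : Ctx}
    {a b : Multiset Formula}, dirs G = dirs H →
    DH n (G ++ (Γ, A ::ₘ Δ, d) :: K) a b → DH m H (A ::ₘ Sg) Pi →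
    DF (cM G H ++ (Γ + Sg, Δ + Pi, d) :: K) a b

/-- The formula consumed through the cut component by `boxL1`/`bboxL1`. -/
def consume : Formula → Dir → Option Formula
  | .box B, .up => some B
  | .bbox B, .dn => some B
  | _, _ => none

theorem msac (s : Multiset Formula) (a : Formula) (t : Multiset Formula) :
    s + (a ::ₘ t) = a ::ₘ (s + t) := by
  rw [Multiset.add_cons]

theorem dirs_mid (X : Ctx) (p : Multiset Formula × Multiset Formula × Dir) (K : Ctx) :
    dirs (X ++ p :: K) = dirs X ++ p.2.2 :: dirs K := by simp [dirs]

theorem lastDir_mid {X Y : Ctx} (h : dirs X = dirs Y)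
    {p q : Multiset Formula × Multiset Formula × Dir} (hpq : p.2.2 = q.2.2) (K : Ctx) :
    lastDir (X ++ p :: K) = lastDir (Y ++ q :: K) :=
  lastDir_congr (by rw [dirs_mid, dirs_mid, h, hpq])

theorem DF.ctr_dup {X : Ctx} {a b : Multiset Formula} (h : DF (cM X X) a b) : DF X a b := by
  have h' : DF (cM X X) (a + 0) (b + 0) := by simpa using h
  exact DF.ctr h' (le2_refl X) (Multiset.zero_le _) (Multiset.zero_le _)

theorem singleton_cons (B : Formula) : ({B} : Multiset Formula) = B ::ₘ 0 := rfl

/-- Main auxiliary lemma (SR with plain backup): cutting the left occurrence of `A`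
sitting in a context component followed by a trailing context. -/
theorem SR2 (A : Formula) (V : ℕ)
    (IHsmall : ∀ B, sizeF B < sizeF A → ∀ n' m', SL1s B n' m' ∧ SL2s B n' m')
    (IHsame : ∀ n' m', n' + m' ≤ V → SL1s A n' m' ∧ SL2s A n' m')
    {N m : ℕ} {G H : Ctx} {Γ Δ Sg Pi : Multiset Formula} {d : Dir}
    (h1 : DH N G Γ (A ::ₘ Δ))
    (h2 : DH m H (A ::ₘ Sg) Pi)
    (hd : dirs G = dirs H)
    (hP : ∀ B, consume A d = some B → ∃ nP, nP + m ≤ V ∧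
      DH nP (G ++ [(Γ, A ::ₘ Δ, d)]) 0 {B}) :
    ∀ k, N + k ≤ V → ∀ {H' Sg' Pi' K' a' b'},
      le2 H H' → Sg ≤ Sg' → Pi ≤ Pi' →
      DH k (H' ++ (A ::ₘ Sg', Pi', d) :: K') a' b' →
      DF (cM G H' ++ (Γ + Sg', Δ + Pi', d) :: K') a' b' := by
  intro k
  induction k using Nat.strong_induction_on with
  | _ k IHk =>
  intro hkV H' Sg' Pi' K' a' b' hH' hSg' hPi' h3
  have hdH' : dirs H = dirs H' := le2_dirs hH'
  have hdGH' : dirs G = dirs H' := hd.trans hdH'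
  generalize hX : H' ++ (A ::ₘ Sg', Pi', d) :: K' = X at h3
  cases h3 with
  | id n Y Γ₀ Δ₀ p => exact DF.id ..
  | bot n Y Γ₀ Δ₀ => exact DF.bot ..
  | @ew n Y Θ Λ d₀ Γ₀ Δ₀ hprem =>
      rcases append_cons_eq_concat hX with ⟨rfl, hY, he⟩ | ⟨K₀, rfl, rfl⟩
      · injection he with he1 he2; injection he2 with he2 he3
        subst he1; subst he2; subst he3
        rw [hY] at hprem
        exact DF.ew d a' b' ((IHsame N n (by omega)).1 hdGH' h1 hprem)
      · have hprem' : DH n (H' ++ (A ::ₘ Sg', Pi', d) :: K₀) Θ Λ := hprem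
        have c := IHk n (by omega) (by omega) hH' hSg' hPi' hprem'
        have out := DF.ew (G := cM G H' ++ (Γ + Sg', Δ + Pi', d) :: K₀) d₀ a' b' c
        exact (by simpa using out)
  | @impR n Y Γ₀ Δ₀ E F hprem =>
      subst hX
      exact DF.impR (IHk n (by omega) (by omega) hH' hSg' hPi' hprem)
  | @impL n Y Γ₀ Δ₀ E F hp1 hp2 =>
      subst hX
      exact DF.impL (IHk n (by omega) (by omega) hH' hSg' hPi' hp1)
        (IHk n (by omega) (by omega) hH' hSg' hPi' hp2)
  | @boxR1 n Y Γ₀ Δ₀ Θ Λ B hp1 hp2 =>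
      rcases append_cons_eq_concat hX with ⟨rfl, hY, he⟩ | ⟨K₀, rfl, rfl⟩
      · injection he with he1 he2; injection he2 with he2 he3
        subst he1; subst he2; subst he3
        rw [hY] at hp1 hp2
        have c1 := IHk n (by omega) (by omega) hH' hSg' (le_cons_of_le hPi') hp1
        have c2 := IHk n (by omega) (by omega) hH' hSg' hPi' hp2
        have c1' : DF (cM G H' ++ [(Γ + Sg', B ::ₘ (Δ + Pi'), Dir.dn)]) a'
            (Formula.box B ::ₘ Λ) := by rw [← msac]; exact c1
        exact DF.boxR1 c1' c2
      · have hp1' : DH n (H' ++ (A ::ₘ Sg', Pi', d) :: (K₀ ++ [(Γ₀, B ::ₘ Δ₀, Dir.dn)]))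
            a' (Formula.box B ::ₘ Λ) := by simpa using hp1
        have hp2' : DH n (H' ++ (A ::ₘ Sg', Pi', d) ::
            (K₀ ++ [(Γ₀, Δ₀, Dir.dn), (a', Formula.box B ::ₘ Λ, Dir.up)])) 0 {B} := by
          simpa using hp2
        have c1 := IHk n (by omega) (by omega) hH' hSg' hPi' hp1'
        have c2 := IHk n (by omega) (by omega) hH' hSg' hPi' hp2'
        have c1' : DF ((cM G H' ++ (Γ + Sg', Δ + Pi', d) :: K₀) ++ [(Γ₀, B ::ₘ Δ₀, Dir.dn)])
            a' (Formula.box B ::ₘ Λ) := by simpa using c1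
        have c2' : DF ((cM G H' ++ (Γ + Sg', Δ + Pi', d) :: K₀) ++
            [(Γ₀, Δ₀, Dir.dn), (a', Formula.box B ::ₘ Λ, Dir.up)]) 0 {B} := by simpa using c2
        have out := DF.boxR1 c1' c2'
        exact (by simpa using out)
  | @bboxR1 n Y Γ₀ Δ₀ Θ Λ B hp1 hp2 =>
      rcases append_cons_eq_concat hX with ⟨rfl, hY, he⟩ | ⟨K₀, rfl, rfl⟩
      · injection he with he1 he2; injection he2 with he2 he3
        subst he1; subst he2; subst he3
        rw [hY] at hp1 hp2
        have c1 := IHk n (by omega) (by omega) hH' hSg' (le_cons_of_le hPi') hp1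
        have c2 := IHk n (by omega) (by omega) hH' hSg' hPi' hp2
        have c1' : DF (cM G H' ++ [(Γ + Sg', B ::ₘ (Δ + Pi'), Dir.up)]) a'
            (Formula.bbox B ::ₘ Λ) := by rw [← msac]; exact c1
        exact DF.bboxR1 c1' c2
      · have hp1' : DH n (H' ++ (A ::ₘ Sg', Pi', d) :: (K₀ ++ [(Γ₀, B ::ₘ Δ₀, Dir.up)]))
            a' (Formula.bbox B ::ₘ Λ) := by simpa using hp1
        have hp2' : DH n (H' ++ (A ::ₘ Sg', Pi', d) ::
            (K₀ ++ [(Γ₀, Δ₀, Dir.up), (a', Formula.bbox B ::ₘ Λ, Dir.dn)])) 0 {B} := by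
          simpa using hp2
        have c1 := IHk n (by omega) (by omega) hH' hSg' hPi' hp1'
        have c2 := IHk n (by omega) (by omega) hH' hSg' hPi' hp2'
        have c1' : DF ((cM G H' ++ (Γ + Sg', Δ + Pi', d) :: K₀) ++ [(Γ₀, B ::ₘ Δ₀, Dir.up)])
            a' (Formula.bbox B ::ₘ Λ) := by simpa using c1
        have c2' : DF ((cM G H' ++ (Γ + Sg', Δ + Pi', d) :: K₀) ++
            [(Γ₀, Δ₀, Dir.up), (a', Formula.bbox B ::ₘ Λ, Dir.dn)]) 0 {B} := by simpa using c2
        have out := DF.bboxR1 c1' c2'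
        exact (by simpa using out)
  | @boxR2 n Y Γ₀ Δ₀ B hlast hprem =>
      subst hX
      have hprem' : DH n (H' ++ (A ::ₘ Sg', Pi', d) ::
          (K' ++ [(a', Formula.box B ::ₘ Δ₀, Dir.up)])) 0 {B} := by simpa using hprem
      have c := IHk n (by omega) (by omega) hH' hSg' hPi' hprem'
      have c' : DF ((cM G H' ++ (Γ + Sg', Δ + Pi', d) :: K') ++
          [(a', Formula.box B ::ₘ Δ₀, Dir.up)]) 0 {B} := by simpa using c
      refine DF.boxR2 ?_ c'
      rw [lastDir_mid ((dirs_cM hdGH').trans hdGH') (p := (Γ + Sg', Δ + Pi', d))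
        (q := (A ::ₘ Sg', Pi', d)) rfl K']
      exact hlast
  | @bboxR2 n Y Γ₀ Δ₀ B hlast hprem =>
      subst hX
      have hprem' : DH n (H' ++ (A ::ₘ Sg', Pi', d) ::
          (K' ++ [(a', Formula.bbox B ::ₘ Δ₀, Dir.dn)])) 0 {B} := by simpa using hprem
      have c := IHk n (by omega) (by omega) hH' hSg' hPi' hprem'
      have c' : DF ((cM G H' ++ (Γ + Sg', Δ + Pi', d) :: K') ++
          [(a', Formula.bbox B ::ₘ Δ₀, Dir.dn)]) 0 {B} := by simpa using c
      refine DF.bboxR2 ?_ c'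
      rw [lastDir_mid ((dirs_cM hdGH').trans hdGH') (p := (Γ + Sg', Δ + Pi', d))
        (q := (A ::ₘ Sg', Pi', d)) rfl K']
      exact hlast
  | @boxL1 n Y Γ₀ Δ₀ Θ Λ B hprem =>
      rcases append_cons_eq_concat hX with ⟨rfl, hY, he⟩ | ⟨K₀, rfl, rfl⟩
      · injection he with he1 he2; injection he2 with he2 he3
        subst he2; subst he3
        rw [hY, ← he1] at hprem
        rcases Multiset.cons_eq_cons.1 he1 with ⟨hAB, -⟩ | ⟨-, cs, hcs1, -⟩
        · -- principal: A = □B is consumed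
          obtain ⟨nP, hnP, P⟩ := hP B (by rw [hAB]; rfl)
          have C := IHk n (by omega) (by omega) hH' hSg' hPi' hprem
          have P' := (IHsame nP m hnP).2 (K := []) hd P h2
          have P'' := P'.wk (G' := cM G H' ++ [(Γ + Sg', Δ + Pi', Dir.up)])
            (le2_concat (le2_cM_mono hd hH')
              ⟨add_le_add_right hSg' _, add_le_add_right hPi' _, rfl⟩) le_rfl le_rfl
          obtain ⟨n1, dP⟩ := P''
          obtain ⟨n2, dC⟩ := C
          rw [singleton_cons] at dP
          have hBsize : sizeF B < sizeF A := by rw [hAB]; simp [sizeF]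
          have cut := (IHsmall B hBsize n1 n2).1 rfl dP dC
          rw [zero_add, zero_add] at cut
          exact DF.ctr_dup cut
        · -- non-principal: □B comes from Sg'
          have c := IHk n (by omega) (by omega) hH' hSg' hPi' hprem
          have e : Γ + Sg' = Formula.box B ::ₘ (Γ + cs) := by rw [hcs1, msac]
          rw [e] at c ⊢
          exact DF.boxL1 c
      · have hprem' : DH n (H' ++ (A ::ₘ Sg', Pi', d) ::
            (K₀ ++ [(Formula.box B ::ₘ Γ₀, Δ₀, Dir.up)])) (B ::ₘ a') b' := by simpa using hprem
        have c := IHk n (by omega) (by omega) hH' hSg' hPi' hprem'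
        have c' : DF ((cM G H' ++ (Γ + Sg', Δ + Pi', d) :: K₀) ++
            [(Formula.box B ::ₘ Γ₀, Δ₀, Dir.up)]) (B ::ₘ a') b' := by simpa using c
        have out := DF.boxL1 c'
        exact (by simpa using out)
  | @bboxL1 n Y Γ₀ Δ₀ Θ Λ B hprem =>
      rcases append_cons_eq_concat hX with ⟨rfl, hY, he⟩ | ⟨K₀, rfl, rfl⟩
      · injection he with he1 he2; injection he2 with he2 he3
        subst he2; subst he3
        rw [hY, ← he1] at hprem
        rcases Multiset.cons_eq_cons.1 he1 with ⟨hAB, -⟩ | ⟨-, cs, hcs1, -⟩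
        · obtain ⟨nP, hnP, P⟩ := hP B (by rw [hAB]; rfl)
          have C := IHk n (by omega) (by omega) hH' hSg' hPi' hprem
          have P' := (IHsame nP m hnP).2 (K := []) hd P h2
          have P'' := P'.wk (G' := cM G H' ++ [(Γ + Sg', Δ + Pi', Dir.dn)])
            (le2_concat (le2_cM_mono hd hH')
              ⟨add_le_add_right hSg' _, add_le_add_right hPi' _, rfl⟩) le_rfl le_rfl
          obtain ⟨n1, dP⟩ := P''
          obtain ⟨n2, dC⟩ := C
          rw [singleton_cons] at dP
          have hBsize : sizeF B < sizeF A := by rw [hAB]; simp [sizeF]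
          have cut := (IHsmall B hBsize n1 n2).1 rfl dP dC
          rw [zero_add, zero_add] at cut
          exact DF.ctr_dup cut
        · have c := IHk n (by omega) (by omega) hH' hSg' hPi' hprem
          have e : Γ + Sg' = Formula.bbox B ::ₘ (Γ + cs) := by rw [hcs1, msac]
          rw [e] at c ⊢
          exact DF.bboxL1 c
      · have hprem' : DH n (H' ++ (A ::ₘ Sg', Pi', d) ::
            (K₀ ++ [(Formula.bbox B ::ₘ Γ₀, Δ₀, Dir.dn)])) (B ::ₘ a') b' := by simpa using hprem
        have c := IHk n (by omega) (by omega) hH' hSg' hPi' hprem'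
        have c' : DF ((cM G H' ++ (Γ + Sg', Δ + Pi', d) :: K₀) ++
            [(Formula.bbox B ::ₘ Γ₀, Δ₀, Dir.dn)]) (B ::ₘ a') b' := by simpa using c
        have out := DF.bboxL1 c'
        exact (by simpa using out)
  | @boxL2 n Y Γ₀ Δ₀ B Θ Λ hprem =>
      rcases append_cons_eq_concat hX with ⟨rfl, hY, he⟩ | ⟨K₀, rfl, rfl⟩
      · injection he with he1 he2; injection he2 with he2 he3
        subst he1; subst he2; subst he3
        rw [hY, Multiset.cons_swap] at hprem
        have hcut := (IHsame N n (by omega)).1 hdGH' h1 hprem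
        have hcut' : DF (cM G H') (B ::ₘ (Γ + Sg')) (Δ + Pi') := by
          rw [← msac]; exact hcut
        exact DF.boxL2 (G := cM G H') (Γ := Γ + Sg') (Δ := Δ + Pi') Θ b' hcut'
      · have hprem' : DH n (H' ++ (A ::ₘ Sg', Pi', d) :: K₀) (B ::ₘ Γ₀) Δ₀ := hprem
        have c := IHk n (by omega) (by omega) hH' hSg' hPi' hprem'
        have out := DF.boxL2 (G := cM G H' ++ (Γ + Sg', Δ + Pi', d) :: K₀) Θ b' c
        exact (by simpa using out)
  | @bboxL2 n Y Γ₀ Δ₀ B Θ Λ hprem =>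
      rcases append_cons_eq_concat hX with ⟨rfl, hY, he⟩ | ⟨K₀, rfl, rfl⟩
      · injection he with he1 he2; injection he2 with he2 he3
        subst he1; subst he2; subst he3
        rw [hY, Multiset.cons_swap] at hprem
        have hcut := (IHsame N n (by omega)).1 hdGH' h1 hprem
        have hcut' : DF (cM G H') (B ::ₘ (Γ + Sg')) (Δ + Pi') := by
          rw [← msac]; exact hcut
        exact DF.bboxL2 (G := cM G H') (Γ := Γ + Sg') (Δ := Δ + Pi') Θ b' hcut'
      · have hprem' : DH n (H' ++ (A ::ₘ Sg', Pi', d) :: K₀) (B ::ₘ Γ₀) Δ₀ := hprem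
        have c := IHk n (by omega) (by omega) hH' hSg' hPi' hprem'
        have out := DF.bboxL2 (G := cM G H' ++ (Γ + Sg', Δ + Pi', d) :: K₀) Θ b' c
        exact (by simpa using out)
/-! ## The principal block: case analysis on the second premise -/

theorem SL1R (A : Formula) (V N m : ℕ)
    (IHsmall : ∀ B, sizeF B < sizeF A → ∀ n' m', SL1s B n' m' ∧ SL2s B n' m')
    (IHsame : ∀ n' m', n' + m' ≤ V → SL1s A n' m' ∧ SL2s A n' m')
    {G : Ctx} {Γ Δ : Multiset Formula}
    (h1 : DH N G Γ (A ::ₘ Δ))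
    (hNm : N + m ≤ V + 1)
    (hshape : (∃ E F, A = .imp E F) ∨ (∃ B, A = .box B) ∨ (∃ B, A = .bbox B))
    (hP : ∀ (dd : Dir) B, consume A dd = some B →
      ∃ nP, nP + m ≤ V ∧ DH nP (G ++ [(Γ, A ::ₘ Δ, dd)]) 0 {B})
    (Himp : ∀ E F, A = .imp E F → ∀ m₀, m₀ + 1 ≤ m → ∀ {H Sg Pi : _}, dirs G = dirs H →
      DH m H (A ::ₘ Sg) Pi →
      DH m₀ H (F ::ₘ A ::ₘ Sg) Pi → DH m₀ H (A ::ₘ Sg) (E ::ₘ Pi) →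
      DF (cM G H) (Γ + Sg) (Δ + Pi))
    (Hbox : ∀ B, A = .box B → ∀ m₀, m₀ + 1 ≤ m → ∀ {H₀ f₁ f₂ Sg Pi : _},
      dirs G = dirs (H₀ ++ [(f₁, f₂, Dir.dn)]) →
      DH m (H₀ ++ [(f₁, f₂, Dir.dn)]) (A ::ₘ Sg) Pi →
      DH m₀ H₀ (B ::ₘ f₁) f₂ →
      DF (cM G (H₀ ++ [(f₁, f₂, Dir.dn)])) (Γ + Sg) (Δ + Pi))
    (Hbbox : ∀ B, A = .bbox B → ∀ m₀, m₀ + 1 ≤ m → ∀ {H₀ f₁ f₂ Sg Pi : _},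
      dirs G = dirs (H₀ ++ [(f₁, f₂, Dir.up)]) →
      DH m (H₀ ++ [(f₁, f₂, Dir.up)]) (A ::ₘ Sg) Pi →
      DH m₀ H₀ (B ::ₘ f₁) f₂ →
      DF (cM G (H₀ ++ [(f₁, f₂, Dir.up)])) (Γ + Sg) (Δ + Pi)) :
    ∀ {H : Ctx} {Sg Pi : Multiset Formula}, dirs G = dirs H → DH m H (A ::ₘ Sg) Pi →
      DF (cM G H) (Γ + Sg) (Δ + Pi) := by
  have hAa : ∀ p, A ≠ .atom p := fun p h => by
    rcases hshape with ⟨E, F, hA⟩ | ⟨B, hA⟩ | ⟨B, hA⟩ <;> rw [hA] at h <;>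
      exact Formula.noConfusion h
  have hAb : A ≠ .bot := fun h => by
    rcases hshape with ⟨E, F, hA⟩ | ⟨B, hA⟩ | ⟨B, hA⟩ <;> rw [hA] at h <;>
      exact Formula.noConfusion h
  intro H Sg Pi hd h2
  have h2full := h2
  generalize hS : A ::ₘ Sg = S at h2
  cases h2 with
  | id m₀ Y Γc Δc p =>
      rcases Multiset.cons_eq_cons.1 hS with ⟨hAp, -⟩ | ⟨-, cs, hSg, -⟩
      · exact absurd hAp (hAa p)
      · subst hSg
        have e1 : Γ + (Formula.atom p ::ₘ cs) = Formula.atom p ::ₘ (Γ + cs) := msac ..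
        have e2 : Δ + (Formula.atom p ::ₘ Δc) = Formula.atom p ::ₘ (Δ + Δc) := msac ..
        rw [e1, e2]
        exact DF.id ..
  | bot m₀ Y Γc Δc =>
      rcases Multiset.cons_eq_cons.1 hS with ⟨hAp, -⟩ | ⟨-, cs, hSg, -⟩
      · exact absurd hAp hAb
      · subst hSg
        rw [show Γ + (Formula.bot ::ₘ cs) = Formula.bot ::ₘ (Γ + cs) from msac ..]
        exact DF.bot ..
  | @ew m₀ H₀ Θ Λ δ Γc Δc hq =>
      have hdd : dirs G = dirs H₀ ++ [δ] := by rw [hd]; simp [dirs]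
      obtain ⟨G₀, e₁, e₂, rfl, hd₀⟩ := dirs_concat_split hdd
      have hl : G₀.length = H₀.length := by
        have := congrArg List.length hd₀; simpa [dirs] using this
      have w : DF (cM G₀ H₀) (e₁ + Θ) (e₂ + Λ) :=
        DF.wk ⟨m₀, hq⟩ (le2_cM_right hd₀) (Multiset.le_add_left _ _)
          (Multiset.le_add_left _ _)
      have out := DF.ew (G := cM G₀ H₀) δ (Γ + Sg) (Δ + Pi) w
      rw [cM_concat hl]
      exact out
  | @impR m₀ Y Γc Δc E F hq =>
      rw [← hS] at hq
      have e1 : E ::ₘ A ::ₘ Sg = A ::ₘ E ::ₘ Sg := Multiset.cons_swap ..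
      rw [e1] at hq
      have c := (IHsame N m₀ (by omega)).1 hd h1 hq
      simp only [msac] at c ⊢
      exact DF.impR c
  | @impL m₀ Y Γc Δc E F hq1 hq2 =>
      rcases Multiset.cons_eq_cons.1 hS with ⟨hAE, hSg⟩ | ⟨-, cs, hSg, hΓc⟩
      · rw [← hS] at hq1 hq2
        exact Himp E F hAE m₀ (by omega) hd h2full hq1 hq2
      · subst hΓc; subst hSg
        have e1 : F ::ₘ Formula.imp E F ::ₘ A ::ₘ cs = A ::ₘ F ::ₘ Formula.imp E F ::ₘ cs := by
          rw [Multiset.cons_swap (Formula.imp E F) A, Multiset.cons_swap F A]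
        have e2 : Formula.imp E F ::ₘ A ::ₘ cs = A ::ₘ Formula.imp E F ::ₘ cs :=
          Multiset.cons_swap ..
        rw [e1] at hq1; rw [e2] at hq2
        have c1 := (IHsame N m₀ (by omega)).1 hd h1 hq1
        have c2 := (IHsame N m₀ (by omega)).1 hd h1 hq2
        simp only [msac] at c1 c2 ⊢
        exact DF.impL c1 c2
  | @boxR1 m₀ H₀ f₁ f₂ Θc Pi₁ D hq1 hq2 =>
      rw [← hS] at hq1 hq2
      have hd1 : dirs G = dirs (H₀ ++ [(f₁, D ::ₘ f₂, Dir.dn)]) := by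
        rw [hd]; simp [dirs]
      have c1 := (IHsame N m₀ (by omega)).1 hd1 h1 hq1
      rw [← app2] at hq2
      have c2 := SR2 A V IHsmall IHsame h1 h2full hd (hP Dir.up) m₀ (by omega)
        (le2_refl _) le_rfl le_rfl hq2
      -- split G
      have hdd : dirs G = dirs H₀ ++ [Dir.dn] := by rw [hd]; simp [dirs]
      obtain ⟨G₀, e₁, e₂, rfl, hd₀⟩ := dirs_concat_split hdd
      have hl : G₀.length = H₀.length := by
        have := congrArg List.length hd₀; simpa [dirs] using this
      rw [cM_concat hl] at c1 c2 ⊢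
      simp only [msac, Multiset.cons_add] at c1 c2 ⊢
      have out := DF.boxR1 c1 (by simpa using c2)
      exact out
  | @bboxR1 m₀ H₀ f₁ f₂ Θc Pi₁ D hq1 hq2 =>
      rw [← hS] at hq1 hq2
      have hd1 : dirs G = dirs (H₀ ++ [(f₁, D ::ₘ f₂, Dir.up)]) := by
        rw [hd]; simp [dirs]
      have c1 := (IHsame N m₀ (by omega)).1 hd1 h1 hq1
      rw [← app2] at hq2
      have c2 := SR2 A V IHsmall IHsame h1 h2full hd (hP Dir.dn) m₀ (by omega)
        (le2_refl _) le_rfl le_rfl hq2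
      have hdd : dirs G = dirs H₀ ++ [Dir.up] := by rw [hd]; simp [dirs]
      obtain ⟨G₀, e₁, e₂, rfl, hd₀⟩ := dirs_concat_split hdd
      have hl : G₀.length = H₀.length := by
        have := congrArg List.length hd₀; simpa [dirs] using this
      rw [cM_concat hl] at c1 c2 ⊢
      simp only [msac, Multiset.cons_add] at c1 c2 ⊢
      have out := DF.bboxR1 c1 (by simpa using c2)
      exact out
  | @boxR2 m₀ Y Γc Pi₁ D hlast hq =>
      rw [← hS] at hq
      have c := SR2 A V IHsmall IHsame h1 h2full hd (hP Dir.up) m₀ (by omega)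
        (le2_refl _) le_rfl le_rfl hq
      simp only [msac] at c ⊢
      refine DF.boxR2 ?_ c
      rw [lastDir_congr ((dirs_cM hd).trans hd)]
      exact hlast
  | @bboxR2 m₀ Y Γc Pi₁ D hlast hq =>
      rw [← hS] at hq
      have c := SR2 A V IHsmall IHsame h1 h2full hd (hP Dir.dn) m₀ (by omega)
        (le2_refl _) le_rfl le_rfl hq
      simp only [msac] at c ⊢
      refine DF.bboxR2 ?_ c
      rw [lastDir_congr ((dirs_cM hd).trans hd)]
      exact hlast
  | @boxL1 m₀ H₀ f₁ f₂ Θc Λc D hq =>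
      rw [← hS] at hq
      have e1 : D ::ₘ A ::ₘ Sg = A ::ₘ D ::ₘ Sg := Multiset.cons_swap ..
      rw [e1] at hq
      have c := (IHsame N m₀ (by omega)).1 hd h1 hq
      have hdd : dirs G = dirs H₀ ++ [Dir.up] := by rw [hd]; simp [dirs]
      obtain ⟨G₀, e₁', e₂', rfl, hd₀⟩ := dirs_concat_split hdd
      have hl : G₀.length = H₀.length := by
        have := congrArg List.length hd₀; simpa [dirs] using this
      rw [cM_concat hl] at c ⊢
      simp only [msac, Multiset.cons_add] at c ⊢
      exact DF.boxL1 c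
  | @bboxL1 m₀ H₀ f₁ f₂ Θc Λc D hq =>
      rw [← hS] at hq
      have e1 : D ::ₘ A ::ₘ Sg = A ::ₘ D ::ₘ Sg := Multiset.cons_swap ..
      rw [e1] at hq
      have c := (IHsame N m₀ (by omega)).1 hd h1 hq
      have hdd : dirs G = dirs H₀ ++ [Dir.dn] := by rw [hd]; simp [dirs]
      obtain ⟨G₀, e₁', e₂', rfl, hd₀⟩ := dirs_concat_split hdd
      have hl : G₀.length = H₀.length := by
        have := congrArg List.length hd₀; simpa [dirs] using this
      rw [cM_concat hl] at c ⊢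
      simp only [msac, Multiset.cons_add] at c ⊢
      exact DF.bboxL1 c
  | @boxL2 m₀ H₀ f₁ f₂ D Θc Λc hq =>
      rcases Multiset.cons_eq_cons.1 hS with ⟨hAD, -⟩ | ⟨-, cs, hSg, -⟩
      · exact Hbox D hAD m₀ (by omega) hd h2full hq
      · subst hSg
        have hdd : dirs G = dirs H₀ ++ [Dir.dn] := by rw [hd]; simp [dirs]
        obtain ⟨G₀, e₁, e₂, rfl, hd₀⟩ := dirs_concat_split hdd
        have hl : G₀.length = H₀.length := by
          have := congrArg List.length hd₀; simpa [dirs] using this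
        have w : DF (cM G₀ H₀) (D ::ₘ (e₁ + f₁)) (e₂ + f₂) :=
          DF.wk ⟨m₀, hq⟩ (le2_cM_right hd₀)
            (Multiset.cons_le_cons D (Multiset.le_add_left _ _)) (Multiset.le_add_left _ _)
        have out := DF.boxL2 (G := cM G₀ H₀) (Γ + cs) (Δ + Pi) w
        rw [cM_concat hl]
        simp only [msac, Multiset.cons_add] at out ⊢
        exact out
  | @bboxL2 m₀ H₀ f₁ f₂ D Θc Λc hq =>
      rcases Multiset.cons_eq_cons.1 hS with ⟨hAD, -⟩ | ⟨-, cs, hSg, -⟩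
      · exact Hbbox D hAD m₀ (by omega) hd h2full hq
      · subst hSg
        have hdd : dirs G = dirs H₀ ++ [Dir.up] := by rw [hd]; simp [dirs]
        obtain ⟨G₀, e₁, e₂, rfl, hd₀⟩ := dirs_concat_split hdd
        have hl : G₀.length = H₀.length := by
          have := congrArg List.length hd₀; simpa [dirs] using this
        have w : DF (cM G₀ H₀) (D ::ₘ (e₁ + f₁)) (e₂ + f₂) :=
          DF.wk ⟨m₀, hq⟩ (le2_cM_right hd₀)
            (Multiset.cons_le_cons D (Multiset.le_add_left _ _)) (Multiset.le_add_left _ _)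
        have out := DF.bboxL2 (G := cM G₀ H₀) (Γ + cs) (Δ + Pi) w
        rw [cM_concat hl]
        simp only [msac, Multiset.cons_add] at out ⊢
        exact out
/-! ## The SL2 step: pushing the cut into the first premise along its trailing context -/

theorem dirs_concat_inv {G H : Ctx} {x y} (h : dirs (G ++ [x]) = dirs (H ++ [y])) :
    dirs G = dirs H ∧ x.2.2 = y.2.2 := by
  have h' : dirs G ++ [x.2.2] = dirs H ++ [y.2.2] := by simpa [dirs] using h
  exact concat_inj h'

theorem SL2R (A : Formula) (n m : ℕ)
    (IH : ∀ n₀, n₀ < n → SL1s A n₀ m ∧ SL2s A n₀ m) :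
    SL2s A n m := by
  intro G H Γ Δ Sg Pi d K a b hd h1 h2
  generalize hX : G ++ (Γ, A ::ₘ Δ, d) :: K = X at h1
  cases h1 with
  | id n₀ Y Γ₁ Δ₁ p => exact DF.id ..
  | bot n₀ Y Γ₁ Δ₁ => exact DF.bot ..
  | @ew n₀ Y Θ Λ δ Γc Δc hq =>
      rcases append_cons_eq_concat hX with ⟨rfl, hY, he⟩ | ⟨K₀, rfl, rfl⟩
      · injection he with he1 he2; injection he2 with he2 he3
        subst he1; subst he2; subst he3
        rw [hY] at hq
        exact DF.ew d a b ((IH n₀ (by omega)).1 hd hq h2)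
      · have hq' : DH n₀ (G ++ (Γ, A ::ₘ Δ, d) :: K₀) Θ Λ := hq
        have c := (IH n₀ (by omega)).2 hd hq' h2
        have out := DF.ew (G := cM G H ++ (Γ + Sg, Δ + Pi, d) :: K₀) δ a b c
        exact (by simpa using out)
  | @impR n₀ Y Γc Δc E F hq =>
      subst hX
      exact DF.impR ((IH n₀ (by omega)).2 hd hq h2)
  | @impL n₀ Y Γc Δc E F hq1 hq2 =>
      subst hX
      exact DF.impL ((IH n₀ (by omega)).2 hd hq1 h2) ((IH n₀ (by omega)).2 hd hq2 h2)
  | @boxR1 n₀ Y Γc Δc Θc Λc D hq1 hq2 =>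
      rcases append_cons_eq_concat hX with ⟨rfl, hY, he⟩ | ⟨K₀, rfl, rfl⟩
      · injection he with he1 he2; injection he2 with he2 he3
        subst he1; subst he2; subst he3
        rw [hY] at hq1 hq2
        have e1 : D ::ₘ A ::ₘ Δ = A ::ₘ D ::ₘ Δ := Multiset.cons_swap ..
        rw [e1] at hq1
        have c1 := (IH n₀ (by omega)).2 hd hq1 h2
        have c2 := (IH n₀ (by omega)).2 hd hq2 h2
        simp only [msac, Multiset.cons_add] at c1 c2 ⊢
        exact DF.boxR1 c1 c2
      · have hq1' : DH n₀ (G ++ (Γ, A ::ₘ Δ, d) :: (K₀ ++ [(Γc, D ::ₘ Δc, Dir.dn)]))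
            a (Formula.box D ::ₘ Λc) := by simpa using hq1
        have hq2' : DH n₀ (G ++ (Γ, A ::ₘ Δ, d) ::
            (K₀ ++ [(Γc, Δc, Dir.dn), (a, Formula.box D ::ₘ Λc, Dir.up)])) 0 {D} := by
          simpa using hq2
        have c1 := (IH n₀ (by omega)).2 hd hq1' h2
        have c2 := (IH n₀ (by omega)).2 hd hq2' h2
        have c1' : DF ((cM G H ++ (Γ + Sg, Δ + Pi, d) :: K₀) ++ [(Γc, D ::ₘ Δc, Dir.dn)])
            a (Formula.box D ::ₘ Λc) := by simpa using c1
        have c2' : DF ((cM G H ++ (Γ + Sg, Δ + Pi, d) :: K₀) ++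
            [(Γc, Δc, Dir.dn), (a, Formula.box D ::ₘ Λc, Dir.up)]) 0 {D} := by simpa using c2
        have out := DF.boxR1 c1' c2'
        exact (by simpa using out)
  | @bboxR1 n₀ Y Γc Δc Θc Λc D hq1 hq2 =>
      rcases append_cons_eq_concat hX with ⟨rfl, hY, he⟩ | ⟨K₀, rfl, rfl⟩
      · injection he with he1 he2; injection he2 with he2 he3
        subst he1; subst he2; subst he3
        rw [hY] at hq1 hq2
        have e1 : D ::ₘ A ::ₘ Δ = A ::ₘ D ::ₘ Δ := Multiset.cons_swap ..
        rw [e1] at hq1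
        have c1 := (IH n₀ (by omega)).2 hd hq1 h2
        have c2 := (IH n₀ (by omega)).2 hd hq2 h2
        simp only [msac, Multiset.cons_add] at c1 c2 ⊢
        exact DF.bboxR1 c1 c2
      · have hq1' : DH n₀ (G ++ (Γ, A ::ₘ Δ, d) :: (K₀ ++ [(Γc, D ::ₘ Δc, Dir.up)]))
            a (Formula.bbox D ::ₘ Λc) := by simpa using hq1
        have hq2' : DH n₀ (G ++ (Γ, A ::ₘ Δ, d) ::
            (K₀ ++ [(Γc, Δc, Dir.up), (a, Formula.bbox D ::ₘ Λc, Dir.dn)])) 0 {D} := by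
          simpa using hq2
        have c1 := (IH n₀ (by omega)).2 hd hq1' h2
        have c2 := (IH n₀ (by omega)).2 hd hq2' h2
        have c1' : DF ((cM G H ++ (Γ + Sg, Δ + Pi, d) :: K₀) ++ [(Γc, D ::ₘ Δc, Dir.up)])
            a (Formula.bbox D ::ₘ Λc) := by simpa using c1
        have c2' : DF ((cM G H ++ (Γ + Sg, Δ + Pi, d) :: K₀) ++
            [(Γc, Δc, Dir.up), (a, Formula.bbox D ::ₘ Λc, Dir.dn)]) 0 {D} := by simpa using c2
        have out := DF.bboxR1 c1' c2'
        exact (by simpa using out)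
  | @boxR2 n₀ Y Γc Δc D hlast hq =>
      subst hX
      have hq' : DH n₀ (G ++ (Γ, A ::ₘ Δ, d) ::
          (K ++ [(a, Formula.box D ::ₘ Δc, Dir.up)])) 0 {D} := by simpa using hq
      have c := (IH n₀ (by omega)).2 hd hq' h2
      have c' : DF ((cM G H ++ (Γ + Sg, Δ + Pi, d) :: K) ++
          [(a, Formula.box D ::ₘ Δc, Dir.up)]) 0 {D} := by simpa using c
      refine DF.boxR2 ?_ c'
      rw [lastDir_mid (dirs_cM hd) (p := (Γ + Sg, Δ + Pi, d)) (q := (Γ, A ::ₘ Δ, d)) rfl K]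
      exact hlast
  | @bboxR2 n₀ Y Γc Δc D hlast hq =>
      subst hX
      have hq' : DH n₀ (G ++ (Γ, A ::ₘ Δ, d) ::
          (K ++ [(a, Formula.bbox D ::ₘ Δc, Dir.dn)])) 0 {D} := by simpa using hq
      have c := (IH n₀ (by omega)).2 hd hq' h2
      have c' : DF ((cM G H ++ (Γ + Sg, Δ + Pi, d) :: K) ++
          [(a, Formula.bbox D ::ₘ Δc, Dir.dn)]) 0 {D} := by simpa using c
      refine DF.bboxR2 ?_ c'
      rw [lastDir_mid (dirs_cM hd) (p := (Γ + Sg, Δ + Pi, d)) (q := (Γ, A ::ₘ Δ, d)) rfl K]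
      exact hlast
  | @boxL1 n₀ Y Γc Δc Θc Λc D hq =>
      rcases append_cons_eq_concat hX with ⟨rfl, hY, he⟩ | ⟨K₀, rfl, rfl⟩
      · injection he with he1 he2; injection he2 with he2 he3
        subst he2; subst he3
        rw [hY, ← he1] at hq
        have c := (IH n₀ (by omega)).2 hd hq h2
        have e : Γ + Sg = Formula.box D ::ₘ (Γc + Sg) := by
          rw [he1, Multiset.cons_add]
        rw [e] at c ⊢
        exact DF.boxL1 c
      · have hq' : DH n₀ (G ++ (Γ, A ::ₘ Δ, d) ::
            (K₀ ++ [(Formula.box D ::ₘ Γc, Δc, Dir.up)])) (D ::ₘ a) b := by simpa using hq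
        have c := (IH n₀ (by omega)).2 hd hq' h2
        have c' : DF ((cM G H ++ (Γ + Sg, Δ + Pi, d) :: K₀) ++
            [(Formula.box D ::ₘ Γc, Δc, Dir.up)]) (D ::ₘ a) b := by simpa using c
        have out := DF.boxL1 c'
        exact (by simpa using out)
  | @bboxL1 n₀ Y Γc Δc Θc Λc D hq =>
      rcases append_cons_eq_concat hX with ⟨rfl, hY, he⟩ | ⟨K₀, rfl, rfl⟩
      · injection he with he1 he2; injection he2 with he2 he3
        subst he2; subst he3
        rw [hY, ← he1] at hq
        have c := (IH n₀ (by omega)).2 hd hq h2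
        have e : Γ + Sg = Formula.bbox D ::ₘ (Γc + Sg) := by
          rw [he1, Multiset.cons_add]
        rw [e] at c ⊢
        exact DF.bboxL1 c
      · have hq' : DH n₀ (G ++ (Γ, A ::ₘ Δ, d) ::
            (K₀ ++ [(Formula.bbox D ::ₘ Γc, Δc, Dir.dn)])) (D ::ₘ a) b := by simpa using hq
        have c := (IH n₀ (by omega)).2 hd hq' h2
        have c' : DF ((cM G H ++ (Γ + Sg, Δ + Pi, d) :: K₀) ++
            [(Formula.bbox D ::ₘ Γc, Δc, Dir.dn)]) (D ::ₘ a) b := by simpa using c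
        have out := DF.bboxL1 c'
        exact (by simpa using out)
  | @boxL2 n₀ Y Γc Δc D Θc Λc hq =>
      rcases append_cons_eq_concat hX with ⟨rfl, hY, he⟩ | ⟨K₀, rfl, rfl⟩
      · injection he with he1 he2; injection he2 with he2 he3
        subst he1; subst he2; subst he3
        rw [hY] at hq
        have c := (IH n₀ (by omega)).1 hd hq h2
        have c' : DF (cM G H) (D ::ₘ (Γ + Sg)) (Δ + Pi) := by
          rw [← Multiset.cons_add]; exact c
        exact DF.boxL2 (G := cM G H) (Γ := Γ + Sg) (Δ := Δ + Pi) Θc b c'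
      · have hq' : DH n₀ (G ++ (Γ, A ::ₘ Δ, d) :: K₀) (D ::ₘ Γc) Δc := hq
        have c := (IH n₀ (by omega)).2 hd hq' h2
        have out := DF.boxL2 (G := cM G H ++ (Γ + Sg, Δ + Pi, d) :: K₀) Θc b c
        exact (by simpa using out)
  | @bboxL2 n₀ Y Γc Δc D Θc Λc hq =>
      rcases append_cons_eq_concat hX with ⟨rfl, hY, he⟩ | ⟨K₀, rfl, rfl⟩
      · injection he with he1 he2; injection he2 with he2 he3
        subst he1; subst he2; subst he3
        rw [hY] at hq
        have c := (IH n₀ (by omega)).1 hd hq h2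
        have c' : DF (cM G H) (D ::ₘ (Γ + Sg)) (Δ + Pi) := by
          rw [← Multiset.cons_add]; exact c
        exact DF.bboxL2 (G := cM G H) (Γ := Γ + Sg) (Δ := Δ + Pi) Θc b c'
      · have hq' : DH n₀ (G ++ (Γ, A ::ₘ Δ, d) :: K₀) (D ::ₘ Γc) Δc := hq
        have c := (IH n₀ (by omega)).2 hd hq' h2
        have out := DF.bboxL2 (G := cM G H ++ (Γ + Sg, Δ + Pi, d) :: K₀) Θc b c
        exact (by simpa using out)
/-! ## The main cut elimination induction -/

theorem DF.ctr_trip {X : Ctx} {a b : Multiset Formula}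
    (h : DF (cM (cM X X) X) ((a + a) + a) ((b + b) + b)) : DF X a b := by
  have h1 : DF (cM X X) (a + a) (b + b) :=
    DF.ctr (G := cM X X) (H := X) h (le2_cM_right rfl)
      (Multiset.le_add_right _ _) (Multiset.le_add_right _ _)
  exact DF.ctr (G := X) (H := X) h1 (le2_refl X) le_rfl le_rfl

theorem cutAll : ∀ w A, sizeF A ≤ w → ∀ s n m, n + m ≤ s → SL1s A n m ∧ SL2s A n m := by
  intro w
  induction w using Nat.strong_induction_on with
  | _ w IHw =>
  intro A hw s
  induction s using Nat.strong_induction_on with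
  | _ s IHs =>
  intro n m hs
  have IHnm : ∀ n₀, n₀ < n → SL1s A n₀ m ∧ SL2s A n₀ m :=
    fun n₀ h => IHs (n₀ + m) (by omega) n₀ m le_rfl
  have IHsmall : ∀ B, sizeF B < sizeF A → ∀ n' m', SL1s B n' m' ∧ SL2s B n' m' :=
    fun B hB n' m' => IHw (sizeF B) (by omega) B le_rfl (n' + m') n' m' le_rfl
  have IHsameV : 0 < n → ∀ n' m', n' + m' ≤ n + m - 1 → SL1s A n' m' ∧ SL2s A n' m' :=
    fun hpos n' m' h => IHs (n' + m') (by omega) n' m' le_rfl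
  refine ⟨?_, SL2R A n m IHnm⟩
  intro G H Γ Δ Sg Pi hd h1 h2
  have h1full := h1
  generalize hS : A ::ₘ Δ = S1 at h1
  cases h1 with
  | @id n₀ Y Γ₁ Δ₁ p =>
      rcases Multiset.cons_eq_cons.1 hS with ⟨hAp, hΔ⟩ | ⟨-, cs, hΔ, -⟩
      · subst hΔ
        have w : DF (cM G H) (Formula.atom p ::ₘ (Γ₁ + Sg)) (Δ + Pi) := by
          refine DF.wk ⟨m, h2⟩ (le2_cM_right hd) ?_ (Multiset.le_add_left _ _)
          rw [hAp]
          exact Multiset.cons_le_cons _ (Multiset.le_add_left _ _)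
        rw [Multiset.cons_add]
        exact w
      · subst hΔ
        simp only [Multiset.cons_add]
        exact DF.id ..
  | @bot n₀ Y Γ₁ Δ₁ =>
      rw [Multiset.cons_add]
      exact DF.bot ..
  | @ew n₀ G₀ Θ Λ δ Γc Δc hq =>
      have hdd : dirs H = dirs G₀ ++ [δ] := by rw [← hd]; simp [dirs]
      obtain ⟨H₀, f₁, f₂, rfl, hd₀⟩ := dirs_concat_split hdd
      have hl : G₀.length = H₀.length := by
        have := congrArg List.length hd₀; simp [dirs] at this; omega
      have w : DF (cM G₀ H₀) (Θ + f₁) (Λ + f₂) :=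
        DF.wk ⟨n₀, hq⟩ (le2_cM_left hd₀.symm) (Multiset.le_add_right _ _)
          (Multiset.le_add_right _ _)
      have out := DF.ew (G := cM G₀ H₀) δ (Γ + Sg) (Δ + Pi) w
      rw [cM_concat hl]
      exact out
  | @impR n₀ Y Γc Δc E F hq =>
      rcases Multiset.cons_eq_cons.1 hS with ⟨hAE, hΔ⟩ | ⟨-, cs, hΔ, hΔc⟩
      · -- principal →
        subst hΔ
        refine SL1R A (n₀ + 1 + m - 1) (n₀ + 1) m IHsmall (IHsameV (by omega)) h1full (by omega)
          (Or.inl ⟨E, F, hAE⟩) ?_ ?_ ?_ ?_ hd h2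
        · intro dd B h
          rw [hAE] at h
          cases dd <;> simp [consume] at h
        · -- Himp
          intro E' F' hA' m₀ hm₀ H' Sg' Pi' hd' h2' hq1 hq2
          obtain ⟨hEE, hFF⟩ : E = E' ∧ F = F' := by
            rw [hAE] at hA'
            exact ⟨(Formula.imp.inj hA').1, (Formula.imp.inj hA').2⟩
          subst hEE; subst hFF
          have e1 : F ::ₘ A ::ₘ Sg' = A ::ₘ F ::ₘ Sg' := Multiset.cons_swap ..
          rw [e1] at hq1
          have M₁ := (IHs (n₀ + 1 + m₀) (by omega) (n₀ + 1) m₀ le_rfl).1 hd' h1full hq1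
          have M₂ := (IHs (n₀ + 1 + m₀) (by omega) (n₀ + 1) m₀ le_rfl).1 hd' h1full hq2
          have e2 : F ::ₘ Formula.imp E F ::ₘ Δ = A ::ₘ F ::ₘ Δ := by
            rw [hAE, Multiset.cons_swap]
          rw [e2] at hq
          have M₀ := (IHs (n₀ + m) (by omega) n₀ m le_rfl).1 hd' hq h2'
          have hsE : sizeF E < sizeF A := by rw [hAE]; simp [sizeF]
          have hsF : sizeF F < sizeF A := by rw [hAE]; simp [sizeF]
          rw [msac] at M₂
          rw [Multiset.cons_add] at M₀
          obtain ⟨x2, d2⟩ := M₂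
          obtain ⟨x0, d0⟩ := M₀
          have X1 := (IHsmall E hsE x2 x0).1 (rfl : dirs (cM G H') = dirs (cM G H')) d2 d0
          have e3 : (Δ + Pi') + ((F ::ₘ Δ) + Pi') = F ::ₘ ((Δ + Pi') + (Δ + Pi')) := by
            rw [Multiset.cons_add, msac]
          rw [e3] at X1
          rw [msac] at M₁
          obtain ⟨y1, dX1⟩ := X1
          obtain ⟨y2, dM1⟩ := M₁
          have X2 := (IHsmall F hsF y1 y2).1 (dirs_cM rfl) dX1 dM1
          exact DF.ctr_trip X2
        · intro B hA' _ _ _ _ _ _ _ _ _ _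
          rw [hAE] at hA'; exact Formula.noConfusion hA'
        · intro B hA' _ _ _ _ _ _ _ _ _ _
          rw [hAE] at hA'; exact Formula.noConfusion hA'
      · -- non-principal
        subst hΔc; subst hΔ
        have e1 : F ::ₘ Formula.imp E F ::ₘ A ::ₘ cs = A ::ₘ F ::ₘ Formula.imp E F ::ₘ cs := by
          rw [Multiset.cons_swap (Formula.imp E F) A, Multiset.cons_swap F A]
        rw [e1] at hq
        have c := (IHnm n₀ (by omega)).1 hd hq h2
        simp only [msac, Multiset.cons_add] at c ⊢
        exact DF.impR c
  | @impL n₀ Y Γ₁ Δc E F hq1 hq2 =>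
      rw [← hS] at hq1
      have c1 := (IHnm n₀ (by omega)).1 hd hq1 h2
      have e2 : E ::ₘ S1 = A ::ₘ E ::ₘ Δ := by rw [← hS, Multiset.cons_swap]
      rw [e2] at hq2
      have c2 := (IHnm n₀ (by omega)).1 hd hq2 h2
      simp only [msac, Multiset.cons_add] at c1 c2 ⊢
      exact DF.impL c1 c2
  | @boxR1 n₀ G₀ Γc Δc Θc Λ₁ D hp1 hp2 =>
      rcases Multiset.cons_eq_cons.1 hS with ⟨hAD, hΔ⟩ | ⟨-, cs, hΔ, hΔc⟩
      · -- principal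
        subst hΔ
        refine SL1R A (n₀ + 1 + m - 1) (n₀ + 1) m IHsmall (IHsameV (by omega)) h1full (by omega)
          (Or.inr (Or.inl ⟨D, hAD⟩)) ?_ ?_ ?_ ?_ hd h2
        · intro dd B h
          rw [hAD] at h
          cases dd with
          | up =>
              obtain rfl : D = B := by injection h
              refine ⟨n₀, by omega, ?_⟩
              have : DH n₀ ((G₀ ++ [(Γc, Δc, Dir.dn)]) ++ [(Γ, A ::ₘ Δ, Dir.up)]) 0 {D} := by
                rw [hAD]; simpa using hp2
              exact this
          | dn => simp [consume] at h
        · intro E' F' hA'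
          rw [hAD] at hA'; exact Formula.noConfusion hA'
        · -- Hbox : principal-principal (boxR1 / boxL2)
          intro B hA' m₀ hm₀ H₀ f₁ f₂ Sg' Pi' hd' h2' hqq
          obtain rfl : D = B := by
            rw [hAD] at hA'; injection hA'
          have hd₀ : dirs (G₀ ++ [(Γc, Δc, Dir.dn)]) = dirs H₀ ++ [Dir.dn] := by
            rw [hd']; simp [dirs]
          have hd₀' : dirs G₀ = dirs H₀ := by
            have : dirs G₀ ++ [Dir.dn] = dirs H₀ ++ [Dir.dn] := by
              simpa [dirs] using hd₀
            exact (concat_inj this).1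
          have hl : G₀.length = H₀.length := by
            have := congrArg List.length hd₀'; simp [dirs] at this; omega
          have hd1 : dirs (G₀ ++ [(Γc, D ::ₘ Δc, Dir.dn)]) = dirs (H₀ ++ [(f₁, f₂, Dir.dn)]) := by
            rw [← hd']; simp [dirs]
          have hp1' : DH n₀ (G₀ ++ [(Γc, D ::ₘ Δc, Dir.dn)]) Γ (A ::ₘ Δ) := by
            rw [hAD]; exact hp1
          have C1 := (IHs (n₀ + m) (by omega) n₀ m le_rfl).1 hd1 hp1' h2'
          rw [cM_concat hl] at C1
          simp only [msac, Multiset.cons_add] at C1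
          obtain ⟨x, dC1⟩ := C1
          obtain ⟨y, dq⟩ := (⟨m₀, hqq⟩ : DF H₀ (D ::ₘ f₁) f₂)
          have hsD : sizeF D < sizeF A := by rw [hAD]; simp [sizeF]
          have X2 := (IHsmall D hsD x y).2 (K := []) ((dirs_cM hd₀').trans hd₀') dC1 dq
          -- contract the duplicated H₀-part
          have hlen2 : (cM G₀ H₀).length = H₀.length := by rw [length_cM hl, hl]
          have e : cM (cM G₀ H₀ ++ [(Γc + f₁, Δc + f₂, Dir.dn)]) (H₀ ++ [(f₁, f₂, Dir.dn)])
              = cM (cM G₀ H₀) H₀ ++ [((Γc + f₁) + f₁, (Δc + f₂) + f₂, Dir.dn)] :=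
            cM_concat hlen2 _ _
          have X2' : DF (cM (cM G₀ H₀ ++ [(Γc + f₁, Δc + f₂, Dir.dn)]) (H₀ ++ [(f₁, f₂, Dir.dn)]))
              ((Γ + Sg') + 0) ((Δ + Pi') + 0) := by
            rw [e]; simpa using X2
          have ctr := DF.ctr X2'
            (le2_concat (le2_cM_right hd₀')
              ⟨Multiset.le_add_left _ _, Multiset.le_add_left _ _, rfl⟩)
            (Multiset.zero_le _) (Multiset.zero_le _)
          rw [cM_concat hl]
          exact ctr
        · intro B hA'
          rw [hAD] at hA'; exact Formula.noConfusion hA'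
      · -- non-principal
        subst hΔc; subst hΔ
        have e1 : Formula.box D ::ₘ A ::ₘ cs = A ::ₘ Formula.box D ::ₘ cs :=
          Multiset.cons_swap ..
        rw [e1] at hp1 hp2
        have hd1 : dirs (G₀ ++ [(Γc, D ::ₘ Δc, Dir.dn)]) = dirs H := by
          rw [← hd]; simp [dirs]
        have c1 := (IHnm n₀ (by omega)).1 hd1 hp1 h2
        have hp2' : DH n₀ ((G₀ ++ [(Γc, Δc, Dir.dn)]) ++
            (Γ, A ::ₘ Formula.box D ::ₘ cs, Dir.up) :: []) 0 {D} := by simpa using hp2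
        have c2 := (IHnm n₀ (by omega)).2 hd hp2' h2
        have hdd : dirs H = dirs G₀ ++ [Dir.dn] := by rw [← hd]; simp [dirs]
        obtain ⟨H₀, f₁, f₂, rfl, hd₀⟩ := dirs_concat_split hdd
        have hl : G₀.length = H₀.length := by
          have := congrArg List.length hd₀; simp [dirs] at this; omega
        rw [cM_concat hl] at c1 c2 ⊢
        simp only [msac, Multiset.cons_add] at c1 c2 ⊢
        exact DF.boxR1 c1 (by simpa using c2)
  | @bboxR1 n₀ G₀ Γc Δc Θc Λ₁ D hp1 hp2 =>
      rcases Multiset.cons_eq_cons.1 hS with ⟨hAD, hΔ⟩ | ⟨-, cs, hΔ, hΔc⟩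
      · subst hΔ
        refine SL1R A (n₀ + 1 + m - 1) (n₀ + 1) m IHsmall (IHsameV (by omega)) h1full (by omega)
          (Or.inr (Or.inr ⟨D, hAD⟩)) ?_ ?_ ?_ ?_ hd h2
        · intro dd B h
          rw [hAD] at h
          cases dd with
          | dn =>
              obtain rfl : D = B := by injection h
              refine ⟨n₀, by omega, ?_⟩
              have : DH n₀ ((G₀ ++ [(Γc, Δc, Dir.up)]) ++ [(Γ, A ::ₘ Δ, Dir.dn)]) 0 {D} := by
                rw [hAD]; simpa using hp2
              exact this
          | up => simp [consume] at h
        · intro E' F' hA'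
          rw [hAD] at hA'; exact Formula.noConfusion hA'
        · intro B hA'
          rw [hAD] at hA'; exact Formula.noConfusion hA'
        · intro B hA' m₀ hm₀ H₀ f₁ f₂ Sg' Pi' hd' h2' hqq
          obtain rfl : D = B := by
            rw [hAD] at hA'; injection hA'
          have hd₀' : dirs G₀ = dirs H₀ := by
            have : dirs G₀ ++ [Dir.up] = dirs H₀ ++ [Dir.up] := by
              have := hd'; simp [dirs] at this ⊢; exact this
            exact (concat_inj this).1
          have hl : G₀.length = H₀.length := by
            have := congrArg List.length hd₀'; simp [dirs] at this; omega
          have hd1 : dirs (G₀ ++ [(Γc, D ::ₘ Δc, Dir.up)]) = dirs (H₀ ++ [(f₁, f₂, Dir.up)]) := by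
            rw [← hd']; simp [dirs]
          have hp1' : DH n₀ (G₀ ++ [(Γc, D ::ₘ Δc, Dir.up)]) Γ (A ::ₘ Δ) := by
            rw [hAD]; exact hp1
          have C1 := (IHs (n₀ + m) (by omega) n₀ m le_rfl).1 hd1 hp1' h2'
          rw [cM_concat hl] at C1
          simp only [msac, Multiset.cons_add] at C1
          obtain ⟨x, dC1⟩ := C1
          obtain ⟨y, dq⟩ := (⟨m₀, hqq⟩ : DF H₀ (D ::ₘ f₁) f₂)
          have hsD : sizeF D < sizeF A := by rw [hAD]; simp [sizeF]
          have X2 := (IHsmall D hsD x y).2 (K := []) ((dirs_cM hd₀').trans hd₀') dC1 dq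
          have hlen2 : (cM G₀ H₀).length = H₀.length := by rw [length_cM hl, hl]
          have e : cM (cM G₀ H₀ ++ [(Γc + f₁, Δc + f₂, Dir.up)]) (H₀ ++ [(f₁, f₂, Dir.up)])
              = cM (cM G₀ H₀) H₀ ++ [((Γc + f₁) + f₁, (Δc + f₂) + f₂, Dir.up)] :=
            cM_concat hlen2 _ _
          have X2' : DF (cM (cM G₀ H₀ ++ [(Γc + f₁, Δc + f₂, Dir.up)]) (H₀ ++ [(f₁, f₂, Dir.up)]))
              ((Γ + Sg') + 0) ((Δ + Pi') + 0) := by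
            rw [e]; simpa using X2
          have ctr := DF.ctr X2'
            (le2_concat (le2_cM_right hd₀')
              ⟨Multiset.le_add_left _ _, Multiset.le_add_left _ _, rfl⟩)
            (Multiset.zero_le _) (Multiset.zero_le _)
          rw [cM_concat hl]
          exact ctr
      · subst hΔc; subst hΔ
        have e1 : Formula.bbox D ::ₘ A ::ₘ cs = A ::ₘ Formula.bbox D ::ₘ cs :=
          Multiset.cons_swap ..
        rw [e1] at hp1 hp2
        have hd1 : dirs (G₀ ++ [(Γc, D ::ₘ Δc, Dir.up)]) = dirs H := by
          rw [← hd]; simp [dirs]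
        have c1 := (IHnm n₀ (by omega)).1 hd1 hp1 h2
        have hp2' : DH n₀ ((G₀ ++ [(Γc, Δc, Dir.up)]) ++
            (Γ, A ::ₘ Formula.bbox D ::ₘ cs, Dir.dn) :: []) 0 {D} := by simpa using hp2
        have c2 := (IHnm n₀ (by omega)).2 hd hp2' h2
        have hdd : dirs H = dirs G₀ ++ [Dir.up] := by rw [← hd]; simp [dirs]
        obtain ⟨H₀, f₁, f₂, rfl, hd₀⟩ := dirs_concat_split hdd
        have hl : G₀.length = H₀.length := by
          have := congrArg List.length hd₀; simp [dirs] at this; omega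
        rw [cM_concat hl] at c1 c2 ⊢
        simp only [msac, Multiset.cons_add] at c1 c2 ⊢
        exact DF.bboxR1 c1 (by simpa using c2)
  | @boxR2 n₀ Y Γc Δ₁ D hlast hq =>
      rcases Multiset.cons_eq_cons.1 hS with ⟨hAD, hΔ⟩ | ⟨-, cs, hΔ, hΔc⟩
      · subst hΔ
        refine SL1R A (n₀ + 1 + m - 1) (n₀ + 1) m IHsmall (IHsameV (by omega)) h1full (by omega)
          (Or.inr (Or.inl ⟨D, hAD⟩)) ?_ ?_ ?_ ?_ hd h2
        · intro dd B h
          rw [hAD] at h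
          cases dd with
          | up =>
              obtain rfl : D = B := by injection h
              refine ⟨n₀, by omega, ?_⟩
              have : DH n₀ (G ++ [(Γ, A ::ₘ Δ, Dir.up)]) 0 {D} := by
                rw [hAD]; exact hq
              exact this
          | dn => simp [consume] at h
        · intro E' F' hA'
          rw [hAD] at hA'; exact Formula.noConfusion hA'
        · -- Hbox impossible: lastDir contradiction
          intro B hA' m₀ hm₀ H₀ f₁ f₂ Sg' Pi' hd' h2' hqq
          exact absurd ((lastDir_congr hd').trans (lastDir_concat H₀ _)) hlast
        · intro B hA'
          rw [hAD] at hA'; exact Formula.noConfusion hA'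
      · subst hΔc; subst hΔ
        have e1 : Formula.box D ::ₘ A ::ₘ cs = A ::ₘ Formula.box D ::ₘ cs :=
          Multiset.cons_swap ..
        rw [e1] at hq
        have hq' : DH n₀ (G ++ (Γ, A ::ₘ Formula.box D ::ₘ cs, Dir.up) :: []) 0 {D} := hq
        have c := (IHnm n₀ (by omega)).2 hd hq' h2
        simp only [msac, Multiset.cons_add] at c ⊢
        refine DF.boxR2 ?_ c
        rw [lastDir_congr (dirs_cM hd)]
        exact hlast
  | @bboxR2 n₀ Y Γc Δ₁ D hlast hq =>
      rcases Multiset.cons_eq_cons.1 hS with ⟨hAD, hΔ⟩ | ⟨-, cs, hΔ, hΔc⟩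
      · subst hΔ
        refine SL1R A (n₀ + 1 + m - 1) (n₀ + 1) m IHsmall (IHsameV (by omega)) h1full (by omega)
          (Or.inr (Or.inr ⟨D, hAD⟩)) ?_ ?_ ?_ ?_ hd h2
        · intro dd B h
          rw [hAD] at h
          cases dd with
          | dn =>
              obtain rfl : D = B := by injection h
              refine ⟨n₀, by omega, ?_⟩
              have : DH n₀ (G ++ [(Γ, A ::ₘ Δ, Dir.dn)]) 0 {D} := by
                rw [hAD]; exact hq
              exact this
          | up => simp [consume] at h
        · intro E' F' hA'
          rw [hAD] at hA'; exact Formula.noConfusion hA'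
        · intro B hA'
          rw [hAD] at hA'; exact Formula.noConfusion hA'
        · intro B hA' m₀ hm₀ H₀ f₁ f₂ Sg' Pi' hd' h2' hqq
          exact absurd ((lastDir_congr hd').trans (lastDir_concat H₀ _)) hlast
      · subst hΔc; subst hΔ
        have e1 : Formula.bbox D ::ₘ A ::ₘ cs = A ::ₘ Formula.bbox D ::ₘ cs :=
          Multiset.cons_swap ..
        rw [e1] at hq
        have hq' : DH n₀ (G ++ (Γ, A ::ₘ Formula.bbox D ::ₘ cs, Dir.dn) :: []) 0 {D} := hq
        have c := (IHnm n₀ (by omega)).2 hd hq' h2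
        simp only [msac, Multiset.cons_add] at c ⊢
        refine DF.bboxR2 ?_ c
        rw [lastDir_congr (dirs_cM hd)]
        exact hlast
  | @boxL1 n₀ G₀ Γc Δc Θc Λc D hq =>
      rw [← hS] at hq
      have c := (IHnm n₀ (by omega)).1 hd hq h2
      have hdd : dirs H = dirs G₀ ++ [Dir.up] := by rw [← hd]; simp [dirs]
      obtain ⟨H₀, f₁, f₂, rfl, hd₀⟩ := dirs_concat_split hdd
      have hl : G₀.length = H₀.length := by
        have := congrArg List.length hd₀; simp [dirs] at this; omega
      rw [cM_concat hl] at c ⊢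
      simp only [msac, Multiset.cons_add] at c ⊢
      exact DF.boxL1 c
  | @bboxL1 n₀ G₀ Γc Δc Θc Λc D hq =>
      rw [← hS] at hq
      have c := (IHnm n₀ (by omega)).1 hd hq h2
      have hdd : dirs H = dirs G₀ ++ [Dir.dn] := by rw [← hd]; simp [dirs]
      obtain ⟨H₀, f₁, f₂, rfl, hd₀⟩ := dirs_concat_split hdd
      have hl : G₀.length = H₀.length := by
        have := congrArg List.length hd₀; simp [dirs] at this; omega
      rw [cM_concat hl] at c ⊢
      simp only [msac, Multiset.cons_add] at c ⊢
      exact DF.bboxL1 c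
  | @boxL2 n₀ G₀ Γc Δc D Θ₁ Λc hq =>
      have hdd : dirs H = dirs G₀ ++ [Dir.dn] := by rw [← hd]; simp [dirs]
      obtain ⟨H₀, f₁, f₂, rfl, hd₀⟩ := dirs_concat_split hdd
      have hl : G₀.length = H₀.length := by
        have := congrArg List.length hd₀; simp [dirs] at this; omega
      have w : DF (cM G₀ H₀) (D ::ₘ (Γc + f₁)) (Δc + f₂) :=
        DF.wk ⟨n₀, hq⟩ (le2_cM_left hd₀.symm)
          (Multiset.cons_le_cons D (Multiset.le_add_right _ _)) (Multiset.le_add_right _ _)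
      have out := DF.boxL2 (G := cM G₀ H₀) (Θ₁ + Sg) (Δ + Pi) w
      rw [cM_concat hl]
      simp only [msac, Multiset.cons_add] at out ⊢
      exact out
  | @bboxL2 n₀ G₀ Γc Δc D Θ₁ Λc hq =>
      have hdd : dirs H = dirs G₀ ++ [Dir.up] := by rw [← hd]; simp [dirs]
      obtain ⟨H₀, f₁, f₂, rfl, hd₀⟩ := dirs_concat_split hdd
      have hl : G₀.length = H₀.length := by
        have := congrArg List.length hd₀; simp [dirs] at this; omega
      have w : DF (cM G₀ H₀) (D ::ₘ (Γc + f₁)) (Δc + f₂) :=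
        DF.wk ⟨n₀, hq⟩ (le2_cM_left hd₀.symm)
          (Multiset.cons_le_cons D (Multiset.le_add_right _ _)) (Multiset.le_add_right _ _)
      have out := DF.bboxL2 (G := cM G₀ H₀) (Θ₁ + Sg) (Δ + Pi) w
      rw [cM_concat hl]
      simp only [msac, Multiset.cons_add] at out ⊢
      exact out
/-! ## Final assembly -/

theorem structEquiv_dirs : ∀ {G H : Ctx} {a b c d : Multiset Formula},
    structEquiv (plug G (.single a b)) (plug H (.single c d)) → dirs G = dirs H := by
  intro G
  induction G with
  | nil =>
      intro H a b c d h
      cases H with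
      | nil => rfl
      | cons y H =>
          obtain ⟨y₁, y₂, dy⟩ := y
          cases dy <;> simp [plug, structEquiv] at h
  | cons x G ih =>
      intro H a b c d h
      obtain ⟨x₁, x₂, dx⟩ := x
      cases H with
      | nil => cases dx <;> simp [plug, structEquiv] at h
      | cons y H =>
          obtain ⟨y₁, y₂, dy⟩ := y
          cases dx <;> cases dy <;> simp only [plug, structEquiv] at h <;>
            · have := ih h
              simp only [dirs, List.map_cons] at this ⊢
              rw [this]

theorem merge_plug : ∀ {G H : Ctx}, dirs G = dirs H → ∀ (a b c d : Multiset Formula),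
    merge (plug G (.single a b)) (plug H (.single c d))
      = plug (cM G H) (.single (a + c) (b + d)) := by
  intro G
  induction G with
  | nil =>
      intro H h a b c d
      cases H with
      | nil => rfl
      | cons y H => simp [dirs] at h
  | cons x G ih =>
      intro H h a b c d
      obtain ⟨x₁, x₂, dx⟩ := x
      cases H with
      | nil => simp [dirs] at h
      | cons y H =>
          obtain ⟨y₁, y₂, dy⟩ := y
          simp only [dirs, List.map_cons, List.cons.injEq] at h
          obtain ⟨h1, h2⟩ := h
          cases h1
          cases dx
          · have e1 : merge (plug ((x₁, x₂, Dir.up) :: G) (.single a b))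
                (plug ((y₁, y₂, Dir.up) :: H) (.single c d))
                = LNS.up (x₁ + y₁) (x₂ + y₂)
                  (merge (plug G (.single a b)) (plug H (.single c d))) := rfl
            have e2 : plug (cM ((x₁, x₂, Dir.up) :: G) ((y₁, y₂, Dir.up) :: H))
                (.single (a + c) (b + d))
                = LNS.up (x₁ + y₁) (x₂ + y₂) (plug (cM G H) (.single (a + c) (b + d))) := rfl
            rw [e1, e2, ih h2]
          · have e1 : merge (plug ((x₁, x₂, Dir.dn) :: G) (.single a b))
                (plug ((y₁, y₂, Dir.dn) :: H) (.single c d))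
                = LNS.dn (x₁ + y₁) (x₂ + y₂)
                  (merge (plug G (.single a b)) (plug H (.single c d))) := rfl
            have e2 : plug (cM ((x₁, x₂, Dir.dn) :: G) ((y₁, y₂, Dir.dn) :: H))
                (.single (a + c) (b + d))
                = LNS.dn (x₁ + y₁) (x₂ + y₂) (plug (cM G H) (.single (a + c) (b + d))) := rfl
            rw [e1, e2, ih h2]

def tctxCtx : Multiset Formula → Multiset Formula → TCtx → Ctx
  | _, _, [] => []
  | a, b, (d, u, v) :: I => (a, b, d) :: tctxCtx u v I

def tctxFin : Multiset Formula → Multiset Formula → TCtx → Multiset Formula × Multiset Formula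
  | a, b, [] => (a, b)
  | _, _, (_, u, v) :: I => tctxFin u v I

theorem snoc_plug : ∀ (G : Ctx) (a b u v : Multiset Formula) (d : Dir),
    (plug G (.single a b)).snoc d u v = plug (G ++ [(a, b, d)]) (.single u v) := by
  intro G
  induction G with
  | nil =>
      intro a b u v d
      cases d <;> rfl
  | cons x G ih =>
      intro a b u v d
      obtain ⟨x₁, x₂, dx⟩ := x
      cases dx <;>
        · show LNS.snoc (_ : LNS) _ _ _ = _
          simp only [plug, LNS.snoc]
          rw [ih]
          rfl

theorem appendT_plug : ∀ (I : TCtx) (G : Ctx) (a b : Multiset Formula),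
    appendT (plug G (.single a b)) I
      = plug (G ++ tctxCtx a b I) (.single (tctxFin a b I).1 (tctxFin a b I).2) := by
  intro I
  induction I with
  | nil => intro G a b; simp [appendT, tctxCtx, tctxFin]
  | cons x I ih =>
      obtain ⟨d, u, v⟩ := x
      intro G a b
      have e : appendT (plug G (.single a b)) ((d, u, v) :: I)
          = appendT ((plug G (.single a b)).snoc d u v) I := rfl
      rw [e, snoc_plug, ih]
      simp [tctxCtx, tctxFin]

theorem cut_sl_main (G H : Ctx) (I : TCtx) (Γ Δ Θ Λ : Multiset Formula) (A : Formula)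
    (h1 : Deriv (appendT (plug G (.single Γ (A ::ₘ Δ))) I))
    (h2 : Deriv (plug H (.single (A ::ₘ Θ) Λ)))
    (hse : structEquiv (plug G (.single Γ Δ)) (plug H (.single (A ::ₘ Θ) Λ))) :
    Deriv (appendT (merge (plug G (.single Γ Δ)) (plug H (.single Θ Λ))) I) := by
  have hdirs : dirs G = dirs H := structEquiv_dirs hse
  rw [appendT_plug] at h1
  have h1' := Deriv.toDF h1 rfl
  have h2' := Deriv.toDF h2 rfl
  obtain ⟨n, d1⟩ := h1'
  obtain ⟨m, d2⟩ := h2'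
  rw [merge_plug hdirs, appendT_plug]
  apply DF.toDeriv
  cases I with
  | nil =>
      simp only [tctxCtx, tctxFin, List.append_nil] at d1 ⊢
      exact (cutAll (sizeF A) A le_rfl (n + m) n m le_rfl).1 hdirs d1 d2
  | cons x I' =>
      obtain ⟨d, u, v⟩ := x
      simp only [tctxCtx, tctxFin] at d1 ⊢
      exact (cutAll (sizeF A) A le_rfl (n + m) n m le_rfl).2 (K := tctxCtx u v I')
        hdirs d1 d2

/-- Cut elimination with trailing context (statement SL of the main lemma):
from derivations of `G ⇗ Γ ⇒ Δ,A ⇗ I` and `H ⇗ A,Θ ⇒ Λ`, where `G ⇗ Γ ⇒ Δ`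
and `H ⇗ A,Θ ⇒ Λ` are structurally equivalent, we get a derivation of
`(G ⊕ H) ⇗ Γ,Θ ⇒ Δ,Λ ⇗ I`. -/
theorem cut_elimination_sl (G H : Ctx) (I : TCtx) (Γ Δ Θ Λ : Multiset Formula)
    (A : Formula)
    (h1 : Deriv (appendT (plug G (.single Γ (A ::ₘ Δ))) I))
    (h2 : Deriv (plug H (.single (A ::ₘ Θ) Λ)))
    (hse : structEquiv (plug G (.single Γ Δ)) (plug H (.single (A ::ₘ Θ) Λ))) :
    Deriv (appendT (merge (plug G (.single Γ Δ)) (plug H (.single Θ Λ))) I) := by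
  exact cut_sl_main G H I Γ Δ Θ Λ A h1 h2 hse
end

section
/- (Admissibility of necessitation in LNS_Kt) For every formula A: if the linear nested sequent ε ⇒ A is derivable in LNS_Kt, then both ε ⇒ □A and ε ⇒ ■A are derivable in LNS_Kt. -/
deriving instance DecidableEq for Formula

section Infra

-- ## plug lemmas

@[simp] lemma plug_nil (S : LNS) : plug [] S = S := rfl

@[simp] lemma plug_cons_up (Γ Δ : Multiset Formula) (G : Ctx) (S : LNS) :
    plug ((Γ, Δ, Dir.up) :: G) S = LNS.up Γ Δ (plug G S) := rfl

@[simp] lemma plug_cons_dn (Γ Δ : Multiset Formula) (G : Ctx) (S : LNS) :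
    plug ((Γ, Δ, Dir.dn) :: G) S = LNS.dn Γ Δ (plug G S) := rfl

-- ## lastDir lemmas

@[simp] lemma lastDir_nil : lastDir [] = none := rfl

@[simp] lemma lastDir_single (c : Multiset Formula × Multiset Formula × Dir) :
    lastDir [c] = some c.2.2 := by
  obtain ⟨a, b, d⟩ := c; rfl

lemma lastDir_cons_of_ne_nil (c : Multiset Formula × Multiset Formula × Dir) {G : Ctx}
    (h : G ≠ []) : lastDir (c :: G) = lastDir G := by
  cases G with
  | nil => exact absurd rfl h
  | cons c' G' => rfl

-- ## swap symmetry (box ↔ bbox, up ↔ dn)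

def fswap : Formula → Formula
  | .atom p => .atom p
  | .bot => .bot
  | .imp a b => .imp (fswap a) (fswap b)
  | .box a => .bbox (fswap a)
  | .dia a => .bdia (fswap a)
  | .bbox a => .box (fswap a)
  | .bdia a => .dia (fswap a)

@[simp] lemma fswap_fswap (a : Formula) : fswap (fswap a) = a := by
  induction a <;> simp [fswap, *]

def dswap : Dir → Dir
  | .up => .dn
  | .dn => .up

def mswap (s : Multiset Formula) : Multiset Formula := s.map fswap

@[simp] lemma mswap_zero : mswap 0 = 0 := rfl

@[simp] lemma mswap_cons (a : Formula) (s : Multiset Formula) :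
    mswap (a ::ₘ s) = fswap a ::ₘ mswap s := Multiset.map_cons _ _ _

@[simp] lemma mswap_singleton (a : Formula) : mswap {a} = {fswap a} := by
  simp [mswap]

def cswap : Multiset Formula × Multiset Formula × Dir → Multiset Formula × Multiset Formula × Dir
  | (Γ, Δ, d) => (mswap Γ, mswap Δ, dswap d)

def sswap : LNS → LNS
  | .single Γ Δ => .single (mswap Γ) (mswap Δ)
  | .up Γ Δ S => .dn (mswap Γ) (mswap Δ) (sswap S)
  | .dn Γ Δ S => .up (mswap Γ) (mswap Δ) (sswap S)

lemma sswap_plug (G : Ctx) (S : LNS) :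
    sswap (plug G S) = plug (G.map cswap) (sswap S) := by
  induction G with
  | nil => rfl
  | cons c G ih =>
      obtain ⟨a, b, d⟩ := c
      cases d <;> simp [plug, sswap, cswap, dswap, ih]

lemma lastDir_map_cswap (G : Ctx) :
    lastDir (G.map cswap) = (lastDir G).map dswap := by
  induction G with
  | nil => rfl
  | cons c G ih =>
      cases G with
      | nil => obtain ⟨a, b, d⟩ := c; rfl
      | cons c' G' =>
          rw [List.map_cons, lastDir_cons_of_ne_nil _ (by simp),
            lastDir_cons_of_ne_nil _ (by simp)]
          exact ih

lemma lastDir_swap_ne_up {G : Ctx} (h : lastDir G ≠ some Dir.dn) :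
    lastDir (G.map cswap) ≠ some Dir.up := by
  rw [lastDir_map_cswap]
  intro hc
  rcases hG : lastDir G with _ | d
  · rw [hG] at hc; simp at hc
  · rw [hG] at hc
    cases d
    · simp [dswap] at hc
    · exact h hG

lemma lastDir_swap_ne_dn {G : Ctx} (h : lastDir G ≠ some Dir.up) :
    lastDir (G.map cswap) ≠ some Dir.dn := by
  rw [lastDir_map_cswap]
  intro hc
  rcases hG : lastDir G with _ | d
  · rw [hG] at hc; simp at hc
  · rw [hG] at hc
    cases d
    · exact h hG
    · simp [dswap] at hc

lemma deriv_swap {S : LNS} (h : Deriv S) : Deriv (sswap S) := by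
  induction h with
  | id G Γ Δ p =>
      rw [sswap_plug]
      simpa [sswap, fswap] using Deriv.id (G.map cswap) (mswap Γ) (mswap Δ) p
  | botL G Γ Δ =>
      rw [sswap_plug]
      simpa [sswap, fswap] using Deriv.botL (G.map cswap) (mswap Γ) (mswap Δ)
  | ew G Θ Λ d Γ Δ _ ih =>
      rw [sswap_plug] at ih ⊢
      rw [List.map_append]
      simpa [sswap, cswap] using Deriv.ew (G.map cswap) (mswap Θ) (mswap Λ) (dswap d) (mswap Γ)
        (mswap Δ) (by simpa [sswap] using ih)
  | impR G Γ Δ a b _ ih =>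
      rw [sswap_plug] at ih ⊢
      simpa [sswap, fswap] using Deriv.impR (G.map cswap) (mswap Γ) (mswap Δ) (fswap a) (fswap b)
        (by simpa [sswap, fswap] using ih)
  | impL G Γ Δ a b _ _ ih1 ih2 =>
      rw [sswap_plug] at ih1 ih2 ⊢
      simpa [sswap, fswap] using Deriv.impL (G.map cswap) (mswap Γ) (mswap Δ) (fswap a) (fswap b)
        (by simpa [sswap, fswap] using ih1) (by simpa [sswap, fswap] using ih2)
  | boxR1 G Γ Δ Θ Λ a _ _ ih1 ih2 =>
      rw [sswap_plug] at ih1 ih2 ⊢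
      simpa [sswap, fswap] using Deriv.bboxR1 (G.map cswap) (mswap Γ) (mswap Δ) (mswap Θ) (mswap Λ)
        (fswap a) (by simpa [sswap, fswap] using ih1) (by simpa [sswap, fswap] using ih2)
  | bboxR1 G Γ Δ Θ Λ a _ _ ih1 ih2 =>
      rw [sswap_plug] at ih1 ih2 ⊢
      simpa [sswap, fswap] using Deriv.boxR1 (G.map cswap) (mswap Γ) (mswap Δ) (mswap Θ) (mswap Λ)
        (fswap a) (by simpa [sswap, fswap] using ih1) (by simpa [sswap, fswap] using ih2)
  | boxR2 G Γ Δ a hc _ ih =>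
      rw [sswap_plug] at ih ⊢
      simpa [sswap, fswap] using Deriv.bboxR2 (G.map cswap) (mswap Γ) (mswap Δ) (fswap a)
        (lastDir_swap_ne_up hc) (by simpa [sswap, fswap] using ih)
  | bboxR2 G Γ Δ a hc _ ih =>
      rw [sswap_plug] at ih ⊢
      simpa [sswap, fswap] using Deriv.boxR2 (G.map cswap) (mswap Γ) (mswap Δ) (fswap a)
        (lastDir_swap_ne_dn hc) (by simpa [sswap, fswap] using ih)
  | boxL1 G Γ Δ Θ Λ a _ ih =>
      rw [sswap_plug] at ih ⊢
      simpa [sswap, fswap] using Deriv.bboxL1 (G.map cswap) (mswap Γ) (mswap Δ) (mswap Θ) (mswap Λ)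
        (fswap a) (by simpa [sswap, fswap] using ih)
  | bboxL1 G Γ Δ Θ Λ a _ ih =>
      rw [sswap_plug] at ih ⊢
      simpa [sswap, fswap] using Deriv.boxL1 (G.map cswap) (mswap Γ) (mswap Δ) (mswap Θ) (mswap Λ)
        (fswap a) (by simpa [sswap, fswap] using ih)
  | boxL2 G Γ Δ Θ Λ a _ ih =>
      rw [sswap_plug] at ih ⊢
      simpa [sswap, fswap] using Deriv.bboxL2 (G.map cswap) (mswap Γ) (mswap Δ) (mswap Θ) (mswap Λ)
        (fswap a) (by simpa [sswap, fswap] using ih)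
  | bboxL2 G Γ Δ Θ Λ a _ ih =>
      rw [sswap_plug] at ih ⊢
      simpa [sswap, fswap] using Deriv.boxL2 (G.map cswap) (mswap Γ) (mswap Δ) (mswap Θ) (mswap Λ)
        (fswap a) (by simpa [sswap, fswap] using ih)

end Infra
section NecInfra

/-- Fatten the first component of a linear nested sequent. -/
def fat (A : Formula) (M N : Multiset Formula) : LNS → LNS
  | .single Θ Λ => .single (Θ + M) (Λ + (Formula.box A ::ₘ N))
  | .up Θ Λ S => .up (Θ + M) (Λ + (Formula.box A ::ₘ N)) S
  | .dn Θ Λ S => .dn (Θ + M) (Λ + (Formula.box A ::ₘ N)) S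

def fatc (A : Formula) (M N : Multiset Formula) :
    Multiset Formula × Multiset Formula × Dir → Multiset Formula × Multiset Formula × Dir
  | (Θ, Λ, d) => (Θ + M, Λ + (Formula.box A ::ₘ N), d)

lemma fat_plug_cons (A : Formula) (M N : Multiset Formula)
    (c : Multiset Formula × Multiset Formula × Dir) (G : Ctx) (S : LNS) :
    fat A M N (plug (c :: G) S) = plug (fatc A M N c :: G) S := by
  obtain ⟨Θ, Λ, d⟩ := c
  cases d <;> rfl

lemma lastDir_fatc_cons (A : Formula) (M N : Multiset Formula)
    (c : Multiset Formula × Multiset Formula × Dir) (G : Ctx) :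
    lastDir (fatc A M N c :: G) = lastDir (c :: G) := by
  obtain ⟨Θ, Λ, d⟩ := c
  cases G with
  | nil => rfl
  | cons c' G' => rfl

/-- An "exit" on the stack: a family of derivations anchored at a bad node `(L ⇒ R)`. -/
structure Exit (A : Formula) where
  a : Multiset Formula
  b : Multiset Formula
  sA : Multiset Formula
  sB : Multiset Formula
  L : Multiset Formula
  R : Multiset Formula
  fam : ∀ P N : Multiset Formula, sA + a ≤ P → sB + b ≤ N →
        Deriv (.up P (Formula.box A ::ₘ N) (.single L R))

def sumA {A : Formula} (St : List (Exit A)) : Multiset Formula := (St.map Exit.a).sum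
def sumB {A : Formula} (St : List (Exit A)) : Multiset Formula := (St.map Exit.b).sum

def anchors {A : Formula} (St : List (Exit A)) :
    Multiset (Multiset Formula × Multiset Formula) :=
  ↑(St.map fun e => (e.L, e.R))

@[simp] lemma sumA_nil {A : Formula} : sumA ([] : List (Exit A)) = 0 := rfl
@[simp] lemma sumB_nil {A : Formula} : sumB ([] : List (Exit A)) = 0 := rfl
@[simp] lemma anchors_nil {A : Formula} : anchors ([] : List (Exit A)) = 0 := rfl

lemma sumA_append {A : Formula} (St : List (Exit A)) (e : Exit A) :
    sumA (St ++ [e]) = sumA St + e.a := by simp [sumA]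
lemma sumB_append {A : Formula} (St : List (Exit A)) (e : Exit A) :
    sumB (St ++ [e]) = sumB St + e.b := by simp [sumB]
lemma anchors_append {A : Formula} (St : List (Exit A)) (e : Exit A) :
    anchors (St ++ [e]) = (e.L, e.R) ::ₘ anchors St := by
  simp [anchors]
lemma mem_anchors {A : Formula} (St : List (Exit A))
    (x : Multiset Formula × Multiset Formula) :
    x ∈ anchors St ↔ ∃ e ∈ St, (e.L, e.R) = x := by
  simp [anchors]

inductive StackOK {A : Formula} : List (Exit A) → Prop
  | nil : StackOK []
  | snoc {St : List (Exit A)} {e : Exit A} : StackOK St → e.sA = sumA St → e.sB = sumB St →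
      StackOK (St ++ [e])

lemma StackOK.mem {A : Formula} {St : List (Exit A)} (h : StackOK St) {e : Exit A}
    (he : e ∈ St) : e.sA + e.a ≤ sumA St ∧ e.sB + e.b ≤ sumB St := by
  induction h with
  | nil => simp at he
  | @snoc St' e' h1 h2 h3 ih =>
      rw [sumA_append, sumB_append]
      rcases List.mem_append.1 he with he' | he'
      · obtain ⟨ih1, ih2⟩ := ih he'
        exact ⟨le_trans ih1 (Multiset.le_add_right _ _), le_trans ih2 (Multiset.le_add_right _ _)⟩
      · rcases List.mem_singleton.1 he' with rfl
        exact ⟨le_of_eq (by rw [h2]), le_of_eq (by rw [h3])⟩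

/-- Derivations annotated with a bound `Φ` on the anchors of "bad" applications of `■R2`
(those with empty context). -/
inductive DerivB (Φ : Multiset (Multiset Formula × Multiset Formula)) : LNS → Prop
  | id (G : Ctx) (Γ Δ : Multiset Formula) (p : ℕ) :
      DerivB Φ (plug G (.single (.atom p ::ₘ Γ) (.atom p ::ₘ Δ)))
  | botL (G : Ctx) (Γ Δ : Multiset Formula) :
      DerivB Φ (plug G (.single (.bot ::ₘ Γ) Δ))
  | ew (G : Ctx) (Θ Λ : Multiset Formula) (d : Dir) (Γ Δ : Multiset Formula) :
      DerivB Φ (plug G (.single Θ Λ)) →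
      DerivB Φ (plug (G ++ [(Θ, Λ, d)]) (.single Γ Δ))
  | impR (G : Ctx) (Γ Δ : Multiset Formula) (A B : Formula) :
      DerivB Φ (plug G (.single (A ::ₘ Γ) (B ::ₘ A.imp B ::ₘ Δ))) →
      DerivB Φ (plug G (.single Γ (A.imp B ::ₘ Δ)))
  | impL (G : Ctx) (Γ Δ : Multiset Formula) (A B : Formula) :
      DerivB Φ (plug G (.single (B ::ₘ A.imp B ::ₘ Γ) Δ)) →
      DerivB Φ (plug G (.single (A.imp B ::ₘ Γ) (A ::ₘ Δ))) →
      DerivB Φ (plug G (.single (A.imp B ::ₘ Γ) Δ))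
  | boxR1 (G : Ctx) (Γ Δ Θ Λ : Multiset Formula) (A : Formula) :
      DerivB Φ (plug G (.dn Γ (A ::ₘ Δ) (.single Θ (A.box ::ₘ Λ)))) →
      DerivB Φ (plug G (.dn Γ Δ (.up Θ (A.box ::ₘ Λ) (.single 0 {A})))) →
      DerivB Φ (plug G (.dn Γ Δ (.single Θ (A.box ::ₘ Λ))))
  | bboxR1 (G : Ctx) (Γ Δ Θ Λ : Multiset Formula) (A : Formula) :
      DerivB Φ (plug G (.up Γ (A ::ₘ Δ) (.single Θ (A.bbox ::ₘ Λ)))) →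
      DerivB Φ (plug G (.up Γ Δ (.dn Θ (A.bbox ::ₘ Λ) (.single 0 {A})))) →
      DerivB Φ (plug G (.up Γ Δ (.single Θ (A.bbox ::ₘ Λ))))
  | boxR2 (G : Ctx) (Γ Δ : Multiset Formula) (A : Formula) :
      lastDir G ≠ some Dir.dn →
      DerivB Φ (plug G (.up Γ (A.box ::ₘ Δ) (.single 0 {A}))) →
      DerivB Φ (plug G (.single Γ (A.box ::ₘ Δ)))
  | bboxR2 (G : Ctx) (Γ Δ : Multiset Formula) (A : Formula) :
      lastDir G ≠ some Dir.up →
      (G = [] → (Γ, A.bbox ::ₘ Δ) ∈ Φ) →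
      DerivB Φ (plug G (.dn Γ (A.bbox ::ₘ Δ) (.single 0 {A}))) →
      DerivB Φ (plug G (.single Γ (A.bbox ::ₘ Δ)))
  | boxL1 (G : Ctx) (Γ Δ Θ Λ : Multiset Formula) (A : Formula) :
      DerivB Φ (plug G (.up (A.box ::ₘ Γ) Δ (.single (A ::ₘ Θ) Λ))) →
      DerivB Φ (plug G (.up (A.box ::ₘ Γ) Δ (.single Θ Λ)))
  | bboxL1 (G : Ctx) (Γ Δ Θ Λ : Multiset Formula) (A : Formula) :
      DerivB Φ (plug G (.dn (A.bbox ::ₘ Γ) Δ (.single (A ::ₘ Θ) Λ))) →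
      DerivB Φ (plug G (.dn (A.bbox ::ₘ Γ) Δ (.single Θ Λ)))
  | boxL2 (G : Ctx) (Γ Δ Θ Λ : Multiset Formula) (A : Formula) :
      DerivB Φ (plug G (.single (A ::ₘ Γ) Δ)) →
      DerivB Φ (plug G (.dn Γ Δ (.single (A.box ::ₘ Θ) Λ)))
  | bboxL2 (G : Ctx) (Γ Δ Θ Λ : Multiset Formula) (A : Formula) :
      DerivB Φ (plug G (.single (A ::ₘ Γ) Δ)) →
      DerivB Φ (plug G (.up Γ Δ (.single (A.bbox ::ₘ Θ) Λ)))

lemma DerivB.mono {Φ Φ' : Multiset (Multiset Formula × Multiset Formula)} {S : LNS}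
    (h : DerivB Φ S) (hle : Φ ≤ Φ') : DerivB Φ' S := by
  induction h with
  | id G Γ Δ p => exact .id G Γ Δ p
  | botL G Γ Δ => exact .botL G Γ Δ
  | ew G Θ Λ d Γ Δ _ ih => exact .ew G Θ Λ d Γ Δ ih
  | impR G Γ Δ a b _ ih => exact .impR G Γ Δ a b ih
  | impL G Γ Δ a b _ _ ih1 ih2 => exact .impL G Γ Δ a b ih1 ih2
  | boxR1 G Γ Δ Θ Λ a _ _ ih1 ih2 => exact .boxR1 G Γ Δ Θ Λ a ih1 ih2
  | bboxR1 G Γ Δ Θ Λ a _ _ ih1 ih2 => exact .bboxR1 G Γ Δ Θ Λ a ih1 ih2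
  | boxR2 G Γ Δ a hc _ ih => exact .boxR2 G Γ Δ a hc ih
  | bboxR2 G Γ Δ a hc hm _ ih =>
      exact .bboxR2 G Γ Δ a hc (fun hG => Multiset.mem_of_le hle (hm hG)) ih
  | boxL1 G Γ Δ Θ Λ a _ ih => exact .boxL1 G Γ Δ Θ Λ a ih
  | bboxL1 G Γ Δ Θ Λ a _ ih => exact .bboxL1 G Γ Δ Θ Λ a ih
  | boxL2 G Γ Δ Θ Λ a _ ih => exact .boxL2 G Γ Δ Θ Λ a ih
  | bboxL2 G Γ Δ Θ Λ a _ ih => exact .bboxL2 G Γ Δ Θ Λ a ih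

lemma Deriv.toDerivB {S : LNS} (h : Deriv S) : ∃ Φ, DerivB Φ S := by
  induction h with
  | id G Γ Δ p => exact ⟨0, .id G Γ Δ p⟩
  | botL G Γ Δ => exact ⟨0, .botL G Γ Δ⟩
  | ew G Θ Λ d Γ Δ _ ih => obtain ⟨Φ, ih⟩ := ih; exact ⟨Φ, .ew G Θ Λ d Γ Δ ih⟩
  | impR G Γ Δ a b _ ih => obtain ⟨Φ, ih⟩ := ih; exact ⟨Φ, .impR G Γ Δ a b ih⟩
  | impL G Γ Δ a b _ _ ih1 ih2 =>
      obtain ⟨Φ1, ih1⟩ := ih1; obtain ⟨Φ2, ih2⟩ := ih2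
      exact ⟨Φ1 + Φ2, .impL G Γ Δ a b (ih1.mono (Multiset.le_add_right _ _))
        (ih2.mono (Multiset.le_add_left _ _))⟩
  | boxR1 G Γ Δ Θ Λ a _ _ ih1 ih2 =>
      obtain ⟨Φ1, ih1⟩ := ih1; obtain ⟨Φ2, ih2⟩ := ih2
      exact ⟨Φ1 + Φ2, .boxR1 G Γ Δ Θ Λ a (ih1.mono (Multiset.le_add_right _ _))
        (ih2.mono (Multiset.le_add_left _ _))⟩
  | bboxR1 G Γ Δ Θ Λ a _ _ ih1 ih2 =>
      obtain ⟨Φ1, ih1⟩ := ih1; obtain ⟨Φ2, ih2⟩ := ih2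
      exact ⟨Φ1 + Φ2, .bboxR1 G Γ Δ Θ Λ a (ih1.mono (Multiset.le_add_right _ _))
        (ih2.mono (Multiset.le_add_left _ _))⟩
  | boxR2 G Γ Δ a hc _ ih => obtain ⟨Φ, ih⟩ := ih; exact ⟨Φ, .boxR2 G Γ Δ a hc ih⟩
  | bboxR2 G Γ Δ a hc _ ih =>
      obtain ⟨Φ, ih⟩ := ih
      exact ⟨(Γ, a.bbox ::ₘ Δ) ::ₘ Φ, .bboxR2 G Γ Δ a hc (fun _ => Multiset.mem_cons_self _ _)
        (ih.mono (Multiset.le_cons_self _ _))⟩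
  | boxL1 G Γ Δ Θ Λ a _ ih => obtain ⟨Φ, ih⟩ := ih; exact ⟨Φ, .boxL1 G Γ Δ Θ Λ a ih⟩
  | bboxL1 G Γ Δ Θ Λ a _ ih => obtain ⟨Φ, ih⟩ := ih; exact ⟨Φ, .bboxL1 G Γ Δ Θ Λ a ih⟩
  | boxL2 G Γ Δ Θ Λ a _ ih => obtain ⟨Φ, ih⟩ := ih; exact ⟨Φ, .boxL2 G Γ Δ Θ Λ a ih⟩
  | bboxL2 G Γ Δ Θ Λ a _ ih => obtain ⟨Φ, ih⟩ := ih; exact ⟨Φ, .bboxL2 G Γ Δ Θ Λ a ih⟩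

end NecInfra
section MainProof

/-- The combined statement proved by the main induction. -/
def InnerP (A : Formula) (Φ : Multiset (Multiset Formula × Multiset Formula)) (k : ℕ)
    (W : LNS) : Prop :=
  ∀ St : List (Exit A), StackOK St → anchors St ≤ Φ → Multiset.card Φ ≤ k + St.length →
    ((∀ P N : Multiset Formula, sumA St ≤ P → sumB St ≤ N →
        Deriv (.up P (Formula.box A ::ₘ N) W)) ∧
     (∀ Γ Δ : Multiset Formula, ∀ K : LNS, W = .dn Γ Δ K → (Γ, Δ) ∉ anchors St →
        (Γ, Δ) ∈ Φ → ∀ M N : Multiset Formula, sumA St ≤ M → sumB St ≤ N →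
          Deriv (fat A M N K)))

lemma cons_le_of_mem {α : Type*} {x : α} {s t : Multiset α} (hx : x ∈ t) (hs : s ≤ t)
    (hns : x ∉ s) : x ::ₘ s ≤ t := by
  classical
  rw [Multiset.le_iff_count] at hs ⊢
  intro y
  by_cases hy : y = x
  · subst hy
    rw [Multiset.count_cons_self, Multiset.count_eq_zero_of_notMem hns]
    exact Multiset.one_le_count_iff_mem.2 hx
  · rw [Multiset.count_cons_of_ne hy]
    exact hs y

lemma lastDir_cons_up_ne_dn {G : Ctx} (h : lastDir G ≠ some Dir.dn)
    (P Q : Multiset Formula) : lastDir ((P, Q, Dir.up) :: G) ≠ some Dir.dn := by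
  cases G with
  | nil => simp [lastDir]
  | cons c G' => rw [lastDir_cons_of_ne_nil _ (by simp)]; exact h

lemma jump_lemma (A : Formula) (Φ : Multiset (Multiset Formula × Multiset Formula)) (k : ℕ)
    (IH : ∀ k' < k, InnerP A Φ k' (LNS.single 0 {A}))
    (St : List (Exit A)) (hok : StackOK St) (hanc : anchors St ≤ Φ)
    (hcard : Multiset.card Φ ≤ k + St.length)
    (e : Exit A) (heA : e.sA = sumA St) (heB : e.sB = sumB St)
    (hfresh : (e.L, e.R) ∉ anchors St) (heΦ : (e.L, e.R) ∈ Φ)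
    (P N : Multiset Formula) (hP : sumA St + e.a ≤ P) (hN : sumB St + e.b ≤ N) :
    Deriv (.up P (Formula.box A ::ₘ N) (LNS.single 0 {A})) := by
  have hsub : (e.L, e.R) ::ₘ anchors St ≤ Φ := cons_le_of_mem heΦ hanc hfresh
  have hlen : St.length + 1 ≤ Multiset.card Φ := by
    have h1 := Multiset.card_le_card hsub
    rw [Multiset.card_cons] at h1
    have h2 : Multiset.card (anchors St) = St.length := by simp [anchors]
    omega
  obtain ⟨k', rfl⟩ : ∃ k', k = k' + 1 := by
    cases k with
    | zero => omega
    | succ k' => exact ⟨k', rfl⟩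
  have hInnerP := IH k' (Nat.lt_succ_self k') (St ++ [e])
    (hok.snoc heA heB)
    (by rw [anchors_append]; exact hsub)
    (by simp only [List.length_append, List.length_singleton]; omega)
  exact (hInnerP).1 P N (by rwa [sumA_append]) (by rwa [sumB_append])

end MainProof
section Monster

lemma plug_eq_dn {G : Ctx} {pat : LNS} {Γ Δ : Multiset Formula} {K : LNS}
    (h : plug G pat = .dn Γ Δ K) :
    (G = [] ∧ pat = .dn Γ Δ K) ∨
      ∃ G', G = (Γ, Δ, Dir.dn) :: G' ∧ plug G' pat = K := by
  cases G with
  | nil => exact .inl ⟨rfl, h⟩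
  | cons c G' =>
      obtain ⟨a, b, d⟩ := c
      cases d
      · rw [plug_cons_up] at h; cases h
      · rw [plug_cons_dn] at h
        injection h with h1 h2 h3
        exact .inr ⟨G', by rw [h1, h2], h3⟩

theorem main_induction (A : Formula) (Φ : Multiset (Multiset Formula × Multiset Formula))
    (hd₀ : DerivB Φ (LNS.single 0 {A})) :
    ∀ k (W : LNS), DerivB Φ W → InnerP A Φ k W := by
  intro k
  induction k using Nat.strong_induction_on with
  | _ k IHk =>
  have JIH : ∀ k' < k, InnerP A Φ k' (LNS.single 0 {A}) := fun k' h => IHk k' h _ hd₀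
  intro W hd
  induction hd with
  | id G Γ Δ p =>
      intro St hok hanc hcard
      constructor
      · intro P N hP hN
        exact Deriv.id ((P, Formula.box A ::ₘ N, Dir.up) :: G) Γ Δ p
      · intro Γ₀ Δ₀ K₀ hK hni hiΦ M N hM hN
        rcases plug_eq_dn hK with ⟨rfl, hpat⟩ | ⟨G', rfl, hK'⟩
        · cases hpat
        · subst hK'
          cases G' with
          | nil =>
              simpa [fat, Multiset.cons_add, Multiset.cons_swap] using
                Deriv.id [] (Γ + M) (Δ + (Formula.box A ::ₘ N)) p
          | cons c G'' =>
              rw [fat_plug_cons]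
              exact Deriv.id (fatc A M N c :: G'') Γ Δ p
  | botL G Γ Δ =>
      intro St hok hanc hcard
      constructor
      · intro P N hP hN
        exact Deriv.botL ((P, Formula.box A ::ₘ N, Dir.up) :: G) Γ Δ
      · intro Γ₀ Δ₀ K₀ hK hni hiΦ M N hM hN
        rcases plug_eq_dn hK with ⟨rfl, hpat⟩ | ⟨G', rfl, hK'⟩
        · cases hpat
        · subst hK'
          cases G' with
          | nil =>
              simpa [fat, Multiset.cons_add, Multiset.cons_swap] using
                Deriv.botL [] (Γ + M) (Δ + (Formula.box A ::ₘ N))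
          | cons c G'' =>
              rw [fat_plug_cons]
              exact Deriv.botL (fatc A M N c :: G'') Γ Δ
  | ew G Θe Λe de Γe Δe _ ih =>
      intro St hok hanc hcard
      constructor
      · intro P N hP hN
        exact Deriv.ew ((P, Formula.box A ::ₘ N, Dir.up) :: G) Θe Λe de Γe Δe
          ((ih St hok hanc hcard).1 P N hP hN)
      · intro Γ₀ Δ₀ K₀ hK hni hiΦ M N hM hN
        cases G with
        | nil =>
            -- ew created the tail component: flavor-3 exit
            cases de with
            | up => cases hK
            | dn =>
                injection hK with e1 e2 e3
                subst e1; subst e2; subst e3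
                have hfam : ∀ P N', sumA St + 0 ≤ P → sumB St + 0 ≤ N' →
                    Deriv (.up P (Formula.box A ::ₘ N') (.single Θe Λe)) := by
                  intro P N' h1 h2
                  exact (ih St hok hanc hcard).1 P N' (by simpa using h1) (by simpa using h2)
                have hj := jump_lemma A Φ k JIH St hok hanc hcard
                  ⟨0, 0, sumA St, sumB St, Θe, Λe, hfam⟩ rfl rfl hni hiΦ (Γe + M) (Δe + N)
                  (by simpa using le_trans hM (Multiset.le_add_left _ _))
                  (by simpa using le_trans hN (Multiset.le_add_left _ _))
                have h6 := Deriv.boxR2 [] (Γe + M) (Δe + N) A (by simp) hj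
                simpa [fat, Multiset.add_cons] using h6
        | cons c₀ G₀ =>
            have hK2 : plug (c₀ :: (G₀ ++ [(Θe, Λe, de)])) (.single Γe Δe) = .dn Γ₀ Δ₀ K₀ := hK
            rcases plug_eq_dn hK2 with ⟨habs, _⟩ | ⟨G'', hc₀, hK'⟩
            · cases habs
            · injection hc₀ with hc₀1 hc₀2
              subst hc₀1
              subst hc₀2
              subst hK'
              cases G₀ with
              | nil =>
                  have hprem := (ih St hok hanc hcard).2 Γ₀ Δ₀ _ rfl hni hiΦ M N hM hN
                  rw [List.nil_append, fat_plug_cons]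
                  exact Deriv.ew [] (Θe + M) (Λe + (Formula.box A ::ₘ N)) de Γe Δe
                    (by simpa [fat] using hprem)
              | cons c₁ G₁ =>
                  have hprem := (ih St hok hanc hcard).2 Γ₀ Δ₀ _ rfl hni hiΦ M N hM hN
                  rw [fat_plug_cons] at hprem
                  rw [List.cons_append, fat_plug_cons]
                  exact Deriv.ew (fatc A M N c₁ :: G₁) Θe Λe de Γe Δe hprem
  | impR G Γ Δ a b _ ih =>
      intro St hok hanc hcard
      constructor
      · intro P N hP hN
        exact Deriv.impR ((P, Formula.box A ::ₘ N, Dir.up) :: G) Γ Δ a b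
          ((ih St hok hanc hcard).1 P N hP hN)
      · intro Γ₀ Δ₀ K₀ hK hni hiΦ M N hM hN
        rcases plug_eq_dn hK with ⟨rfl, hpat⟩ | ⟨G', rfl, hK'⟩
        · cases hpat
        · subst hK'
          have hprem := (ih St hok hanc hcard).2 Γ₀ Δ₀ _ rfl hni hiΦ M N hM hN
          cases G' with
          | nil =>
              simpa [fat, Multiset.cons_add, Multiset.cons_swap] using
                Deriv.impR [] (Γ + M) (Δ + (Formula.box A ::ₘ N)) a b
                  (by simpa [fat, Multiset.cons_add, Multiset.cons_swap] using hprem)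
          | cons c G'' =>
              rw [fat_plug_cons] at hprem ⊢
              exact Deriv.impR (fatc A M N c :: G'') Γ Δ a b hprem
  | impL G Γ Δ a b _ _ ih1 ih2 =>
      intro St hok hanc hcard
      constructor
      · intro P N hP hN
        exact Deriv.impL ((P, Formula.box A ::ₘ N, Dir.up) :: G) Γ Δ a b
          ((ih1 St hok hanc hcard).1 P N hP hN) ((ih2 St hok hanc hcard).1 P N hP hN)
      · intro Γ₀ Δ₀ K₀ hK hni hiΦ M N hM hN
        rcases plug_eq_dn hK with ⟨rfl, hpat⟩ | ⟨G', rfl, hK'⟩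
        · cases hpat
        · subst hK'
          have hprem1 := (ih1 St hok hanc hcard).2 Γ₀ Δ₀ _ rfl hni hiΦ M N hM hN
          have hprem2 := (ih2 St hok hanc hcard).2 Γ₀ Δ₀ _ rfl hni hiΦ M N hM hN
          cases G' with
          | nil =>
              simpa [fat, Multiset.cons_add, Multiset.cons_swap] using
                Deriv.impL [] (Γ + M) (Δ + (Formula.box A ::ₘ N)) a b
                  (by simpa [fat, Multiset.cons_add, Multiset.cons_swap] using hprem1)
                  (by simpa [fat, Multiset.cons_add, Multiset.cons_swap] using hprem2)
          | cons c G'' =>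
              rw [fat_plug_cons] at hprem1 hprem2 ⊢
              exact Deriv.impL (fatc A M N c :: G'') Γ Δ a b hprem1 hprem2
  | boxR1 G Γc Δc Θc Λc a _ _ ih1 ih2 =>
      intro St hok hanc hcard
      constructor
      · intro P N hP hN
        exact Deriv.boxR1 ((P, Formula.box A ::ₘ N, Dir.up) :: G) Γc Δc Θc Λc a
          ((ih1 St hok hanc hcard).1 P N hP hN) ((ih2 St hok hanc hcard).1 P N hP hN)
      · intro Γ₀ Δ₀ K₀ hK hni hiΦ M N hM hN
        rcases plug_eq_dn hK with ⟨rfl, hpat⟩ | ⟨G', rfl, hK'⟩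
        · -- junction case: use the second premise and □R2
          injection hpat with e1 e2 e3
          subst e1; subst e2; subst e3
          have h2 := (ih2 St hok hanc hcard).2 Γc Δc _ rfl hni hiΦ M N hM hN
          have h3 := Deriv.boxR2 [] (Θc + M) (Λc + (Formula.box A ::ₘ N)) a (by simp)
            (by simpa [fat, Multiset.cons_add, Multiset.add_cons, Multiset.cons_swap] using h2)
          simpa [fat, Multiset.cons_add, Multiset.add_cons, Multiset.cons_swap] using h3
        · subst hK'
          have hprem1 := (ih1 St hok hanc hcard).2 Γ₀ Δ₀ _ rfl hni hiΦ M N hM hN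
          have hprem2 := (ih2 St hok hanc hcard).2 Γ₀ Δ₀ _ rfl hni hiΦ M N hM hN
          cases G' with
          | nil =>
              simpa [fat, Multiset.cons_add, Multiset.cons_swap] using
                Deriv.boxR1 [] (Γc + M) (Δc + (Formula.box A ::ₘ N)) Θc Λc a
                  (by simpa [fat, Multiset.cons_add, Multiset.cons_swap] using hprem1)
                  (by simpa [fat, Multiset.cons_add, Multiset.cons_swap] using hprem2)
          | cons c G'' =>
              rw [fat_plug_cons] at hprem1 hprem2 ⊢
              exact Deriv.boxR1 (fatc A M N c :: G'') Γc Δc Θc Λc a hprem1 hprem2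
  | bboxR1 G Γc Δc Θc Λc a _ _ ih1 ih2 =>
      intro St hok hanc hcard
      constructor
      · intro P N hP hN
        exact Deriv.bboxR1 ((P, Formula.box A ::ₘ N, Dir.up) :: G) Γc Δc Θc Λc a
          ((ih1 St hok hanc hcard).1 P N hP hN) ((ih2 St hok hanc hcard).1 P N hP hN)
      · intro Γ₀ Δ₀ K₀ hK hni hiΦ M N hM hN
        rcases plug_eq_dn hK with ⟨rfl, hpat⟩ | ⟨G', rfl, hK'⟩
        · cases hpat
        · subst hK'
          have hprem1 := (ih1 St hok hanc hcard).2 Γ₀ Δ₀ _ rfl hni hiΦ M N hM hN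
          have hprem2 := (ih2 St hok hanc hcard).2 Γ₀ Δ₀ _ rfl hni hiΦ M N hM hN
          cases G' with
          | nil =>
              simpa [fat, Multiset.cons_add, Multiset.cons_swap] using
                Deriv.bboxR1 [] (Γc + M) (Δc + (Formula.box A ::ₘ N)) Θc Λc a
                  (by simpa [fat, Multiset.cons_add, Multiset.cons_swap] using hprem1)
                  (by simpa [fat, Multiset.cons_add, Multiset.cons_swap] using hprem2)
          | cons c G'' =>
              rw [fat_plug_cons] at hprem1 hprem2 ⊢
              exact Deriv.bboxR1 (fatc A M N c :: G'') Γc Δc Θc Λc a hprem1 hprem2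
  | boxR2 G Γc Δc a hc _ ih =>
      intro St hok hanc hcard
      constructor
      · intro P N hP hN
        exact Deriv.boxR2 ((P, Formula.box A ::ₘ N, Dir.up) :: G) Γc Δc a
          (lastDir_cons_up_ne_dn hc P (Formula.box A ::ₘ N))
          ((ih St hok hanc hcard).1 P N hP hN)
      · intro Γ₀ Δ₀ K₀ hK hni hiΦ M N hM hN
        rcases plug_eq_dn hK with ⟨rfl, hpat⟩ | ⟨G', rfl, hK'⟩
        · cases hpat
        · subst hK'
          have hprem := (ih St hok hanc hcard).2 Γ₀ Δ₀ _ rfl hni hiΦ M N hM hN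
          cases G' with
          | nil => exact absurd (by simp) hc
          | cons c G'' =>
              rw [fat_plug_cons] at hprem ⊢
              refine Deriv.boxR2 (fatc A M N c :: G'') Γc Δc a ?_ hprem
              rw [lastDir_fatc_cons]
              intro hcc
              exact hc (by rw [lastDir_cons_of_ne_nil _ (by simp)]; exact hcc)
  | bboxR2 G Γb Δb a hc hm _ ih =>
      intro St hok hanc hcard
      constructor
      · intro P N hP hN
        cases G with
        | cons c G' =>
            refine Deriv.bboxR2 ((P, Formula.box A ::ₘ N, Dir.up) :: c :: G') Γb Δb a ?_
              ((ih St hok hanc hcard).1 P N hP hN)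
            rw [lastDir_cons_of_ne_nil _ (by simp)]
            exact hc
        | nil =>
            by_cases hex : ∃ e ∈ St, (Exit.L e, Exit.R e) = (Γb, a.bbox ::ₘ Δb)
            · obtain ⟨e, he, heq⟩ := hex
              obtain ⟨hsum1, hsum2⟩ := hok.mem he
              have hfire := e.fam P N (le_trans hsum1 hP) (le_trans hsum2 hN)
              rw [show e.L = Γb from congrArg Prod.fst heq,
                show e.R = a.bbox ::ₘ Δb from congrArg Prod.snd heq] at hfire
              exact hfire
            · have hni : (Γb, a.bbox ::ₘ Δb) ∉ anchors St := by
                rw [mem_anchors]; exact hex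
              have h1 := (ih St hok hanc hcard).2 Γb (a.bbox ::ₘ Δb) _ rfl hni (hm rfl) P N hP hN
              have h2 : Deriv (LNS.single P (a ::ₘ Formula.box A ::ₘ N)) := by
                simpa only [fat, Multiset.singleton_add, zero_add] using h1
              have h3 := Deriv.ew [] P (a ::ₘ Formula.box A ::ₘ N) Dir.up Γb (a.bbox ::ₘ Δb) h2
              have h4 := (ih St hok hanc hcard).1 P N hP hN
              exact Deriv.bboxR1 [] P (Formula.box A ::ₘ N) Γb Δb a h3 h4
      · intro Γ₀ Δ₀ K₀ hK hni hiΦ M N hM hN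
        rcases plug_eq_dn hK with ⟨rfl, hpat⟩ | ⟨G', rfl, hK'⟩
        · cases hpat
        · subst hK'
          have hprem := (ih St hok hanc hcard).2 Γ₀ Δ₀ _ rfl hni hiΦ M N hM hN
          cases G' with
          | nil =>
              have h5 := Deriv.bboxR2 [] (Γb + M) (Δb + (Formula.box A ::ₘ N)) a (by simp)
                (by simpa [fat, Multiset.cons_add, Multiset.add_cons, Multiset.cons_swap]
                  using hprem)
              simpa [fat, Multiset.cons_add, Multiset.add_cons, Multiset.cons_swap] using h5
          | cons c G'' =>
              rw [fat_plug_cons] at hprem ⊢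
              refine Deriv.bboxR2 (fatc A M N c :: G'') Γb Δb a ?_ hprem
              rw [lastDir_fatc_cons]
              intro hcc
              exact hc (by rw [lastDir_cons_of_ne_nil _ (by simp)]; exact hcc)
  | boxL1 G Γc Δc Θt Λt a _ ih =>
      intro St hok hanc hcard
      constructor
      · intro P N hP hN
        exact Deriv.boxL1 ((P, Formula.box A ::ₘ N, Dir.up) :: G) Γc Δc Θt Λt a
          ((ih St hok hanc hcard).1 P N hP hN)
      · intro Γ₀ Δ₀ K₀ hK hni hiΦ M N hM hN
        rcases plug_eq_dn hK with ⟨rfl, hpat⟩ | ⟨G', rfl, hK'⟩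
        · cases hpat
        · subst hK'
          have hprem := (ih St hok hanc hcard).2 Γ₀ Δ₀ _ rfl hni hiΦ M N hM hN
          cases G' with
          | nil =>
              simpa [fat, Multiset.cons_add, Multiset.cons_swap] using
                Deriv.boxL1 [] (Γc + M) (Δc + (Formula.box A ::ₘ N)) Θt Λt a
                  (by simpa [fat, Multiset.cons_add, Multiset.cons_swap] using hprem)
          | cons c G'' =>
              rw [fat_plug_cons] at hprem ⊢
              exact Deriv.boxL1 (fatc A M N c :: G'') Γc Δc Θt Λt a hprem
  | bboxL1 G Γc Δc Θt Λt a _ ih =>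
      intro St hok hanc hcard
      constructor
      · intro P N hP hN
        exact Deriv.bboxL1 ((P, Formula.box A ::ₘ N, Dir.up) :: G) Γc Δc Θt Λt a
          ((ih St hok hanc hcard).1 P N hP hN)
      · intro Γ₀ Δ₀ K₀ hK hni hiΦ M N hM hN
        rcases plug_eq_dn hK with ⟨rfl, hpat⟩ | ⟨G', rfl, hK'⟩
        · -- the import case: jump to the root with a fresh exit on the stack
          injection hpat with e1 e2 e3
          subst e1; subst e2; subst e3
          have hfam : ∀ P N', sumA St + Θt ≤ P → sumB St + Λt ≤ N' →
              Deriv (.up P (Formula.box A ::ₘ N') (.single (a.bbox ::ₘ Γc) Δc)) := by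
            intro P N' h1 h2
            have hΘ : Θt ≤ P := le_trans (Multiset.le_add_left _ _) h1
            have hΛ : Λt ≤ N' := le_trans (Multiset.le_add_left _ _) h2
            have h3 := (ih St hok hanc hcard).2 (a.bbox ::ₘ Γc) Δc _ rfl hni hiΦ
              (P - Θt) (N' - Λt) (le_tsub_of_add_le_right h1) (le_tsub_of_add_le_right h2)
            have h4 := Deriv.bboxL2 [] (Θt + (P - Θt))
              (Λt + (Formula.box A ::ₘ (N' - Λt))) Γc Δc a
              (by simpa [fat, Multiset.cons_add] using h3)
            have eq1 : Θt + (P - Θt) = P := by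
              rw [add_comm]; exact tsub_add_cancel_of_le hΘ
            have eq2 : Λt + (Formula.box A ::ₘ (N' - Λt)) = Formula.box A ::ₘ N' := by
              rw [Multiset.add_cons, add_comm Λt, tsub_add_cancel_of_le hΛ]
            rw [eq1, eq2] at h4
            exact h4
          have hj := jump_lemma A Φ k JIH St hok hanc hcard
            ⟨Θt, Λt, sumA St, sumB St, a.bbox ::ₘ Γc, Δc, hfam⟩ rfl rfl hni hiΦ
            (Θt + M) (Λt + N)
            (by rw [add_comm (sumA St) Θt]; exact add_le_add_right hM Θt)
            (by rw [add_comm (sumB St) Λt]; exact add_le_add_right hN Λt)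
          have h6 := Deriv.boxR2 [] (Θt + M) (Λt + N) A (by simp) hj
          simpa [fat, Multiset.add_cons] using h6
        · subst hK'
          have hprem := (ih St hok hanc hcard).2 Γ₀ Δ₀ _ rfl hni hiΦ M N hM hN
          cases G' with
          | nil =>
              simpa [fat, Multiset.cons_add, Multiset.cons_swap] using
                Deriv.bboxL1 [] (Γc + M) (Δc + (Formula.box A ::ₘ N)) Θt Λt a
                  (by simpa [fat, Multiset.cons_add, Multiset.cons_swap] using hprem)
          | cons c G'' =>
              rw [fat_plug_cons] at hprem ⊢
              exact Deriv.bboxL1 (fatc A M N c :: G'') Γc Δc Θt Λt a hprem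
  | boxL2 G Γg Δg Θt Λt w _ ih =>
      intro St hok hanc hcard
      constructor
      · intro P N hP hN
        exact Deriv.boxL2 ((P, Formula.box A ::ₘ N, Dir.up) :: G) Γg Δg Θt Λt w
          ((ih St hok hanc hcard).1 P N hP hN)
      · intro Γ₀ Δ₀ K₀ hK hni hiΦ M N hM hN
        rcases plug_eq_dn hK with ⟨rfl, hpat⟩ | ⟨G', rfl, hK'⟩
        · -- the merge case: jump to the root with a fresh exit on the stack
          injection hpat with e1 e2 e3
          subst e1; subst e2; subst e3
          have hfam : ∀ P N', sumA St + {Formula.box w} ≤ P → sumB St + 0 ≤ N' →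
              Deriv (.up P (Formula.box A ::ₘ N') (.single Γg Δg)) := by
            intro P N' h1 h2
            classical
            have hw : Formula.box w ∈ P := by
              have hle : {Formula.box w} ≤ P := le_trans (Multiset.le_add_left _ _) h1
              exact Multiset.mem_of_le hle (Multiset.mem_singleton_self _)
            have h3 := (ih St hok hanc hcard).1 P N'
              (le_trans (Multiset.le_add_right _ _) h1) (by simpa using h2)
            rw [← Multiset.cons_erase hw] at h3
            have h4 := Deriv.boxL1 [] (P.erase (Formula.box w)) (Formula.box A ::ₘ N')
              Γg Δg w h3
            rw [Multiset.cons_erase hw] at h4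
            exact h4
          have hj := jump_lemma A Φ k JIH St hok hanc hcard
            ⟨{Formula.box w}, 0, sumA St, sumB St, Γg, Δg, hfam⟩ rfl rfl hni hiΦ
            ((w.box ::ₘ Θt) + M) (Λt + N)
            (by
              rw [add_comm (sumA St), Multiset.singleton_add, Multiset.cons_add]
              exact Multiset.cons_le_cons _ (le_trans hM (Multiset.le_add_left _ _)))
            (by simpa using le_trans hN (Multiset.le_add_left _ _))
          have h6 := Deriv.boxR2 [] ((w.box ::ₘ Θt) + M) (Λt + N) A (by simp) hj
          simpa [fat, Multiset.add_cons] using h6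
        · subst hK'
          have hprem := (ih St hok hanc hcard).2 Γ₀ Δ₀ _ rfl hni hiΦ M N hM hN
          cases G' with
          | nil =>
              simpa [fat, Multiset.cons_add, Multiset.cons_swap] using
                Deriv.boxL2 [] (Γg + M) (Δg + (Formula.box A ::ₘ N)) Θt Λt w
                  (by simpa [fat, Multiset.cons_add, Multiset.cons_swap] using hprem)
          | cons c G'' =>
              rw [fat_plug_cons] at hprem ⊢
              exact Deriv.boxL2 (fatc A M N c :: G'') Γg Δg Θt Λt w hprem
  | bboxL2 G Γg Δg Θt Λt w _ ih =>
      intro St hok hanc hcard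
      constructor
      · intro P N hP hN
        exact Deriv.bboxL2 ((P, Formula.box A ::ₘ N, Dir.up) :: G) Γg Δg Θt Λt w
          ((ih St hok hanc hcard).1 P N hP hN)
      · intro Γ₀ Δ₀ K₀ hK hni hiΦ M N hM hN
        rcases plug_eq_dn hK with ⟨rfl, hpat⟩ | ⟨G', rfl, hK'⟩
        · cases hpat
        · subst hK'
          have hprem := (ih St hok hanc hcard).2 Γ₀ Δ₀ _ rfl hni hiΦ M N hM hN
          cases G' with
          | nil =>
              simpa [fat, Multiset.cons_add, Multiset.cons_swap] using
                Deriv.bboxL2 [] (Γg + M) (Δg + (Formula.box A ::ₘ N)) Θt Λt w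
                  (by simpa [fat, Multiset.cons_add, Multiset.cons_swap] using hprem)
          | cons c G'' =>
              rw [fat_plug_cons] at hprem ⊢
              exact Deriv.bboxL2 (fatc A M N c :: G'') Γg Δg Θt Λt w hprem

end Monster
section Finish

theorem nec_box (A : Formula) (h : Deriv (LNS.single 0 {A})) :
    Deriv (LNS.single 0 {Formula.box A}) := by
  obtain ⟨Φ, hd₀⟩ := h.toDerivB
  have hmain := (main_induction A Φ hd₀ (Multiset.card Φ) _ hd₀ [] StackOK.nil
    (by simp) (by simp)).1 0 0 (by simp) (by simp)
  -- hmain : Deriv (.up 0 (Formula.box A ::ₘ 0) (.single 0 {A}))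
  have h2 := Deriv.boxR2 [] 0 0 A (by simp) (by simpa using hmain)
  simpa using h2

theorem nec_bbox (A : Formula) (h : Deriv (LNS.single 0 {A})) :
    Deriv (LNS.single 0 {Formula.bbox A}) := by
  have h' : Deriv (LNS.single 0 {fswap A}) := by
    simpa [sswap] using deriv_swap h
  have hbox := nec_box (fswap A) h'
  have h2 := deriv_swap hbox
  simpa [sswap, fswap] using h2

end Finish

/-- Admissibility of necessitation in LNS_Kt: if `ε ⇒ A` is derivable, then so
are `ε ⇒ □A` and `ε ⇒ ■A`. -/
theorem necessitation_admissible (A : Formula) (h : Deriv (LNS.single 0 {A})) :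
    Deriv (LNS.single 0 {Formula.box A}) ∧ Deriv (LNS.single 0 {Formula.bbox A}) := by
  exact ⟨nec_box A h, nec_bbox A h⟩
end

section
/- (Derivability of the interaction axioms in LNS_Kt) Writing ¬X for X → ⊥, for every atomic formula p the linear nested sequents ε ⇒ ¬□¬■p → p and ε ⇒ ¬■¬□p → p (the axioms ◇■p → p and ◆□p → p with the diamonds expanded via ◇X = ¬□¬X and ◆X = ¬■¬X) are derivable in LNS_Kt. -/
/-- Derivability of the interaction axioms ◇■p → p and ◆□p → p (with the
diamonds expanded as ◇X = ¬□¬X and ◆X = ¬■¬X) in LNS_Kt. -/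
theorem interaction_axioms (p : ℕ) :
    Deriv (LNS.single 0
      {Formula.imp (Formula.neg (Formula.box (Formula.neg (Formula.bbox (.atom p)))))
        (.atom p)}) ∧
    Deriv (LNS.single 0
      {Formula.imp (Formula.neg (Formula.bbox (Formula.neg (Formula.box (.atom p)))))
        (.atom p)}) := by
  constructor
  · -- ◇■p → p
    rw [show ({Formula.imp (Formula.neg (Formula.box (Formula.neg (Formula.bbox (.atom p)))))
        (.atom p)} : Multiset Formula) =
      (Formula.imp (Formula.neg (Formula.box (Formula.neg (Formula.bbox (.atom p)))))
        (.atom p)) ::ₘ 0 from rfl]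
    apply Deriv.impR [] 0 0
    apply Deriv.impL [] _ _
    · exact Deriv.botL [] _ _
    · apply Deriv.boxR2 [] _ _ _ (by simp [lastDir])
      apply Deriv.impR [(_, _, Dir.up)] 0 0
      apply Deriv.bboxL2 [] _ _ 0 _
      rw [Multiset.cons_swap ((Formula.atom p).bbox.neg.box) (Formula.atom p)]
      exact Deriv.id [] _ _ p
  · -- ◆□p → p
    rw [show ({Formula.imp (Formula.neg (Formula.bbox (Formula.neg (Formula.box (.atom p)))))
        (.atom p)} : Multiset Formula) =
      (Formula.imp (Formula.neg (Formula.bbox (Formula.neg (Formula.box (.atom p)))))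
        (.atom p)) ::ₘ 0 from rfl]
    apply Deriv.impR [] 0 0
    apply Deriv.impL [] _ _
    · exact Deriv.botL [] _ _
    · apply Deriv.bboxR2 [] _ _ _ (by simp [lastDir])
      apply Deriv.impR [(_, _, Dir.dn)] 0 0
      apply Deriv.boxL2 [] _ _ 0 _
      rw [Multiset.cons_swap ((Formula.atom p).box.neg.bbox) (Formula.atom p)]
      exact Deriv.id [] _ _ p
end

section
/- (Soundness of LNS_KB) For every linear nested sequent S over the mono-modal language, if S is derivable in the calculus LNS_KB, then for every Kripke model ⟨W,R,V⟩ with R symmetric and every world w ∈ W, w forces the formula translation τ(S). -/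
/-- Mono-modal formulae: atoms, ⊥, →, □, ◇. -/
inductive KFormula : Type
  | atom : ℕ → KFormula
  | bot : KFormula
  | imp : KFormula → KFormula → KFormula
  | box : KFormula → KFormula
  | dia : KFormula → KFormula

def KFormula.neg (A : KFormula) : KFormula := A.imp .bot
def KFormula.and (A B : KFormula) : KFormula := (A.imp B.neg).neg
def KFormula.or (A B : KFormula) : KFormula := A.neg.imp B
def KFormula.top : KFormula := KFormula.bot.imp .bot

/-- Mono-modal formulae built from atoms, ⊥, →, □ only. -/
def KFormula.NoDia : KFormula → Prop
  | .atom _ => True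
  | .bot => True
  | .imp A B => A.NoDia ∧ B.NoDia
  | .box A => A.NoDia
  | .dia _ => False

/-- Linear nested sequents for KB: components joined by ↗ only. -/
inductive KLNS : Type
  | single (Γ Δ : Multiset KFormula) : KLNS
  | up (Γ Δ : Multiset KFormula) (S : KLNS) : KLNS

/-- A (possibly empty) context for KB sequents. -/
abbrev KCtx := List (Multiset KFormula × Multiset KFormula)

def plugK : KCtx → KLNS → KLNS
  | [], S => S
  | (Γ, Δ) :: G, S => KLNS.up Γ Δ (plugK G S)

/-- Kripke forcing for mono-modal logic. -/
def KForce {W : Type} (R : W → W → Prop) (V : W → ℕ → Prop) : W → KFormula → Prop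
  | w, .atom p => V w p
  | _, .bot => False
  | w, .imp A B => KForce R V w A → KForce R V w B
  | w, .box A => ∀ v, R w v → KForce R V v A
  | w, .dia A => ∃ v, R w v ∧ KForce R V v A

noncomputable def bigAndK (Γ : Multiset KFormula) : KFormula :=
  Γ.toList.foldr KFormula.and KFormula.top

noncomputable def bigOrK (Δ : Multiset KFormula) : KFormula :=
  Δ.toList.foldr KFormula.or KFormula.bot

/-- The formula translation τ of a linear nested sequent for KB. -/
noncomputable def tauK : KLNS → KFormula
  | .single Γ Δ => (bigAndK Γ).imp (bigOrK Δ)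
  | .up Γ Δ S => (bigAndK Γ).imp ((bigOrK Δ).or (tauK S).box)

/-- The calculus LNS_KB. -/
inductive DerivKB : KLNS → Prop
  | id (G : KCtx) (Γ Δ : Multiset KFormula) (p : ℕ) :
      DerivKB (plugK G (.single (.atom p ::ₘ Γ) (.atom p ::ₘ Δ)))
  | botL (G : KCtx) (Γ Δ : Multiset KFormula) :
      DerivKB (plugK G (.single (.bot ::ₘ Γ) Δ))
  | ew (G : KCtx) (Θ Λ : Multiset KFormula) (Γ Δ : Multiset KFormula) :
      DerivKB (plugK G (.single Θ Λ)) →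
      DerivKB (plugK (G ++ [(Θ, Λ)]) (.single Γ Δ))
  | impR (G : KCtx) (Γ Δ : Multiset KFormula) (A B : KFormula) :
      DerivKB (plugK G (.single (A ::ₘ Γ) (B ::ₘ A.imp B ::ₘ Δ))) →
      DerivKB (plugK G (.single Γ (A.imp B ::ₘ Δ)))
  | impL (G : KCtx) (Γ Δ : Multiset KFormula) (A B : KFormula) :
      DerivKB (plugK G (.single (B ::ₘ A.imp B ::ₘ Γ) Δ)) →
      DerivKB (plugK G (.single (A.imp B ::ₘ Γ) (A ::ₘ Δ))) →
      DerivKB (plugK G (.single (A.imp B ::ₘ Γ) Δ))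
  | boxR (G : KCtx) (Γ Δ : Multiset KFormula) (A : KFormula) :
      DerivKB (plugK G (.up Γ (A.box ::ₘ Δ) (.single 0 {A}))) →
      DerivKB (plugK G (.single Γ (A.box ::ₘ Δ)))
  | boxL1 (G : KCtx) (Γ Δ Θ Λ : Multiset KFormula) (A : KFormula) :
      DerivKB (plugK G (.up (A.box ::ₘ Γ) Δ (.single (A ::ₘ Θ) Λ))) →
      DerivKB (plugK G (.up (A.box ::ₘ Γ) Δ (.single Θ Λ)))
  | boxL2 (G : KCtx) (Γ Δ Θ Λ : Multiset KFormula) (A : KFormula) :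
      DerivKB (plugK G (.single (A ::ₘ Γ) Δ)) →
      DerivKB (plugK G (.up Γ Δ (.single (A.box ::ₘ Θ) Λ)))

section KBSound
variable {W : Type} {R : W → W → Prop} {V : W → ℕ → Prop}

lemma kforce_and {w : W} {A B : KFormula} :
    KForce R V w (A.and B) ↔ KForce R V w A ∧ KForce R V w B := by
  simp only [KFormula.and, KFormula.neg, KForce]; tauto

lemma kforce_or {w : W} {A B : KFormula} :
    KForce R V w (A.or B) ↔ KForce R V w A ∨ KForce R V w B := by
  simp only [KFormula.or, KFormula.neg, KForce]; tauto

lemma kforce_bigAnd {w : W} {Γ : Multiset KFormula} :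
    KForce R V w (bigAndK Γ) ↔ ∀ A ∈ Γ, KForce R V w A := by
  have h : ∀ l : List KFormula,
      KForce R V w (l.foldr KFormula.and KFormula.top) ↔ ∀ A ∈ l, KForce R V w A := by
    intro l; induction l with
    | nil => simp [KFormula.top, KForce]
    | cons a l ih => simp [kforce_and, ih]
  rw [bigAndK, h]; simp

lemma kforce_bigOr {w : W} {Δ : Multiset KFormula} :
    KForce R V w (bigOrK Δ) ↔ ∃ A ∈ Δ, KForce R V w A := by
  have h : ∀ l : List KFormula,
      KForce R V w (l.foldr KFormula.or KFormula.bot) ↔ ∃ A ∈ l, KForce R V w A := by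
    intro l; induction l with
    | nil => simp [KForce]
    | cons a l ih => simp [kforce_or, ih]
  rw [bigOrK, h]; simp

lemma ktau_single {w : W} {Γ Δ : Multiset KFormula} :
    KForce R V w (tauK (.single Γ Δ)) ↔
      ((∀ A ∈ Γ, KForce R V w A) → ∃ A ∈ Δ, KForce R V w A) := by
  show KForce R V w ((bigAndK Γ).imp (bigOrK Δ)) ↔ _
  simp only [KForce, kforce_bigAnd, kforce_bigOr]

lemma ktau_up {w : W} {Γ Δ : Multiset KFormula} {S : KLNS} :
    KForce R V w (tauK (.up Γ Δ S)) ↔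
      ((∀ A ∈ Γ, KForce R V w A) →
        (∃ A ∈ Δ, KForce R V w A) ∨ ∀ v, R w v → KForce R V v (tauK S)) := by
  show KForce R V w ((bigAndK Γ).imp ((bigOrK Δ).or (tauK S).box)) ↔ _
  simp only [KForce, kforce_bigAnd, kforce_bigOr, kforce_or]

lemma klift (G : KCtx) {S1 S2 : KLNS}
    (h : ∀ w, KForce R V w (tauK S1) → KForce R V w (tauK S2)) :
    ∀ w, KForce R V w (tauK (plugK G S1)) → KForce R V w (tauK (plugK G S2)) := by
  induction G with
  | nil => exact h
  | cons p G ih =>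
      obtain ⟨Γ, Δ⟩ := p
      intro w hw
      rw [plugK] at *
      rw [ktau_up] at hw ⊢
      intro hΓ
      rcases hw hΓ with hΔ | hbox
      · exact Or.inl hΔ
      · exact Or.inr fun v hv => ih v (hbox v hv)

lemma klift2 (G : KCtx) {S1 S2 S3 : KLNS}
    (h : ∀ w, KForce R V w (tauK S1) → KForce R V w (tauK S2) → KForce R V w (tauK S3)) :
    ∀ w, KForce R V w (tauK (plugK G S1)) → KForce R V w (tauK (plugK G S2)) →
      KForce R V w (tauK (plugK G S3)) := by
  induction G with
  | nil => exact h
  | cons p G ih =>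
      obtain ⟨Γ, Δ⟩ := p
      intro w hw1 hw2
      rw [plugK] at *
      rw [ktau_up] at hw1 hw2 ⊢
      intro hΓ
      rcases hw1 hΓ with hΔ | hb1
      · exact Or.inl hΔ
      rcases hw2 hΓ with hΔ | hb2
      · exact Or.inl hΔ
      exact Or.inr fun v hv => ih v (hb1 v hv) (hb2 v hv)

lemma kliftV (G : KCtx) {S : KLNS}
    (h : ∀ w, KForce R V w (tauK S)) :
    ∀ w, KForce R V w (tauK (plugK G S)) := by
  induction G with
  | nil => exact h
  | cons p G ih =>
      obtain ⟨Γ, Δ⟩ := p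
      intro w
      rw [plugK, ktau_up]
      exact fun _ => Or.inr fun v _ => ih v

lemma kplug_append (G : KCtx) (p : Multiset KFormula × Multiset KFormula) (S : KLNS) :
    plugK (G ++ [p]) S = plugK G (.up p.1 p.2 S) := by
  induction G with
  | nil => rfl
  | cons q G ih => obtain ⟨a, b⟩ := q; simp [plugK, ih]

end KBSound

/-- Soundness of LNS_KB: every derivable sequent has a formula translation
forced at every world of every Kripke model with symmetric accessibility. -/
theorem lnskb_sound (S : KLNS) (h : DerivKB S) :
    ∀ (W : Type) (_ : Nonempty W) (R : W → W → Prop),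
      (∀ x y, R x y → R y x) →
        ∀ (V : W → ℕ → Prop) (w : W), KForce R V w (tauK S) := by
  induction h with
  | id G Γ Δ p =>
      intro W _ R _ V w
      refine kliftV G (fun w => ?_) w
      rw [ktau_single]
      intro hΓ
      exact ⟨.atom p, Multiset.mem_cons_self _ _, hΓ _ (Multiset.mem_cons_self _ _)⟩
  | botL G Γ Δ =>
      intro W _ R _ V w
      refine kliftV G (fun w => ?_) w
      rw [ktau_single]
      intro hΓ
      exact absurd (hΓ .bot (Multiset.mem_cons_self _ _)) (by simp [KForce])
  | ew G Θ Λ Γ Δ _ ih =>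
      intro W hW R hsym V w
      rw [kplug_append]
      refine klift G (fun w hw => ?_) w (ih W hW R hsym V w)
      rw [ktau_single] at hw
      rw [ktau_up]
      exact fun hΘ => Or.inl (hw hΘ)
  | impR G Γ Δ A B _ ih =>
      intro W hW R hsym V w
      refine klift G (fun w hw => ?_) w (ih W hW R hsym V w)
      rw [ktau_single] at hw ⊢
      intro hΓ
      by_cases hA : KForce R V w A
      · rcases hw (by
          rw [Multiset.forall_mem_cons]; exact ⟨hA, hΓ⟩) with ⟨C, hC, hfC⟩
        rcases Multiset.mem_cons.1 hC with hCB | hC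
        · exact ⟨A.imp B, Multiset.mem_cons_self _ _, fun _ => hCB ▸ hfC⟩
        · exact ⟨C, hC, hfC⟩
      · exact ⟨A.imp B, Multiset.mem_cons_self _ _, fun hA' => absurd hA' hA⟩
  | impL G Γ Δ A B _ _ ih1 ih2 =>
      intro W hW R hsym V w
      refine klift2 G (fun w hw1 hw2 => ?_) w (ih1 W hW R hsym V w) (ih2 W hW R hsym V w)
      rw [ktau_single] at hw1 hw2 ⊢
      intro hΓ
      have fimp := hΓ (A.imp B) (Multiset.mem_cons_self _ _)
      rcases hw2 hΓ with ⟨C, hC, hfC⟩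
      rcases Multiset.mem_cons.1 hC with rfl | hC
      · exact hw1 (by rw [Multiset.forall_mem_cons]; exact ⟨fimp hfC, hΓ⟩)
      · exact ⟨C, hC, hfC⟩
  | boxR G Γ Δ A _ ih =>
      intro W hW R hsym V w
      refine klift G (fun w hw => ?_) w (ih W hW R hsym V w)
      rw [ktau_up] at hw
      rw [ktau_single]
      intro hΓ
      rcases hw hΓ with hΔ | hbox
      · exact hΔ
      · refine ⟨A.box, Multiset.mem_cons_self _ _, fun v hv => ?_⟩
        have := hbox v hv
        rw [ktau_single] at this
        rcases this (by simp) with ⟨C, hC, hfC⟩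
        rw [Multiset.mem_singleton] at hC
        exact hC ▸ hfC
  | boxL1 G Γ Δ Θ Λ A _ ih =>
      intro W hW R hsym V w
      refine klift G (fun w hw => ?_) w (ih W hW R hsym V w)
      rw [ktau_up] at hw ⊢
      intro hΓ
      rcases hw hΓ with hΔ | hbox
      · exact Or.inl hΔ
      · refine Or.inr fun v hv => ?_
        have hb := hbox v hv
        rw [ktau_single] at hb ⊢
        intro hΘ
        refine hb ?_
        rw [Multiset.forall_mem_cons]
        refine ⟨?_, hΘ⟩
        have := hΓ A.box (Multiset.mem_cons_self _ _)
        exact this v hv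
  | boxL2 G Γ Δ Θ Λ A _ ih =>
      intro W hW R hsym V w
      refine klift G (fun w hw => ?_) w (ih W hW R hsym V w)
      rw [ktau_single] at hw
      rw [ktau_up]
      intro hΓ
      by_cases hΔ : ∃ C ∈ Δ, KForce R V w C
      · exact Or.inl hΔ
      · refine Or.inr fun v hv => ?_
        rw [ktau_single]
        intro hΘ
        have hA : KForce R V w A := by
          have := hΘ A.box (Multiset.mem_cons_self _ _)
          exact this w (hsym _ _ hv)
        exact absurd (hw (by rw [Multiset.forall_mem_cons]; exact ⟨hA, hΓ⟩)) hΔ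
end
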